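/- arXiv:2602.09623 — 6 statements merged into one kernel-verified Lean document; each statement's English description precedes it below -/
import Mathlib

section
/- Let t ≥ 3 be an integer and let G be a finite simple block graph. Then the t-clique-free complex CF_t(G) is (t−2)-decomposable and hence shellable. -/
/-- The `t`-clique-free complex of a graph `G`: faces are the finite vertex sets
containing no `t`-clique of `G`. -/
def cliqueFreeComplex {V : Type*} (G : SimpleGraph V) (t : ℕ) : Set (Finset V) :=
  {A : Finset V | ∀ B ⊆ A, ¬ G.IsNClique t B}

/-- Deletion of a face from a simplicial complex: the faces not containing `σ`. -/
def delC {V : Type*} (Δ : Set (Finset V)) (σ : Finset V) : Set (Finset V) :=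
  {F | F ∈ Δ ∧ ¬ σ ⊆ F}

/-- Link of a face in a simplicial complex. -/
def linkC {V : Type*} [DecidableEq V] (Δ : Set (Finset V)) (σ : Finset V) :
    Set (Finset V) :=
  {F | F ∈ Δ ∧ Disjoint F σ ∧ F ∪ σ ∈ Δ}

/-- A shedding face: a face `σ` such that for every face `τ ⊇ σ` and every `v ∈ σ`
there is a vertex `w ∉ τ` with `(τ ∪ {w}) \ {v}` a face. -/
def IsSheddingFace {V : Type*} [DecidableEq V] (Δ : Set (Finset V)) (σ : Finset V) :
    Prop :=
  σ ∈ Δ ∧ ∀ τ ∈ Δ, σ ⊆ τ → ∀ v ∈ σ, ∃ w, w ∉ τ ∧ (insert w τ).erase v ∈ Δ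

/-- A simplex: the void complex, or the full power set of a finite set
(this includes the irrelevant complex `{∅}`). -/
def IsSimplexComplex {V : Type*} (Δ : Set (Finset V)) : Prop :=
  Δ = ∅ ∨ ∃ F : Finset V, Δ = {A : Finset V | A ⊆ F}

/-- `k`-decomposability: `Δ` is a simplex, or has a shedding face `σ` with
`dim σ ≤ k` (i.e. `σ.card ≤ k + 1`) whose deletion and link are `k`-decomposable. -/
inductive KDecomposable {V : Type*} [DecidableEq V] (k : ℕ) : Set (Finset V) → Prop
  | of_simplex {Δ : Set (Finset V)} (h : IsSimplexComplex Δ) : KDecomposable k Δ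
  | of_shedding {Δ : Set (Finset V)} (σ : Finset V) (hshed : IsSheddingFace Δ σ)
      (hdim : σ.card ≤ k + 1) (hdel : KDecomposable k (delC Δ σ))
      (hlink : KDecomposable k (linkC Δ σ)) : KDecomposable k Δ

/-- The facets (maximal faces) of a simplicial complex. -/
def Facets {V : Type*} (Δ : Set (Finset V)) : Set (Finset V) :=
  {F | F ∈ Δ ∧ ∀ A ∈ Δ, F ⊆ A → F = A}

/-- Shellability: the facets admit a linear order `F 0, …, F (s-1)` such that for all
`i < j` there are `v ∈ F j \ F i` and `l < j` with `F j \ F l = {v}`. -/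
def IsShellable {V : Type*} [DecidableEq V] (Δ : Set (Finset V)) : Prop :=
  ∃ (s : ℕ) (F : Fin s → Finset V),
    (∀ i, F i ∈ Facets Δ) ∧ Function.Injective F ∧
    (∀ A ∈ Facets Δ, ∃ i, F i = A) ∧
    ∀ i j : Fin s, i < j →
      ∃ v ∈ F j \ F i, ∃ l, l < j ∧ F j \ F l = ({v} : Finset V)

/-- A block of a graph `G`, described by its vertex set `B`: the induced subgraph on
`B` is connected, remains connected (preconnected) after removing any single vertex,
and `B` is maximal with these properties. -/
def IsBlockSet {V : Type*} (G : SimpleGraph V) (B : Set V) : Prop :=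
  (G.induce B).Connected ∧
  (∀ v ∈ B, (G.induce (B \ {v})).Preconnected) ∧
  ∀ B' : Set V, B ⊆ B' → (G.induce B').Connected →
    (∀ v ∈ B', (G.induce (B' \ {v})).Preconnected) → B' = B

/-- A block graph: every block is a complete graph. -/
def IsBlockGraph {V : Type*} (G : SimpleGraph V) : Prop :=
  ∀ B : Set V, IsBlockSet G B → G.IsClique B

namespace S5
set_option linter.unusedSectionVars false

variable {V : Type*} [DecidableEq V]

def IsDC (Δ : Set (Finset V)) : Prop := ∀ ⦃A B : Finset V⦄, A ⊆ B → B ∈ Δ → A ∈ Δ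

lemma isDC_delC {Δ : Set (Finset V)} (hdc : IsDC Δ) (σ : Finset V) : IsDC (delC Δ σ) := by
  intro A B hAB hB
  exact ⟨hdc hAB hB.1, fun hσ => hB.2 (hσ.trans hAB)⟩

lemma isDC_linkC {Δ : Set (Finset V)} (hdc : IsDC Δ) (σ : Finset V) : IsDC (linkC Δ σ) := by
  intro A B hAB hB
  exact ⟨hdc hAB hB.1, hB.2.1.mono_left hAB,
    hdc (Finset.union_subset_union_left hAB) hB.2.2⟩

lemma exists_facet [Fintype V] {Δ : Set (Finset V)} {A : Finset V} (hA : A ∈ Δ) :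
    ∃ F ∈ Facets Δ, A ⊆ F := by
  classical
  set S : Finset (Finset V) := Finset.univ.filter (fun B => B ∈ Δ ∧ A ⊆ B) with hS
  have hSne : S.Nonempty := ⟨A, by simp [hS, hA]⟩
  obtain ⟨F, hF, hmax⟩ := S.exists_max_image Finset.card hSne
  simp only [hS, Finset.mem_filter, Finset.mem_univ, true_and] at hF
  refine ⟨F, ⟨hF.1, ?_⟩, hF.2⟩
  intro B hB hFB
  have hBS : B ∈ S := by
    simp only [hS, Finset.mem_filter, Finset.mem_univ, true_and]
    exact ⟨hB, hF.2.trans hFB⟩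
  exact Finset.eq_of_subset_of_card_le hFB (hmax B hBS)

lemma facets_delC_subset {Δ : Set (Finset V)} {σ : Finset V} (hdc : IsDC Δ)
    (hshed : IsSheddingFace Δ σ) : Facets (delC Δ σ) ⊆ Facets Δ := by
  rintro F ⟨⟨hFΔ, hFσ⟩, hmax⟩
  refine ⟨hFΔ, fun B hB hFB => ?_⟩
  by_contra hne
  obtain ⟨a, haB, haF⟩ := Finset.exists_of_ssubset (hFB.ssubset_of_ne hne)
  have haΔ : insert a F ∈ Δ := hdc (Finset.insert_subset haB hFB) hB
  have hσa : σ ⊆ insert a F := by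
    by_contra hσa
    have := hmax (insert a F) ⟨haΔ, hσa⟩ (Finset.subset_insert a F)
    exact haF (this ▸ Finset.mem_insert_self a F)
  have haσ : a ∈ σ := by
    by_contra haσ
    exact hFσ (fun x hx => (Finset.mem_insert.1 (hσa hx)).elim
      (fun h => absurd (h ▸ hx) haσ) id)
  obtain ⟨w, hw, hwΔ⟩ := hshed.2 (insert a F) haΔ hσa a haσ
  have hwa : w ≠ a := fun h => hw (h ▸ Finset.mem_insert_self a F)
  have hwF : w ∉ F := fun h => hw (Finset.mem_insert_of_mem h)
  have haF' : a ∉ insert w F := by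
    simp only [Finset.mem_insert]
    rintro (h | h)
    · exact hwa h.symm
    · exact haF h
  have hkey : (insert w (insert a F)).erase a = insert w F := by
    rw [Finset.insert_comm, Finset.erase_insert haF']
  rw [hkey] at hwΔ
  have hσw : ¬ σ ⊆ insert w F := fun h => haF' (h haσ)
  have := hmax (insert w F) ⟨hwΔ, hσw⟩ (Finset.subset_insert w F)
  exact hwF (this ▸ Finset.mem_insert_self w F)

lemma facet_delC_of_facet {Δ : Set (Finset V)} {σ F : Finset V} (hF : F ∈ Facets Δ)
    (hσ : ¬ σ ⊆ F) : F ∈ Facets (delC Δ σ) :=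
  ⟨⟨hF.1, hσ⟩, fun B hB hFB => hF.2 B hB.1 hFB⟩

lemma facet_link_union {Δ : Set (Finset V)} {σ F : Finset V} (hdc : IsDC Δ)
    (hF : F ∈ Facets (linkC Δ σ)) : F ∪ σ ∈ Facets Δ := by
  obtain ⟨⟨hFΔ, hdisj, hFσΔ⟩, hmax⟩ := hF
  refine ⟨hFσΔ, fun B hB hFB => ?_⟩
  by_contra hne
  obtain ⟨a, haB, haF⟩ := Finset.exists_of_ssubset (hFB.ssubset_of_ne hne)
  have haσ : a ∉ σ := fun h => haF (Finset.mem_union_right F h)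
  have haF' : a ∉ F := fun h => haF (Finset.mem_union_left σ h)
  have h1 : insert a (F ∪ σ) ∈ Δ := hdc (Finset.insert_subset haB hFB) hB
  have h2 : insert a F ∈ linkC Δ σ := by
    refine ⟨hdc ?_ h1, ?_, ?_⟩
    · intro x hx
      simp only [Finset.mem_insert, Finset.mem_union] at hx ⊢
      tauto
    · rw [Finset.disjoint_left]
      intro x hx hxσ
      rcases Finset.mem_insert.1 hx with h | h
      · exact haσ (h ▸ hxσ)
      · exact (Finset.disjoint_left.1 hdisj) h hxσ
    · rw [Finset.insert_union]; exact h1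
  have := hmax (insert a F) h2 (Finset.subset_insert a F)
  exact haF' (this ▸ Finset.mem_insert_self a F)

lemma facet_link_of_facet {Δ : Set (Finset V)} {σ F : Finset V} (hdc : IsDC Δ)
    (hF : F ∈ Facets Δ) (hσ : σ ⊆ F) : F \ σ ∈ Facets (linkC Δ σ) := by
  have hsd : F \ σ ∪ σ = F := Finset.sdiff_union_of_subset hσ
  refine ⟨⟨hdc (Finset.sdiff_subset) hF.1, Finset.sdiff_disjoint, by rw [hsd]; exact hF.1⟩, ?_⟩
  rintro B ⟨hBΔ, hBdisj, hBσΔ⟩ hFB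
  have h1 : F ⊆ B ∪ σ := by
    conv_lhs => rw [← hsd]
    exact Finset.union_subset_union_left hFB
  have h2 := hF.2 (B ∪ σ) hBσΔ h1
  apply Finset.Subset.antisymm hFB
  intro x hx
  rw [Finset.mem_sdiff]
  refine ⟨h2 ▸ Finset.mem_union_left σ hx, fun hxσ => ?_⟩
  exact (Finset.disjoint_left.1 hBdisj) hx hxσ

end S5
namespace S5
set_option linter.unusedSectionVars false
set_option maxHeartbeats 1000000

variable {V : Type*} [DecidableEq V]

lemma shellable_of_simplex {Δ : Set (Finset V)} (h : IsSimplexComplex Δ) :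
    IsShellable Δ := by
  rcases h with h | ⟨F₀, h⟩
  · refine ⟨0, fun i => i.elim0, fun i => i.elim0, fun i => i.elim0,
      fun A hA => ?_, fun i => i.elim0⟩
    rw [h] at hA
    exact absurd hA.1 (Set.notMem_empty A)
  · subst h
    refine ⟨1, fun _ => F₀, fun _ => ⟨Finset.Subset.refl F₀,
      fun A hA h₀ => Finset.Subset.antisymm h₀ hA⟩,
      fun a b _ => Subsingleton.elim a b,
      fun A hA => ⟨0, (hA.2 F₀ (Finset.Subset.refl F₀) hA.1).symm⟩,
      fun i j hij => absurd hij (by omega)⟩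

theorem shellable_of_kdec [Fintype V] {k : ℕ} {Δ : Set (Finset V)}
    (h : KDecomposable k Δ) (hdc : IsDC Δ) : IsShellable Δ := by
  induction h with
  | of_simplex h => exact shellable_of_simplex h
  | of_shedding σ hshed hdim hdel hlink ihdel ihlink =>
    rename_i Δ
    clear hdel hlink
    obtain ⟨s₁, F₁, hf₁, hinj₁, hsurj₁, hshell₁⟩ := ihdel (isDC_delC hdc σ)
    obtain ⟨s₂, F₂, hf₂, hinj₂, hsurj₂, hshell₂⟩ := ihlink (isDC_linkC hdc σ)
    set F : Fin (s₁ + s₂) → Finset V :=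
      fun i => if h : (i : ℕ) < s₁ then F₁ ⟨i, h⟩
        else F₂ ⟨(i : ℕ) - s₁, by have := i.isLt; omega⟩ ∪ σ with hF
    have he1 : ∀ (i : Fin (s₁ + s₂)) (h : (i : ℕ) < s₁), F i = F₁ ⟨i, h⟩ := by
      intro i h; simp only [hF, dif_pos h]
    have he2 : ∀ (i : Fin (s₁ + s₂)) (h : ¬ (i : ℕ) < s₁),
        F i = F₂ ⟨(i : ℕ) - s₁, by have := i.isLt; omega⟩ ∪ σ := by
      intro i h; simp only [hF, dif_neg h]
    have hnc : ∀ i : Fin s₁, ¬ σ ⊆ F₁ i := fun i => (hf₁ i).1.2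
    have hdisj2 : ∀ jj : Fin s₂, Disjoint (F₂ jj) σ := fun jj => (hf₂ jj).1.2.1
    refine ⟨s₁ + s₂, F, ?_, ?_, ?_, ?_⟩
    · intro i
      by_cases h : (i : ℕ) < s₁
      · rw [he1 i h]; exact facets_delC_subset hdc hshed (hf₁ _)
      · rw [he2 i h]; exact facet_link_union hdc (hf₂ _)
    · intro a b hab
      by_cases ha : (a : ℕ) < s₁ <;> by_cases hb : (b : ℕ) < s₁
      · rw [he1 a ha, he1 b hb] at hab
        have := hinj₁ hab
        rw [Fin.mk.injEq] at this
        exact Fin.ext this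
      · exfalso
        rw [he1 a ha, he2 b hb] at hab
        exact hnc _ (hab ▸ Finset.subset_union_right)
      · exfalso
        rw [he2 a ha, he1 b hb] at hab
        exact hnc _ (hab.symm ▸ Finset.subset_union_right)
      · rw [he2 a ha, he2 b hb] at hab
        have h2 : F₂ ⟨(a : ℕ) - s₁, by have := a.isLt; omega⟩
            = F₂ ⟨(b : ℕ) - s₁, by have := b.isLt; omega⟩ := by
          have h3 := congrArg (· \ σ) hab
          simpa [Finset.union_sdiff_cancel_right (hdisj2 _),
            Finset.union_sdiff_right] using h3
        have := hinj₂ h2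
        rw [Fin.mk.injEq] at this
        exact Fin.ext (by omega)
    · intro A hA
      by_cases hσA : σ ⊆ A
      · obtain ⟨j, hj⟩ := hsurj₂ (A \ σ) (facet_link_of_facet hdc hA hσA)
        refine ⟨⟨s₁ + (j : ℕ), by have := j.isLt; omega⟩, ?_⟩
        rw [he2 _ (show ¬ s₁ + (j : ℕ) < s₁ by omega)]
        have hval : F₂ ⟨s₁ + (j : ℕ) - s₁, by have := j.isLt; omega⟩ = F₂ j :=
          congrArg F₂ (Fin.ext (show s₁ + (j : ℕ) - s₁ = (j : ℕ) by omega))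
        rw [hval, hj]
        exact Finset.sdiff_union_of_subset hσA
      · obtain ⟨i, hi⟩ := hsurj₁ A (facet_delC_of_facet hA hσA)
        refine ⟨⟨(i : ℕ), by have := i.isLt; omega⟩, ?_⟩
        rw [he1 _ i.isLt]
        exact hi
    · intro i j hij
      have hijv : (i : ℕ) < (j : ℕ) := hij
      by_cases hj : (j : ℕ) < s₁
      · have hi : (i : ℕ) < s₁ := by omega
        obtain ⟨v, hv, l, hl, heq⟩ := hshell₁ ⟨i, hi⟩ ⟨j, hj⟩ (by exact hijv)
        have hlv : (l : ℕ) < (j : ℕ) := hl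
        refine ⟨v, by rw [he1 j hj, he1 i hi]; exact hv,
          ⟨(l : ℕ), by have := l.isLt; omega⟩, by exact hlv, ?_⟩
        rw [he1 j hj]
        have hFl : F ⟨(l : ℕ), by have := l.isLt; omega⟩ = F₁ l := he1 _ l.isLt
        rw [hFl]
        exact heq
      · have hsj : s₁ ≤ (j : ℕ) := by omega
        have hj2 : (j : ℕ) - s₁ < s₂ := by have := j.isLt; omega
        set j' : Fin s₂ := ⟨(j : ℕ) - s₁, hj2⟩ with hj'
        have hFj : F j = F₂ j' ∪ σ := he2 j hj
        have hτfacet : F₂ j' ∪ σ ∈ Facets Δ := facet_link_union hdc (hf₂ j')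
        by_cases hi : (i : ℕ) < s₁
        · obtain ⟨v, hvσ, hvFi⟩ := Finset.not_subset.1 (hnc ⟨i, hi⟩)
          obtain ⟨w, hw, hwΔ⟩ :=
            hshed.2 (F₂ j' ∪ σ) hτfacet.1 Finset.subset_union_right v hvσ
          obtain ⟨H, hHfacet, hAH⟩ := exists_facet hwΔ
          have hvτ : v ∈ F₂ j' ∪ σ := Finset.mem_union_right _ hvσ
          have hvH : v ∉ H := by
            intro hvH
            have h1 : insert w (F₂ j' ∪ σ) ⊆ H := by
              rw [← Finset.insert_erase
                (Finset.mem_insert_of_mem hvτ : v ∈ insert w (F₂ j' ∪ σ))]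
              exact Finset.insert_subset hvH hAH
            have h2 := hτfacet.2 H hHfacet.1 ((Finset.subset_insert w _).trans h1)
            exact hw (by rw [h2]; exact h1 (Finset.mem_insert_self w _))
          have hHdel : H ∈ Facets (delC Δ σ) :=
            facet_delC_of_facet hHfacet (fun hs => hvH (hs hvσ))
          obtain ⟨l₁, hl₁⟩ := hsurj₁ H hHdel
          refine ⟨v, ?_, ⟨(l₁ : ℕ), by have := l₁.isLt; omega⟩,
            by show (l₁ : ℕ) < (j : ℕ); have := l₁.isLt; omega, ?_⟩
          · rw [hFj, he1 i hi]
            exact Finset.mem_sdiff.2 ⟨hvτ, hvFi⟩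
          · have hFl : F ⟨(l₁ : ℕ), by have := l₁.isLt; omega⟩ = H := by
              rw [he1 _ l₁.isLt]; exact hl₁
            rw [hFj, hFl]
            apply Finset.eq_singleton_iff_unique_mem.2
            refine ⟨Finset.mem_sdiff.2 ⟨hvτ, hvH⟩, ?_⟩
            intro x hx
            obtain ⟨hxτ, hxH⟩ := Finset.mem_sdiff.1 hx
            by_contra hxv
            exact hxH (hAH (Finset.mem_erase.2 ⟨hxv, Finset.mem_insert_of_mem hxτ⟩))
        · have hsi : s₁ ≤ (i : ℕ) := by omega
          have hi2 : (i : ℕ) - s₁ < s₂ := by have := i.isLt; omega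
          set i' : Fin s₂ := ⟨(i : ℕ) - s₁, hi2⟩ with hi'
          have hFi : F i = F₂ i' ∪ σ := he2 i hi
          have hij' : i' < j' := by
            rw [Fin.lt_def]; simp only [hi', hj']; omega
          obtain ⟨v, hv, l₂, hl₂, heq⟩ := hshell₂ i' j' hij'
          obtain ⟨hvj, hvi⟩ := Finset.mem_sdiff.1 hv
          have hvσ : v ∉ σ := Finset.disjoint_left.1 (hdisj2 j') hvj
          have hl₂v : (l₂ : ℕ) < (j : ℕ) - s₁ := hl₂
          refine ⟨v, ?_, ⟨s₁ + (l₂ : ℕ), by have := l₂.isLt; omega⟩,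
            by show s₁ + (l₂ : ℕ) < (j : ℕ); omega, ?_⟩
          · rw [hFj, hFi]
            refine Finset.mem_sdiff.2 ⟨Finset.mem_union_left _ hvj, ?_⟩
            rw [Finset.mem_union]
            exact not_or.2 ⟨hvi, hvσ⟩
          · have hFl : F ⟨s₁ + (l₂ : ℕ), by have := l₂.isLt; omega⟩ = F₂ l₂ ∪ σ := by
              rw [he2 _ (show ¬ s₁ + (l₂ : ℕ) < s₁ by omega)]
              exact congrArg (· ∪ σ)
                (congrArg F₂ (Fin.ext (show s₁ + (l₂ : ℕ) - s₁ = (l₂ : ℕ) by omega)))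
            rw [hFj, hFl]
            have hvl : v ∉ F₂ l₂ := by
              have hvm : v ∈ F₂ j' \ F₂ l₂ := by
                rw [heq]; exact Finset.mem_singleton_self v
              exact (Finset.mem_sdiff.1 hvm).2
            ext x
            simp only [Finset.mem_sdiff, Finset.mem_union, Finset.mem_singleton, not_or]
            constructor
            · rintro ⟨hx1, hx2, hx3⟩
              have hxj : x ∈ F₂ j' := hx1.resolve_right hx3
              have hxm : x ∈ F₂ j' \ F₂ l₂ := Finset.mem_sdiff.2 ⟨hxj, hx2⟩
              rw [heq] at hxm; exact Finset.mem_singleton.1 hxm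
            · rintro rfl
              exact ⟨Or.inl hvj, hvl, hvσ⟩

end S5
namespace S5
set_option linter.unusedSectionVars false
set_option maxHeartbeats 1000000

variable {V : Type*} [DecidableEq V]

def PComplex (W : Finset V) (𝓒 : Finset (Finset V × ℕ)) : Set (Finset V) :=
  {A | A ⊆ W ∧ ∀ p ∈ 𝓒, (A ∩ p.1).card ≤ p.2}

def GoodFam (𝓕 : Finset (Finset V)) : Prop :=
  ∀ 𝓖 ⊆ 𝓕, 𝓖.Nonempty → (∀ C ∈ 𝓖, C.Nonempty) →
    ∃ C ∈ 𝓖, ∃ x ∈ C, ∀ C' ∈ 𝓖, C' ∩ C ⊆ {x} ∨ C' = C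

lemma goodFam_subset {𝓕 𝓖 : Finset (Finset V)} (h : GoodFam 𝓕) (hs : 𝓖 ⊆ 𝓕) :
    GoodFam 𝓖 := fun 𝓗 h1 => h 𝓗 (h1.trans hs)

lemma goodFam_image_inter {𝓕 : Finset (Finset V)} (h : GoodFam 𝓕) (S : Finset V) :
    GoodFam (𝓕.image (· ∩ S)) := by
  classical
  intro 𝓖' hsub hne hmem
  set 𝓖 : Finset (Finset V) := 𝓕.filter (fun C => C ∩ S ∈ 𝓖') with h𝓖
  have hGsub : 𝓖 ⊆ 𝓕 := Finset.filter_subset _ _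
  have hGne : 𝓖.Nonempty := by
    obtain ⟨D, hD⟩ := hne
    obtain ⟨C, hC, hCD⟩ := Finset.mem_image.1 (hsub hD)
    exact ⟨C, Finset.mem_filter.2 ⟨hC, by rw [hCD]; exact hD⟩⟩
  have hGmem : ∀ C ∈ 𝓖, C.Nonempty := by
    intro C hC
    obtain ⟨x, hx⟩ := hmem _ (Finset.mem_filter.1 hC).2
    exact ⟨x, (Finset.mem_inter.1 hx).1⟩
  obtain ⟨C, hC, x, hx, hleaf⟩ := h 𝓖 hGsub hGne hGmem
  have hCS : C ∩ S ∈ 𝓖' := (Finset.mem_filter.1 hC).2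
  have hmemD : ∀ D ∈ 𝓖', ∃ C' ∈ 𝓖, C' ∩ S = D := by
    intro D hD
    obtain ⟨C', hC'F, hC'D⟩ := Finset.mem_image.1 (hsub hD)
    exact ⟨C', Finset.mem_filter.2 ⟨hC'F, by rw [hC'D]; exact hD⟩, hC'D⟩
  by_cases hxS : x ∈ S
  · refine ⟨C ∩ S, hCS, x, Finset.mem_inter.2 ⟨hx, hxS⟩, ?_⟩
    intro D hD
    obtain ⟨C', hC'G, rfl⟩ := hmemD D hD
    rcases hleaf C' hC'G with hsub2 | heq
    · left
      intro y hy
      have hy1 := Finset.mem_inter.1 hy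
      have hy2 := Finset.mem_inter.1 hy1.1
      have hy3 := Finset.mem_inter.1 hy1.2
      exact hsub2 (Finset.mem_inter.2 ⟨hy2.1, hy3.1⟩)
    · right; rw [heq]
  · obtain ⟨x', hx'⟩ := hmem _ hCS
    refine ⟨C ∩ S, hCS, x', hx', ?_⟩
    intro D hD
    obtain ⟨C', hC'G, rfl⟩ := hmemD D hD
    rcases hleaf C' hC'G with hsub2 | heq
    · left
      intro y hy
      exfalso
      have hy1 := Finset.mem_inter.1 hy
      have hy2 := Finset.mem_inter.1 hy1.1
      have hy3 := Finset.mem_inter.1 hy1.2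
      have : y ∈ ({x} : Finset V) := hsub2 (Finset.mem_inter.2 ⟨hy2.1, hy3.1⟩)
      rw [Finset.mem_singleton] at this
      exact hxS (this ▸ hy3.2)
    · right; rw [heq]

theorem kdec_PComplex (k : ℕ) : ∀ (n : ℕ) (W : Finset V), W.card ≤ n →
    ∀ 𝓒 : Finset (Finset V × ℕ),
    (∀ p ∈ 𝓒, 1 ≤ p.2 ∧ p.2 < p.1.card ∧ p.1 ⊆ W) →
    GoodFam (𝓒.image Prod.fst) →
    KDecomposable k (PComplex W 𝓒) := by
  classical
  intro n
  induction n with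
  | zero =>
    intro W hW 𝓒 hinv hgood
    have hCe : 𝓒 = ∅ := by
      rw [Finset.eq_empty_iff_forall_notMem]
      intro p hp
      obtain ⟨h1, h2, h3⟩ := hinv p hp
      have h4 : W.card = 0 := by omega
      have := (Finset.card_le_card h3)
      omega
    apply KDecomposable.of_simplex
    exact Or.inr ⟨W, by ext A; simp [PComplex, hCe]⟩
  | succ n ih =>
    intro W hW 𝓒 hinv hgood
    by_cases hCe : 𝓒 = ∅
    · apply KDecomposable.of_simplex
      exact Or.inr ⟨W, by ext A; simp [PComplex, hCe]⟩
    obtain ⟨p₀, hp₀⟩ := Finset.nonempty_iff_ne_empty.2 hCe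
    have himgne : (𝓒.image Prod.fst).Nonempty := ⟨p₀.1, Finset.mem_image_of_mem _ hp₀⟩
    have himgmem : ∀ C ∈ 𝓒.image Prod.fst, C.Nonempty := by
      intro C hC
      obtain ⟨p, hp, rfl⟩ := Finset.mem_image.1 hC
      have := hinv p hp
      exact Finset.card_pos.1 (by omega)
    obtain ⟨C₁, hC₁mem, x, hxC₁, hleaf⟩ := hgood _ (Finset.Subset.refl _) himgne himgmem
    obtain ⟨q, hq, hqC₁⟩ := Finset.mem_image.1 hC₁mem
    have hxW : x ∈ W := (hinv q hq).2.2 (by rw [hqC₁]; exact hxC₁)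
    -- the shedding face {x}
    have hσΔ : ({x} : Finset V) ∈ PComplex W 𝓒 := by
      refine ⟨Finset.singleton_subset_iff.2 hxW, fun p hp => ?_⟩
      calc (({x} : Finset V) ∩ p.1).card ≤ ({x} : Finset V).card :=
            Finset.card_le_card Finset.inter_subset_left
        _ = 1 := Finset.card_singleton x
        _ ≤ p.2 := (hinv p hp).1
    have hshed : IsSheddingFace (PComplex W 𝓒) {x} := by
      refine ⟨hσΔ, ?_⟩
      intro τ hτ hστ v hv
      rw [Finset.mem_singleton] at hv
      rw [hv]
      have hxτ : x ∈ τ := hστ (Finset.mem_singleton_self x)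
      have hq1 := hinv q hq
      have hcard : (τ ∩ C₁).card ≤ q.2 := by
        have := hτ.2 q hq; rw [hqC₁] at this; exact this
      have hex : ∃ w ∈ C₁, w ∉ τ := by
        by_contra hno
        push_neg at hno
        have h5 : τ ∩ C₁ = C₁ := Finset.inter_eq_right.2 hno
        rw [h5] at hcard
        rw [hqC₁] at hq1
        omega
      obtain ⟨w, hwC₁, hwτ⟩ := hex
      have hwx : w ≠ x := fun h => hwτ (h ▸ hxτ)
      refine ⟨w, hwτ, ?_, ?_⟩
      · intro y hy
        have hy1 := Finset.mem_erase.1 hy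
        rcases Finset.mem_insert.1 hy1.2 with h | h
        · subst h; exact hq1.2.2 (by rw [hqC₁]; exact hwC₁)
        · exact hτ.1 h
      · intro p hp
        by_cases hwp : w ∈ p.1
        · rcases hleaf p.1 (Finset.mem_image_of_mem _ hp) with hsub2 | heqC
          · exfalso
            have : w ∈ ({x} : Finset V) := hsub2 (Finset.mem_inter.2 ⟨hwp, hwC₁⟩)
            exact hwx (Finset.mem_singleton.1 this)
          · have hxp : x ∈ p.1 := by rw [heqC]; exact hxC₁
            have hstep : (insert w τ).erase x ∩ p.1 = (insert w (τ ∩ p.1)).erase x := by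
              ext y
              simp only [Finset.mem_erase, Finset.mem_insert, Finset.mem_inter]
              constructor
              · rintro ⟨⟨hyx, hy | hy⟩, hyp⟩
                · exact ⟨hyx, Or.inl hy⟩
                · exact ⟨hyx, Or.inr ⟨hy, hyp⟩⟩
              · rintro ⟨hyx, hy | ⟨hy1, hy2⟩⟩
                · exact ⟨⟨hyx, Or.inl hy⟩, hy ▸ hwp⟩
                · exact ⟨⟨hyx, Or.inr hy1⟩, hy2⟩
            rw [hstep]
            have hxmem : x ∈ insert w (τ ∩ p.1) :=
              Finset.mem_insert_of_mem (Finset.mem_inter.2 ⟨hxτ, hxp⟩)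
            rw [Finset.card_erase_of_mem hxmem,
              Finset.card_insert_of_notMem (fun h => hwτ (Finset.mem_inter.1 h).1)]
            have := hτ.2 p hp
            omega
        · have hsub3 : (insert w τ).erase x ∩ p.1 ⊆ τ ∩ p.1 := by
            intro y hy
            have hy1 := Finset.mem_inter.1 hy
            have hy2 := Finset.mem_erase.1 hy1.1
            rcases Finset.mem_insert.1 hy2.2 with h | h
            · exact absurd (h ▸ hy1.2) hwp
            · exact Finset.mem_inter.2 ⟨h, hy1.2⟩
          exact le_trans (Finset.card_le_card hsub3) (hτ.2 p hp)
    apply KDecomposable.of_shedding ({x} : Finset V) hshed (by simp)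
    -- deletion
    · set 𝓒₁ := (𝓒.image (fun p => (p.1.erase x, p.2))).filter
        (fun p => p.2 < p.1.card) with h𝓒₁
      have hdeq : delC (PComplex W 𝓒) {x} = PComplex (W.erase x) 𝓒₁ := by
        ext A
        simp only [delC, PComplex, Set.mem_setOf_eq, Finset.singleton_subset_iff]
        constructor
        · rintro ⟨⟨hAW, hAc⟩, hxA⟩
          refine ⟨fun y hy => Finset.mem_erase.2 ⟨fun h => hxA (h ▸ hy), hAW hy⟩, ?_⟩
          intro p hp
          rw [h𝓒₁, Finset.mem_filter, Finset.mem_image] at hp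
          obtain ⟨⟨p₁, hp₁, rfl⟩, hbind⟩ := hp
          refine le_trans (Finset.card_le_card ?_) (hAc p₁ hp₁)
          intro y hy
          have hy1 := Finset.mem_inter.1 hy
          exact Finset.mem_inter.2 ⟨hy1.1, Finset.mem_of_mem_erase hy1.2⟩
        · rintro ⟨hAW, hAc⟩
          have hxA : x ∉ A := fun h => (Finset.mem_erase.1 (hAW h)).1 rfl
          refine ⟨⟨fun y hy => Finset.mem_of_mem_erase (hAW hy), ?_⟩, hxA⟩
          intro p hp
          have hAint : A ∩ p.1 = A ∩ p.1.erase x := by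
            ext y
            simp only [Finset.mem_inter, Finset.mem_erase]
            constructor
            · rintro ⟨hy1, hy2⟩
              exact ⟨hy1, fun h => hxA (h ▸ hy1), hy2⟩
            · rintro ⟨hy1, _, hy2⟩
              exact ⟨hy1, hy2⟩
          by_cases hb : p.2 < (p.1.erase x).card
          · have hmem1 : (p.1.erase x, p.2) ∈ 𝓒₁ := by
              rw [h𝓒₁, Finset.mem_filter]
              exact ⟨Finset.mem_image_of_mem _ hp, hb⟩
            rw [hAint]
            exact hAc _ hmem1
          · rw [hAint]
            refine le_trans (Finset.card_le_card Finset.inter_subset_right) (by omega)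
      rw [hdeq]
      apply ih (W.erase x) (by rw [Finset.card_erase_of_mem hxW]; omega) 𝓒₁
      · intro p hp
        rw [h𝓒₁, Finset.mem_filter, Finset.mem_image] at hp
        obtain ⟨⟨p₁, hp₁, rfl⟩, hbind⟩ := hp
        have h0 := hinv p₁ hp₁
        exact ⟨h0.1, hbind, fun y hy => Finset.mem_erase.2
          ⟨(Finset.mem_erase.1 hy).1, h0.2.2 (Finset.mem_of_mem_erase hy)⟩⟩
      · apply goodFam_subset (goodFam_image_inter hgood (W.erase x))
        intro y hy
        rw [Finset.mem_image] at hy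
        obtain ⟨p, hp, rfl⟩ := hy
        rw [h𝓒₁, Finset.mem_filter, Finset.mem_image] at hp
        obtain ⟨⟨p₁, hp₁, rfl⟩, _⟩ := hp
        rw [Finset.mem_image]
        refine ⟨p₁.1, Finset.mem_image_of_mem _ hp₁, ?_⟩
        have hsubW := (hinv p₁ hp₁).2.2
        ext y
        simp only [Finset.mem_inter, Finset.mem_erase]
        constructor
        · rintro ⟨hy1, hy2, hy3⟩
          exact ⟨hy2, hy1⟩
        · rintro ⟨hy1, hy2⟩
          exact ⟨hy2, hy1, hsubW hy2⟩
    -- link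
    · set W' := (W.erase x).filter
        (fun y => ∀ p ∈ 𝓒, p.2 = 1 → x ∈ p.1 → y ∉ p.1) with hW'
      set 𝓒₂ := ((𝓒.image (fun p => (p.1 ∩ W', if x ∈ p.1 then p.2 - 1 else p.2))).filter
        (fun p => 1 ≤ p.2 ∧ p.2 < p.1.card)) with h𝓒₂
      have hleq : linkC (PComplex W 𝓒) {x} = PComplex W' 𝓒₂ := by
        ext A
        simp only [linkC, PComplex, Set.mem_setOf_eq]
        constructor
        · rintro ⟨⟨hAW, hAc⟩, hdisj, hAxW, hAxc⟩
          have hxA : x ∉ A := Finset.disjoint_singleton_right.1 hdisj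
          constructor
          · intro y hyA
            rw [hW', Finset.mem_filter]
            refine ⟨Finset.mem_erase.2 ⟨fun h => hxA (h ▸ hyA), hAW hyA⟩, ?_⟩
            intro p hp hp2 hxp hyp
            have h1 := hAxc p hp
            have hxm : x ∈ (A ∪ {x}) ∩ p.1 := Finset.mem_inter.2
              ⟨Finset.mem_union_right _ (Finset.mem_singleton_self x), hxp⟩
            have hym : y ∈ (A ∪ {x}) ∩ p.1 := Finset.mem_inter.2
              ⟨Finset.mem_union_left _ hyA, hyp⟩
            have hyx : y ≠ x := fun h => hxA (h ▸ hyA)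
            have h2 : 1 < ((A ∪ {x}) ∩ p.1).card := Finset.one_lt_card.2
              ⟨y, hym, x, hxm, hyx⟩
            omega
          · intro p hp
            rw [h𝓒₂, Finset.mem_filter, Finset.mem_image] at hp
            obtain ⟨⟨p₁, hp₁, rfl⟩, _⟩ := hp
            have h1 := hAxc p₁ hp₁
            have hAsub : A ∩ (p₁.1 ∩ W') ⊆ A ∩ p₁.1 := by
              intro y hy
              have hy1 := Finset.mem_inter.1 hy
              exact Finset.mem_inter.2 ⟨hy1.1, (Finset.mem_inter.1 hy1.2).1⟩
            by_cases hxp : x ∈ p₁.1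
            · simp only [if_pos hxp]
              have hsplit : (A ∪ {x}) ∩ p₁.1 = insert x (A ∩ p₁.1) := by
                ext y
                simp only [Finset.mem_inter, Finset.mem_union, Finset.mem_insert,
                  Finset.mem_singleton]
                constructor
                · rintro ⟨hy | hy, hyp⟩
                  · exact Or.inr ⟨hy, hyp⟩
                  · exact Or.inl hy
                · rintro (rfl | ⟨hy1, hy2⟩)
                  · exact ⟨Or.inr rfl, hxp⟩
                  · exact ⟨Or.inl hy1, hy2⟩
              rw [hsplit, Finset.card_insert_of_notMem
                (fun h => hxA (Finset.mem_inter.1 h).1)] at h1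
              exact le_trans (Finset.card_le_card hAsub) (by omega)
            · simp only [if_neg hxp]
              have hsplit : (A ∪ {x}) ∩ p₁.1 = A ∩ p₁.1 := by
                ext y
                simp only [Finset.mem_inter, Finset.mem_union, Finset.mem_singleton]
                constructor
                · rintro ⟨hy | hy, hyp⟩
                  · exact ⟨hy, hyp⟩
                  · exact absurd (hy ▸ hyp) hxp
                · rintro ⟨hy1, hy2⟩
                  exact ⟨Or.inl hy1, hy2⟩
              rw [hsplit] at h1
              exact le_trans (Finset.card_le_card hAsub) h1
        · rintro ⟨hAW', hAc⟩
          have hAWe : A ⊆ W.erase x := fun y hy => (Finset.mem_filter.1 (hAW' hy)).1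
          have hxA : x ∉ A := fun h => (Finset.mem_erase.1 (hAWe h)).1 rfl
          have hAW : A ⊆ W := fun y hy => Finset.mem_of_mem_erase (hAWe hy)
          have key : ∀ p ∈ 𝓒, ((A ∪ {x}) ∩ p.1).card ≤ p.2 := by
            intro p hp
            have hinvp := hinv p hp
            have hAp : A ∩ p.1 = A ∩ (p.1 ∩ W') := by
              ext y
              simp only [Finset.mem_inter]
              constructor
              · rintro ⟨hy1, hy2⟩
                exact ⟨hy1, hy2, hAW' hy1⟩
              · rintro ⟨hy1, hy2, _⟩
                exact ⟨hy1, hy2⟩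
            by_cases hxp : x ∈ p.1
            · have hsplit : (A ∪ {x}) ∩ p.1 = insert x (A ∩ p.1) := by
                ext y
                simp only [Finset.mem_inter, Finset.mem_union, Finset.mem_insert,
                  Finset.mem_singleton]
                constructor
                · rintro ⟨hy | hy, hyp⟩
                  · exact Or.inr ⟨hy, hyp⟩
                  · exact Or.inl hy
                · rintro (rfl | ⟨hy1, hy2⟩)
                  · exact ⟨Or.inr rfl, hxp⟩
                  · exact ⟨Or.inl hy1, hy2⟩
              rw [hsplit, Finset.card_insert_of_notMem
                (fun h => hxA (Finset.mem_inter.1 h).1)]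
              by_cases h1 : p.2 = 1
              · have hempty : A ∩ p.1 = ∅ := by
                  rw [Finset.eq_empty_iff_forall_notMem]
                  intro y hy
                  have hyW' := hAW' (Finset.mem_inter.1 hy).1
                  exact (Finset.mem_filter.1 hyW').2 p hp h1 hxp (Finset.mem_inter.1 hy).2
                rw [hempty]
                simp
                omega
              · by_cases hb : p.2 - 1 < (p.1 ∩ W').card
                · have hmem2 : (p.1 ∩ W', p.2 - 1) ∈ 𝓒₂ := by
                    rw [h𝓒₂, Finset.mem_filter]
                    constructor
                    · rw [Finset.mem_image]
                      exact ⟨p, hp, by rw [if_pos hxp]⟩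
                    · exact ⟨by omega, hb⟩
                  have h4 : (A ∩ (p.1 ∩ W')).card ≤ p.2 - 1 := hAc _ hmem2
                  rw [hAp]
                  omega
                · rw [hAp]
                  have h3 := Finset.card_le_card
                    (Finset.inter_subset_right : A ∩ (p.1 ∩ W') ⊆ p.1 ∩ W')
                  omega
            · have hsplit : (A ∪ {x}) ∩ p.1 = A ∩ p.1 := by
                ext y
                simp only [Finset.mem_inter, Finset.mem_union, Finset.mem_singleton]
                constructor
                · rintro ⟨hy | hy, hyp⟩
                  · exact ⟨hy, hyp⟩
                  · exact absurd (hy ▸ hyp) hxp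
                · rintro ⟨hy1, hy2⟩
                  exact ⟨Or.inl hy1, hy2⟩
              rw [hsplit]
              by_cases hb : p.2 < (p.1 ∩ W').card
              · have hmem2 : (p.1 ∩ W', p.2) ∈ 𝓒₂ := by
                  rw [h𝓒₂, Finset.mem_filter]
                  constructor
                  · rw [Finset.mem_image]
                    exact ⟨p, hp, by rw [if_neg hxp]⟩
                  · exact ⟨hinvp.1, hb⟩
                rw [hAp]
                exact hAc _ hmem2
              · rw [hAp]
                have h3 := Finset.card_le_card
                  (Finset.inter_subset_right : A ∩ (p.1 ∩ W') ⊆ p.1 ∩ W')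
                omega
          refine ⟨⟨hAW, fun p hp => ?_⟩, Finset.disjoint_singleton_right.2 hxA, ?_, key⟩
          · refine le_trans (Finset.card_le_card ?_) (key p hp)
            intro y hy
            have hy1 := Finset.mem_inter.1 hy
            exact Finset.mem_inter.2 ⟨Finset.mem_union_left _ hy1.1, hy1.2⟩
          · exact Finset.union_subset hAW (Finset.singleton_subset_iff.2 hxW)
      rw [hleq]
      have hW'sub : W' ⊆ W.erase x := Finset.filter_subset _ _
      apply ih W' (by
        have h1 := Finset.card_le_card hW'sub
        rw [Finset.card_erase_of_mem hxW] at h1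
        omega) 𝓒₂
      · intro p hp
        rw [h𝓒₂, Finset.mem_filter, Finset.mem_image] at hp
        obtain ⟨⟨p₁, hp₁, rfl⟩, hbind⟩ := hp
        exact ⟨hbind.1, hbind.2, Finset.inter_subset_right⟩
      · apply goodFam_subset (goodFam_image_inter hgood W')
        intro y hy
        rw [Finset.mem_image] at hy
        obtain ⟨p, hp, rfl⟩ := hy
        rw [h𝓒₂, Finset.mem_filter, Finset.mem_image] at hp
        obtain ⟨⟨p₁, hp₁, rfl⟩, _⟩ := hp
        rw [Finset.mem_image]
        exact ⟨p₁.1, Finset.mem_image_of_mem _ hp₁, rfl⟩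

end S5
namespace S5
set_option linter.unusedSectionVars false
set_option maxHeartbeats 1000000

variable {V : Type*} [DecidableEq V] {G : SimpleGraph V}

/-- maximal cliques as finsets -/
def MaxClq (G : SimpleGraph V) (C : Finset V) : Prop :=
  G.IsClique (↑C : Set V) ∧ ∀ D : Finset V, G.IsClique (↑D : Set V) → C ⊆ D → D = C

lemma reach_mono {S T : Set V} (h : S ⊆ T) {u v : V} (hu : u ∈ S) (hv : v ∈ S)
    (hr : (G.induce S).Reachable ⟨u, hu⟩ ⟨v, hv⟩) :
    (G.induce T).Reachable ⟨u, h hu⟩ ⟨v, h hv⟩ :=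
  hr.map (SimpleGraph.induceHomOfLE (G := G) h).toHom

lemma clique_preconnected {S : Set V} (h : G.IsClique S) :
    (G.induce S).Preconnected := by
  intro u v
  by_cases huv : (u : V) = v
  · rw [Subtype.ext huv]
  · exact SimpleGraph.Adj.reachable (by simpa using h u.2 v.2 huv)

lemma glue_preconnected {S T : Set V} (hS : (G.induce S).Preconnected)
    (hT : (G.induce T).Preconnected) (hST : (S ∩ T).Nonempty) :
    (G.induce (S ∪ T)).Preconnected := by
  obtain ⟨c, hcS, hcT⟩ := hST
  have key : ∀ (u : V) (hu : u ∈ S ∪ T),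
      (G.induce (S ∪ T)).Reachable ⟨u, hu⟩ ⟨c, Or.inl hcS⟩ := by
    intro u hu
    rcases hu with hu | hu
    · exact reach_mono Set.subset_union_left hu hcS (hS ⟨u, hu⟩ ⟨c, hcS⟩)
    · exact reach_mono Set.subset_union_right hu hcT (hT ⟨u, hu⟩ ⟨c, hcT⟩)
  intro u v
  exact (key u.1 u.2).trans (key v.1 v.2).symm

lemma chain_preconnected (n : ℕ) (P : ℕ → Set V)
    (hpre : ∀ i ≤ n, (G.induce (P i)).Preconnected)
    (hint : ∀ i < n, (P i ∩ P (i + 1)).Nonempty) :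
    (G.induce (⋃ i ∈ Finset.range (n + 1), P i)).Preconnected := by
  induction n with
  | zero =>
    have h0 : (⋃ i ∈ Finset.range 1, P i) = P 0 := by simp
    rw [h0]
    exact hpre 0 le_rfl
  | succ m ihm =>
    have h1 : (⋃ i ∈ Finset.range (m + 2), P i)
        = (⋃ i ∈ Finset.range (m + 1), P i) ∪ P (m + 1) := by
      ext y
      simp only [Set.mem_iUnion, Finset.mem_range, Set.mem_union]
      constructor
      · rintro ⟨i, hi, hy⟩
        rcases Nat.lt_succ_iff_lt_or_eq.1 hi with h | h
        · exact Or.inl ⟨i, h, hy⟩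
        · subst h; exact Or.inr hy
      · rintro (⟨i, hi, hy⟩ | hy)
        · exact ⟨i, by omega, hy⟩
        · exact ⟨m + 1, by omega, hy⟩
    rw [h1]
    refine glue_preconnected
      (ihm (fun i hi => hpre i (by omega)) (fun i hi => hint i (by omega)))
      (hpre (m + 1) le_rfl) ?_
    obtain ⟨c, hc1, hc2⟩ := hint m (by omega)
    refine ⟨c, ?_, hc2⟩
    simp only [Set.mem_iUnion, Finset.mem_range]
    exact ⟨m, by omega, hc1⟩

lemma exists_blockset_superset [Fintype V] (U : Set V)
    (hU1 : (G.induce U).Connected)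
    (hU2 : ∀ v ∈ U, (G.induce (U \ {v})).Preconnected) :
    ∃ B : Set V, U ⊆ B ∧ IsBlockSet G B := by
  classical
  set F : Finset (Finset V) := Finset.univ.filter
    (fun S : Finset V => U ⊆ ↑S ∧ (G.induce (↑S : Set V)).Connected ∧
      ∀ v ∈ (↑S : Set V), (G.induce ((↑S : Set V) \ {v})).Preconnected) with hF
  have hne : F.Nonempty := by
    refine ⟨U.toFinset, ?_⟩
    rw [hF, Finset.mem_filter]
    refine ⟨Finset.mem_univ _, ?_⟩
    rw [Set.coe_toFinset]
    exact ⟨Set.Subset.refl U, hU1, hU2⟩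
  obtain ⟨B₀, hB₀, hmax⟩ := F.exists_max_image Finset.card hne
  rw [hF, Finset.mem_filter] at hB₀
  refine ⟨↑B₀, hB₀.2.1, hB₀.2.2.1, hB₀.2.2.2, ?_⟩
  intro B' hsub hconn hpre
  have hB'F : B'.toFinset ∈ F := by
    rw [hF, Finset.mem_filter]
    refine ⟨Finset.mem_univ _, ?_⟩
    rw [Set.coe_toFinset]
    exact ⟨hB₀.2.1.trans hsub, hconn, hpre⟩
  have hcard := hmax _ hB'F
  have hsub2 : B₀ ⊆ B'.toFinset := by
    intro y hy
    rw [Set.mem_toFinset]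
    exact hsub hy
  have heq := Finset.eq_of_subset_of_card_le hsub2 hcard
  rw [heq, Set.coe_toFinset]

section Cycle

variable {L : ℕ} {D : ℕ → Finset V} {w : ℕ → V}

lemma cycle_pre (hL : 2 ≤ L)
    (hclq : ∀ i < L, G.IsClique (↑(D i) : Set V))
    (hwD : ∀ i < L, w i ∈ D i)
    (hwD' : ∀ i < L, w i ∈ D ((i + 1) % L))
    (i₀ : ℕ) (R : Set V) (hR : ∀ i < L, i ≠ i₀ → w i ∉ R) :
    (G.induce ((⋃ i ∈ Finset.range L, (↑(D i) : Set V)) \ R)).Preconnected := by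
  set j₀ := (i₀ + 1) % L with hj₀
  have hj₀L : j₀ < L := Nat.mod_lt _ (by omega)
  set P : ℕ → Set V := fun i => (↑(D ((j₀ + i) % L)) : Set V) \ R with hP
  have hidx : ∀ i, (j₀ + i) % L < L := fun i => Nat.mod_lt _ (by omega)
  have hne_i₀ : ∀ i, i < L - 1 → (j₀ + i) % L ≠ i₀ := by
    intro i hi hcon
    rw [hj₀, Nat.mod_add_mod] at hcon
    have hi₀L : i₀ < L := by rw [← hcon]; exact Nat.mod_lt _ (by omega)
    have hmeq : i₀ ≡ i₀ + 1 + i [MOD L] := by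
      unfold Nat.ModEq
      rw [Nat.mod_eq_of_lt hi₀L, hcon]
    have hdvd : L ∣ (i₀ + 1 + i - i₀) := (Nat.modEq_iff_dvd' (by omega)).1 hmeq
    have : i₀ + 1 + i - i₀ = i + 1 := by omega
    rw [this] at hdvd
    have := Nat.le_of_dvd (by omega) hdvd
    omega
  have hUeq : (⋃ i ∈ Finset.range L, (↑(D i) : Set V)) \ R
      = ⋃ i ∈ Finset.range (L - 1 + 1), P i := by
    ext y
    simp only [Set.mem_diff, Set.mem_iUnion, Finset.mem_range, hP, Finset.mem_coe]
    constructor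
    · rintro ⟨⟨j, hj, hy⟩, hyR⟩
      refine ⟨(j + L - j₀) % L, by have := Nat.mod_lt (j + L - j₀) (show 0 < L by omega); omega, ?_, hyR⟩
      have hkey : (j₀ + (j + L - j₀) % L) % L = j := by
        rw [Nat.add_mod_mod]
        have h2 : j₀ + (j + L - j₀) = j + L := by omega
        rw [h2, Nat.add_mod_right, Nat.mod_eq_of_lt hj]
      rw [hkey]
      exact hy
    · rintro ⟨i, hi, hy, hyR⟩
      exact ⟨⟨(j₀ + i) % L, hidx i, hy⟩, hyR⟩
  rw [hUeq]
  apply chain_preconnected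
  · intro i _
    exact clique_preconnected ((hclq _ (hidx i)).subset Set.diff_subset)
  · intro i hi
    refine ⟨w ((j₀ + i) % L), ⟨hwD _ (hidx i), hR _ (hidx i) (hne_i₀ i hi)⟩, ?_, ?_⟩
    · have h3 : ((j₀ + i) % L + 1) % L = (j₀ + (i + 1)) % L := by
        rw [Nat.mod_add_mod]
        congr 1
      have := hwD' _ (hidx i)
      rw [h3] at this
      exact this
    · exact hR _ (hidx i) (hne_i₀ i hi)

lemma cycle_contradiction [Fintype V] (hblock : IsBlockGraph G)
    (hL : 2 ≤ L)
    (hmaxc : ∀ i < L, MaxClq G (D i))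
    (hDinj : ∀ i j, i < L → j < L → D i = D j → i = j)
    (hwinj : ∀ i j, i < L → j < L → w i = w j → i = j)
    (hwD : ∀ i < L, w i ∈ D i)
    (hwD' : ∀ i < L, w i ∈ D ((i + 1) % L)) : False := by
  set U : Set V := ⋃ i ∈ Finset.range L, (↑(D i) : Set V) with hU
  have hDU : ∀ i < L, (↑(D i) : Set V) ⊆ U := by
    intro i hi y hy
    rw [hU]
    simp only [Set.mem_iUnion, Finset.mem_range, Finset.mem_coe]
    exact ⟨i, hi, hy⟩
  have hclq : ∀ i < L, G.IsClique (↑(D i) : Set V) := fun i hi => (hmaxc i hi).1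
  have hUconn : (G.induce U).Connected := by
    rw [SimpleGraph.connected_iff]
    constructor
    · have := cycle_pre (G := G) hL hclq hwD hwD' 0 ∅ (fun i _ _ => Set.notMem_empty _)
      rw [Set.diff_empty] at this
      exact this
    · exact ⟨⟨w 0, hDU 0 (by omega) (hwD 0 (by omega))⟩⟩
  have hUdel : ∀ v ∈ U, (G.induce (U \ {v})).Preconnected := by
    intro v _
    by_cases hv : ∃ i, i < L ∧ w i = v
    · obtain ⟨i₀, hi₀, hwi₀⟩ := hv
      refine cycle_pre hL hclq hwD hwD' i₀ {v} ?_
      intro i hi hne hcon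
      rw [Set.mem_singleton_iff] at hcon
      exact hne (hwinj i i₀ hi hi₀ (by rw [hcon, hwi₀]))
    · refine cycle_pre hL hclq hwD hwD' 0 {v} ?_
      intro i hi _ hcon
      rw [Set.mem_singleton_iff] at hcon
      exact hv ⟨i, hi, hcon⟩
  obtain ⟨B, hUB, hBblock⟩ := exists_blockset_superset U hUconn hUdel
  have hBclq : G.IsClique B := hblock B hBblock
  have h01 : G.IsClique (↑(D 0 ∪ D 1) : Set V) := by
    rw [Finset.coe_union]
    exact hBclq.subset (Set.union_subset ((hDU 0 (by omega)).trans hUB)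
      ((hDU 1 (by omega)).trans hUB))
  have h2 := (hmaxc 0 (by omega)).2 (D 0 ∪ D 1) h01 Finset.subset_union_left
  have h3 : D 1 ⊆ D 0 := by rw [← h2]; exact Finset.subset_union_right
  have h4 := (hmaxc 1 (by omega)).2 (D 0) (hclq 0 (by omega)) h3
  exact absurd (hDinj 0 1 (by omega) (by omega) h4) (by omega)

end Cycle

end S5
namespace S5
set_option linter.unusedSectionVars false
set_option maxHeartbeats 1000000

variable {V : Type*} [DecidableEq V] {G : SimpleGraph V}

lemma goodFam_maxclq [Fintype V] (hblock : IsBlockGraph G)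
    (𝓜 : Finset (Finset V)) (h𝓜 : ∀ C ∈ 𝓜, MaxClq G C) : GoodFam 𝓜 := by
  intro 𝓖 hsub hne hmem
  by_contra hno
  push_neg at hno
  have hmax𝓖 : ∀ C ∈ 𝓖, MaxClq G C := fun C hC => h𝓜 C (hsub hC)
  set P : ℕ → Prop := fun m => ∃ E : ℕ → Finset V, ∃ u : ℕ → V,
    (∀ i ≤ m, E i ∈ 𝓖) ∧ (∀ i j, i ≤ m → j ≤ m → E i = E j → i = j) ∧
    (∀ i < m, u i ∈ E i ∩ E (i + 1)) ∧
    (∀ i j, i < m → j < m → u i = u j → i = j) with hP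
  have hP0 : P 0 := by
    obtain ⟨C₀, hC₀⟩ := hne
    obtain ⟨x₀, hx₀⟩ := hmem C₀ hC₀
    exact ⟨fun _ => C₀, fun _ => x₀, fun _ _ => hC₀,
      fun i j hi hj _ => by omega,
      fun i hi => absurd hi (by omega),
      fun i j hi hj _ => by omega⟩
  have hstep : ∀ m, P m → P (m + 1) := by
    intro m hPm
    obtain ⟨E, u, h1, h2, h3, h4⟩ := hPm
    obtain ⟨x, hxD, hxw⟩ : ∃ x, x ∈ E m ∧ (m = 0 ∨ (0 < m ∧ x = u (m - 1))) := by
      rcases Nat.eq_zero_or_pos m with hm | hm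
      · obtain ⟨x₀, hx₀⟩ := hmem _ (h1 m le_rfl)
        exact ⟨x₀, hx₀, Or.inl hm⟩
      · have hmem2 := (Finset.mem_inter.1 (h3 (m - 1) (by omega))).2
        rw [Nat.sub_add_cancel hm] at hmem2
        exact ⟨u (m - 1), hmem2, Or.inr ⟨hm, rfl⟩⟩
    obtain ⟨C', hC'𝓖, hC'nsub, hC'ne⟩ := hno (E m) (h1 m le_rfl) x hxD
    obtain ⟨y, hyI, hyx'⟩ := Finset.not_subset.1 hC'nsub
    have hyx : y ≠ x := by simpa using hyx'
    have hyC' : y ∈ C' := (Finset.mem_inter.1 hyI).1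
    have hyDm : y ∈ E m := (Finset.mem_inter.1 hyI).2
    by_cases hyold : ∃ j, j < m ∧ y = u j
    · exfalso
      obtain ⟨j, hjm, hyj⟩ := hyold
      have hjm1 : j < m - 1 := by
        rcases hxw with hm0 | ⟨hm, hxe⟩
        · omega
        · rcases Nat.lt_or_ge j (m - 1) with h | h
          · exact h
          · exfalso
            have : j = m - 1 := by omega
            exact hyx (by rw [hyj, this, ← hxe])
      set L := m - j with hL'
      have hL : 2 ≤ L := by omega
      refine cycle_contradiction (G := G) hblock hL
        (D := fun i => E (j + 1 + i))
        (w := fun i => if i = L - 1 then u j else u (j + 1 + i)) ?_ ?_ ?_ ?_ ?_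
      · intro i hi
        exact hmax𝓖 _ (h1 _ (by omega))
      · intro i i' hi hi' heq
        have := h2 (j + 1 + i) (j + 1 + i') (by omega) (by omega) heq
        omega
      · intro i i' hi hi' heq
        rcases eq_or_ne i (L - 1) with rfl | hne1 <;> rcases eq_or_ne i' (L - 1) with rfl | hne2
        · rfl
        · rw [if_pos rfl, if_neg hne2] at heq
          have := h4 j (j + 1 + i') (by omega) (by omega) heq
          omega
        · rw [if_neg hne1, if_pos rfl] at heq
          have := h4 (j + 1 + i) j (by omega) (by omega) heq
          omega
        · rw [if_neg hne1, if_neg hne2] at heq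
          have := h4 (j + 1 + i) (j + 1 + i') (by omega) (by omega) heq
          omega
      · intro i hi
        rcases eq_or_ne i (L - 1) with rfl | hne1
        · rw [if_pos rfl]
          have hidx : j + 1 + (L - 1) = m := by omega
          rw [hidx, ← hyj]
          exact hyDm
        · rw [if_neg hne1]
          exact (Finset.mem_inter.1 (h3 (j + 1 + i) (by omega))).1
      · intro i hi
        rcases eq_or_ne i (L - 1) with rfl | hne1
        · rw [if_pos rfl]
          have hidx : (L - 1 + 1) % L = 0 := by
            have : L - 1 + 1 = L := by omega
            rw [this, Nat.mod_self]
          rw [hidx]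
          have := (Finset.mem_inter.1 (h3 j (by omega))).2
          simpa using this
        · rw [if_neg hne1]
          have hidx : (i + 1) % L = i + 1 := Nat.mod_eq_of_lt (by omega)
          rw [hidx]
          have := (Finset.mem_inter.1 (h3 (j + 1 + i) (by omega))).2
          have hidx2 : j + 1 + i + 1 = j + 1 + (i + 1) := by omega
          rw [hidx2] at this
          exact this
    · by_cases hCold : ∃ j, j ≤ m ∧ C' = E j
      · exfalso
        obtain ⟨j, hjm, hCj⟩ := hCold
        have hjm' : j < m := by
          rcases eq_or_lt_of_le hjm with rfl | h
          · exact absurd hCj hC'ne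
          · exact h
        set L := m - j + 1 with hL'
        have hL : 2 ≤ L := by omega
        refine cycle_contradiction (G := G) hblock hL
          (D := fun i => E (j + i))
          (w := fun i => if i = L - 1 then y else u (j + i)) ?_ ?_ ?_ ?_ ?_
        · intro i hi
          exact hmax𝓖 _ (h1 _ (by omega))
        · intro i i' hi hi' heq
          have := h2 (j + i) (j + i') (by omega) (by omega) heq
          omega
        · intro i i' hi hi' heq
          push_neg at hyold
          rcases eq_or_ne i (L - 1) with rfl | hne1 <;> rcases eq_or_ne i' (L - 1) with rfl | hne2
          · rfl
          · rw [if_pos rfl, if_neg hne2] at heq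
            exact absurd heq (hyold (j + i') (by omega))
          · rw [if_neg hne1, if_pos rfl] at heq
            exact absurd heq.symm (hyold (j + i) (by omega))
          · rw [if_neg hne1, if_neg hne2] at heq
            have := h4 (j + i) (j + i') (by omega) (by omega) heq
            omega
        · intro i hi
          rcases eq_or_ne i (L - 1) with rfl | hne1
          · rw [if_pos rfl]
            have hidx : j + (L - 1) = m := by omega
            rw [hidx]
            exact hyDm
          · rw [if_neg hne1]
            exact (Finset.mem_inter.1 (h3 (j + i) (by omega))).1
        · intro i hi
          rcases eq_or_ne i (L - 1) with rfl | hne1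
          · rw [if_pos rfl]
            have hidx : (L - 1 + 1) % L = 0 := by
              have : L - 1 + 1 = L := by omega
              rw [this, Nat.mod_self]
            rw [hidx]
            have : E (j + 0) = C' := by rw [hCj]; norm_num
            rw [this]
            exact hyC'
          · rw [if_neg hne1]
            have hidx : (i + 1) % L = i + 1 := Nat.mod_eq_of_lt (by omega)
            rw [hidx]
            have := (Finset.mem_inter.1 (h3 (j + i) (by omega))).2
            have hidx2 : j + i + 1 = j + (i + 1) := by omega
            rw [hidx2] at this
            exact this
      · push_neg at hyold hCold
        refine ⟨fun i => if i = m + 1 then C' else E i,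
          fun i => if i = m then y else u i, ?_, ?_, ?_, ?_⟩
        · intro i hi
          dsimp only
          rcases eq_or_ne i (m + 1) with rfl | hne1
          · rw [if_pos rfl]; exact hC'𝓖
          · rw [if_neg hne1]; exact h1 i (by omega)
        · intro i j' hi hj' heq
          dsimp only at heq
          rcases eq_or_ne i (m + 1) with rfl | hne1 <;> rcases eq_or_ne j' (m + 1) with rfl | hne2
          · rfl
          · rw [if_pos rfl, if_neg hne2] at heq
            exact absurd heq (hCold j' (by omega))
          · rw [if_neg hne1, if_pos rfl] at heq
            exact absurd heq.symm (hCold i (by omega))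
          · rw [if_neg hne1, if_neg hne2] at heq
            exact h2 i j' (by omega) (by omega) heq
        · intro i hi
          dsimp only
          by_cases h : i = m
          · rw [if_pos h, if_neg (by omega : i ≠ m + 1), if_pos (by omega : i + 1 = m + 1), h]
            exact Finset.mem_inter.2 ⟨hyDm, hyC'⟩
          · rw [if_neg h, if_neg (by omega : i ≠ m + 1), if_neg (by omega : i + 1 ≠ m + 1)]
            exact h3 i (by omega)
        · intro i j' hi hj' heq
          dsimp only at heq
          by_cases h : i = m <;> by_cases h' : j' = m
          · omega
          · rw [if_pos h, if_neg h'] at heq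
            exact absurd heq (hyold j' (by omega))
          · rw [if_neg h, if_pos h'] at heq
            exact absurd heq.symm (hyold i (by omega))
          · rw [if_neg h, if_neg h'] at heq
            exact h4 i j' (by omega) (by omega) heq
  have hPall : ∀ m, P m := fun m => Nat.rec hP0 (fun m ih => hstep m ih) m
  obtain ⟨E, u, h1, h2, -, -⟩ := hPall 𝓖.card
  have himage : (Finset.range (𝓖.card + 1)).image E ⊆ 𝓖 := by
    intro y hy
    obtain ⟨i, hi, rfl⟩ := Finset.mem_image.1 hy
    rw [Finset.mem_range] at hi
    exact h1 i (by omega)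
  have hcard : ((Finset.range (𝓖.card + 1)).image E).card = 𝓖.card + 1 := by
    rw [Finset.card_image_of_injOn, Finset.card_range]
    intro i hi j hj heq
    rw [Finset.coe_range, Set.mem_Iio] at hi hj
    exact h2 i j (by omega) (by omega) heq
  have := Finset.card_le_card himage
  omega

end S5
namespace S5
set_option linter.unusedSectionVars false
set_option maxHeartbeats 1000000

variable {V : Type*} [DecidableEq V] {G : SimpleGraph V}

lemma exists_maxclq_superset [Fintype V] {B : Finset V} (hB : G.IsClique (↑B : Set V)) :
    ∃ C : Finset V, MaxClq G C ∧ B ⊆ C := by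
  classical
  set S := Finset.univ.filter (fun C : Finset V => G.IsClique (↑C : Set V) ∧ B ⊆ C) with hS
  have hne : S.Nonempty := ⟨B, by simp [hS, hB]⟩
  obtain ⟨C, hC, hmax⟩ := S.exists_max_image Finset.card hne
  rw [hS, Finset.mem_filter] at hC
  refine ⟨C, ⟨hC.2.1, ?_⟩, hC.2.2⟩
  intro E hE hCE
  have hES : E ∈ S := by
    rw [hS, Finset.mem_filter]
    exact ⟨Finset.mem_univ _, hE, hC.2.2.trans hCE⟩
  exact (Finset.eq_of_subset_of_card_le hCE (hmax E hES)).symm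

end S5

open S5 in
/-- for `t ≥ 3` and a block graph `G`, the complex `CF_t(G)` is
`(t-2)`-decomposable and hence shellable. -/
theorem statement5 {V : Type*} [Fintype V] [DecidableEq V]
    (t : ℕ) (ht : 3 ≤ t) (G : SimpleGraph V) (hblock : IsBlockGraph G) :
    KDecomposable (t - 2) (cliqueFreeComplex G t) ∧
    IsShellable (cliqueFreeComplex G t) := by
  classical
  set 𝓜 : Finset (Finset V) := Finset.univ.filter
    (fun C : Finset V => MaxClq G C ∧ t ≤ C.card) with h𝓜
  set 𝓒 : Finset (Finset V × ℕ) := 𝓜.image (fun C => (C, t - 1)) with h𝓒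
  have hmemM : ∀ C ∈ 𝓜, MaxClq G C ∧ t ≤ C.card := by
    intro C hC
    rw [h𝓜, Finset.mem_filter] at hC
    exact hC.2
  -- CF = PComplex
  have hcf : cliqueFreeComplex G t = PComplex Finset.univ 𝓒 := by
    ext A
    simp only [cliqueFreeComplex, PComplex, Set.mem_setOf_eq]
    constructor
    · intro hA
      refine ⟨Finset.subset_univ A, ?_⟩
      intro p hp
      rw [h𝓒, Finset.mem_image] at hp
      obtain ⟨C, hC, rfl⟩ := hp
      by_contra hcon
      push_neg at hcon
      dsimp only at hcon
      obtain ⟨B, hBsub, hBcard⟩ :=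
        Finset.exists_subset_card_eq (show t ≤ (A ∩ C).card by omega)
      refine hA B (hBsub.trans Finset.inter_subset_left) ⟨?_, hBcard⟩
      refine (hmemM C hC).1.1.subset ?_
      intro y hy
      rw [Finset.mem_coe] at hy ⊢
      exact (Finset.mem_inter.1 (hBsub hy)).2
    · rintro ⟨-, hA⟩ B hBA hBclq
      obtain ⟨C, hCmax, hBC⟩ := exists_maxclq_superset hBclq.1
      have htC : t ≤ C.card := by
        have h1 := Finset.card_le_card hBC
        have h2 := hBclq.2
        omega
      have hp : (C, t - 1) ∈ 𝓒 := by
        rw [h𝓒]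
        exact Finset.mem_image_of_mem _
          (by rw [h𝓜, Finset.mem_filter]; exact ⟨Finset.mem_univ _, hCmax, htC⟩)
      have h3 := hA _ hp
      have h4 : B ⊆ A ∩ C := fun y hy => Finset.mem_inter.2 ⟨hBA hy, hBC hy⟩
      have h5 := Finset.card_le_card h4
      have h6 := hBclq.2
      simp only at h3
      omega
  have hinv : ∀ p ∈ 𝓒, 1 ≤ p.2 ∧ p.2 < p.1.card ∧ p.1 ⊆ Finset.univ := by
    intro p hp
    rw [h𝓒, Finset.mem_image] at hp
    obtain ⟨C, hC, rfl⟩ := hp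
    have := (hmemM C hC).2
    exact ⟨by omega, by simp; omega, Finset.subset_univ _⟩
  have hgood : GoodFam (𝓒.image Prod.fst) := by
    refine goodFam_subset (goodFam_maxclq hblock
      (Finset.univ.filter (fun C : Finset V => MaxClq G C)) ?_) ?_
    · intro C hC
      rw [Finset.mem_filter] at hC
      exact hC.2
    · intro y hy
      rw [Finset.mem_image] at hy
      obtain ⟨p, hp, rfl⟩ := hy
      rw [h𝓒, Finset.mem_image] at hp
      obtain ⟨C, hC, rfl⟩ := hp
      rw [Finset.mem_filter]
      exact ⟨Finset.mem_univ _, (hmemM C hC).1⟩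
  have hk : KDecomposable (t - 2) (cliqueFreeComplex G t) := by
    rw [hcf]
    exact kdec_PComplex (t - 2) Finset.univ.card Finset.univ le_rfl 𝓒 hinv hgood
  have hdc : IsDC (cliqueFreeComplex G t) := by
    intro A B hAB hB B' hB' hclq
    exact hB B' (hB'.trans hAB) hclq
  exact ⟨hk, shellable_of_kdec hk hdc⟩
end

section
/- Let t ≥ 2 be an integer, let H be a finite simple graph, let S ⊆ V(H), and let G = Cl(H, S, t) be a clique attachment of H along S. For each v ∈ S choose a subset σ_v ⊆ V(K_v) ∖ {v} with |σ_v| = t − 1, and set σ = ⋃_{v ∈ S} σ_v. Then σ is a face of CF_t(G), and the link of σ in CF_t(G) equals the t-clique-free complex of the induced subgraph of H on V(H) ∖ S: link_{CF_t(G)}(σ) = CF_t(H ∖ S). -/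
/-- The `t`-clique-free complex of the induced subgraph of `G` on a vertex subset `U`
(as a complex on the ambient vertex type). -/
def cliqueFreeComplexOn {V : Type*} (G : SimpleGraph V) (U : Set V) (t : ℕ) :
    Set (Finset V) :=
  {A : Finset V | ↑A ⊆ U ∧ ∀ B ⊆ A, ¬ G.IsNClique t B}

/-- The data of a clique attachment `G = Cl(H, S, t)`: `G` is a graph on the ambient
vertex type, `VH` is the vertex set of `H` (so that `H` is the induced subgraph of `G`
on `VH`; no new edges are added between vertices of `H`), `S ⊆ VH`, and for each
`v ∈ S`, `K v` is the vertex set of the clique attached at `v`: it contains `v`, has at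
least `t` vertices, its other vertices are new and pairwise disjoint from the other
attached cliques, and each new vertex is adjacent exactly to the other vertices of
its clique. -/
structure IsCliqueAttachment {V : Type*} [DecidableEq V] (G : SimpleGraph V)
    (VH S : Finset V) (K : V → Finset V) (t : ℕ) : Prop where
  subset : S ⊆ VH
  cover : ∀ w : V, w ∈ VH ∨ ∃ v ∈ S, w ∈ K v
  mem_self : ∀ v ∈ S, v ∈ K v
  card_ge : ∀ v ∈ S, t ≤ (K v).card
  new_vertices : ∀ v ∈ S, ∀ w ∈ K v, w ≠ v → w ∉ VH
  pairwise_disjoint : ∀ u ∈ S, ∀ v ∈ S, u ≠ v → Disjoint (K u) (K v)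
  clique : ∀ v ∈ S, G.IsClique ↑(K v)
  adj_new : ∀ v ∈ S, ∀ w ∈ K v, w ∉ VH → ∀ u : V, G.Adj w u ↔ (u ∈ K v ∧ u ≠ w)

/-- for `G = Cl(H, S, t)` and `σ = ⋃_{v ∈ S} σ v` where each
`σ v ⊆ K v ∖ {v}` has `t - 1` elements, the set `σ` is a face of `CF_t(G)` and
`link_{CF_t(G)}(σ) = CF_t(H ∖ S)`. -/
theorem statement7 {V : Type*} [Fintype V] [DecidableEq V]
    (t : ℕ) (ht : 2 ≤ t) (G : SimpleGraph V) (VH S : Finset V) (K : V → Finset V)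
    (hG : IsCliqueAttachment G VH S K t)
    (σ : V → Finset V)
    (hσ : ∀ v ∈ S, σ v ⊆ (K v).erase v ∧ (σ v).card = t - 1) :
    S.biUnion σ ∈ cliqueFreeComplex G t ∧
    linkC (cliqueFreeComplex G t) (S.biUnion σ) =
      cliqueFreeComplexOn G (↑(VH \ S)) t := by
  obtain ⟨hsub, hcover, hmem, hcard, hnew, hdisj, hcl, hadj⟩ := hG
  have hmemB : ∀ w, w ∈ S.biUnion σ ↔ ∃ v ∈ S, w ∈ σ v := by
    intro w; simp
  have hσK : ∀ v ∈ S, ∀ w ∈ σ v, w ∈ K v ∧ w ≠ v := by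
    intro v hv w hw
    have h := (hσ v hv).1 hw
    exact ⟨Finset.mem_of_mem_erase h, Finset.ne_of_mem_erase h⟩
  have hσnotVH : ∀ w ∈ S.biUnion σ, w ∉ VH := by
    intro w hw
    obtain ⟨v, hv, hwv⟩ := (hmemB w).1 hw
    obtain ⟨hwK, hne⟩ := hσK v hv w hwv
    exact hnew v hv w hwK hne
  -- any clique containing a new vertex of K v lies in K v
  have hcliqueK : ∀ (B : Finset V), G.IsClique ↑B → ∀ v ∈ S, ∀ w ∈ B,
      w ∈ K v → w ∉ VH → B ⊆ K v := by
    intro B hB v hv w hwB hwK hwVH u hu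
    by_cases h : u = w
    · subst h; exact hwK
    · have hadjwu : G.Adj w u :=
        hB (Finset.mem_coe.2 hwB) (Finset.mem_coe.2 hu) (fun e => h e.symm)
      exact ((hadj v hv w hwK hwVH u).1 hadjwu).1
  -- (⋃ σ) ∩ K v ⊆ σ v
  have hBK : ∀ v ∈ S, ∀ w ∈ S.biUnion σ, w ∈ K v → w ∈ σ v := by
    intro v hv w hw hwK
    obtain ⟨u, hu, hwu⟩ := (hmemB w).1 hw
    by_cases h : u = v
    · subst h; exact hwu
    · exact absurd hwK (Finset.disjoint_left.1 (hdisj u hu v hv h) (hσK u hu w hwu).1)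
  have hσsub : ∀ v ∈ S, σ v ⊆ S.biUnion σ := fun v hv =>
    Finset.subset_biUnion_of_mem σ hv
  have htpos : 0 < t := by omega
  -- part 1 : σ is a face
  have hface : S.biUnion σ ∈ cliqueFreeComplex G t := by
    intro B hBsub hB
    have hne : B.Nonempty := by
      rw [← Finset.card_pos, hB.card_eq]; exact htpos
    obtain ⟨w, hwB⟩ := hne
    obtain ⟨v, hv, hwv⟩ := (hmemB w).1 (hBsub hwB)
    obtain ⟨hwK, _⟩ := hσK v hv w hwv
    have hwVH : w ∉ VH := hσnotVH w (hBsub hwB)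
    have hBKv : B ⊆ K v := hcliqueK B hB.isClique v hv w hwB hwK hwVH
    have hBσv : B ⊆ σ v := fun x hx => hBK v hv x (hBsub hx) (hBKv hx)
    have := Finset.card_le_card hBσv
    rw [hB.card_eq, (hσ v hv).2] at this
    omega
  refine ⟨hface, ?_⟩
  ext F
  constructor
  · rintro ⟨hF1, hF2, hF3⟩
    refine ⟨?_, hF1⟩
    intro w hwF
    simp only [Finset.coe_sdiff, Set.mem_diff, Finset.mem_coe] at *
    have hwF' : w ∈ F := hwF
    -- w ∈ VH
    have hwVH : w ∈ VH := by
      by_contra hwVH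
      obtain ⟨v, hv, hwK⟩ := (hcover w).resolve_left hwVH
      have hwσv : w ∉ σ v := fun h =>
        (Finset.disjoint_left.1 hF2 hwF' (hσsub v hv h))
      have hclB : G.IsNClique t (insert w (σ v)) := by
        constructor
        · apply (hcl v hv).subset
          intro x hx
          rcases Finset.mem_insert.1 hx with h | h
          · subst h; exact hwK
          · exact Finset.mem_coe.2 (hσK v hv x h).1
        · rw [Finset.card_insert_of_notMem hwσv, (hσ v hv).2]; omega
      exact hF3 (insert w (σ v)) (by
        intro x hx
        rcases Finset.mem_insert.1 hx with h | h
        · subst h; exact Finset.mem_union_left _ hwF'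
        · exact Finset.mem_union_right _ (hσsub v hv h)) hclB
    refine ⟨hwVH, ?_⟩
    -- w ∉ S
    intro hwS
    have hwσw : w ∉ σ w := fun h => (hσK w hwS w h).2 rfl
    have hclB : G.IsNClique t (insert w (σ w)) := by
      constructor
      · apply (hcl w hwS).subset
        intro x hx
        rcases Finset.mem_insert.1 hx with h | h
        · rw [h]; exact Finset.mem_coe.2 (hmem w hwS)
        · exact Finset.mem_coe.2 (hσK w hwS x h).1
      · rw [Finset.card_insert_of_notMem hwσw, (hσ w hwS).2]; omega
    exact hF3 (insert w (σ w)) (by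
      intro x hx
      rcases Finset.mem_insert.1 hx with h | h
      · subst h; exact Finset.mem_union_left _ hwF'
      · exact Finset.mem_union_right _ (hσsub w hwS h)) hclB
  · rintro ⟨hFsub, hFcf⟩
    have hFsub' : ∀ w ∈ F, w ∈ VH ∧ w ∉ S := by
      intro w hw
      have := hFsub (Finset.mem_coe.2 hw)
      simpa using this
    refine ⟨hFcf, ?_, ?_⟩
    · rw [Finset.disjoint_left]
      intro w hwF hwB
      exact hσnotVH w hwB (hFsub' w hwF).1
    · intro B hBsub hB
      by_cases hmeet : ∃ w ∈ B, w ∈ S.biUnion σ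
      · obtain ⟨w, hwB, hwb⟩ := hmeet
        obtain ⟨v, hv, hwv⟩ := (hmemB w).1 hwb
        obtain ⟨hwK, _⟩ := hσK v hv w hwv
        have hwVH : w ∉ VH := hσnotVH w hwb
        have hBKv : B ⊆ K v := hcliqueK B hB.isClique v hv w hwB hwK hwVH
        have hBσv : B ⊆ σ v := by
          intro x hx
          rcases Finset.mem_union.1 (hBsub hx) with h | h
          · exfalso
            obtain ⟨hxVH, hxS⟩ := hFsub' x h
            by_cases hxv : x = v
            · exact hxS (hxv ▸ hv)
            · exact hnew v hv x (hBKv hx) hxv hxVH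
          · exact hBK v hv x h (hBKv hx)
        have := Finset.card_le_card hBσv
        rw [hB.card_eq, (hσ v hv).2] at this
        omega
      · push_neg at hmeet
        have hBF : B ⊆ F := by
          intro x hx
          rcases Finset.mem_union.1 (hBsub hx) with h | h
          · exact h
          · exact absurd h (hmeet x hx)
        exact hFcf B hBF hB
end

section
/- Let t ≥ 2 be an integer, let H be a finite simple graph, let S ⊆ V(H) be a cycle cover of H, and let G = Cl(H, S, t) be a clique attachment of H along S. Then the t-clique-free complex CF_t(G) is shellable. -/
namespace Statement8Aux

open Finset
set_option linter.unusedSectionVars false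

variable {V : Type*} [Fintype V] [DecidableEq V]

lemma exists_facet_superset (Δ : Set (Finset V)) {A : Finset V} (hA : A ∈ Δ) :
    ∃ F ∈ Facets Δ, A ⊆ F := by
  have hfin : {B : Finset V | B ∈ Δ ∧ A ⊆ B}.Finite := Set.toFinite _
  obtain ⟨M, hM, hmax⟩ :=
    Set.Finite.exists_maximalFor Finset.card _ hfin ⟨A, hA, subset_rfl⟩
  refine ⟨M, ⟨hM.1, ?_⟩, hM.2⟩
  intro B hB hMB
  have hBmem : B ∈ {B : Finset V | B ∈ Δ ∧ A ⊆ B} := ⟨hB, hM.2.trans hMB⟩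
  exact Finset.eq_of_subset_of_card_le hMB
    (hmax hBmem (Finset.card_le_card hMB))

lemma isShellable_empty (Δ : Set (Finset V)) (h : Δ = ∅) : IsShellable Δ := by
  refine ⟨0, Fin.elim0, fun i => i.elim0, fun i => i.elim0, ?_, fun i => i.elim0⟩
  intro A hA
  rw [h] at hA
  exact absurd hA.1 (Set.notMem_empty _)

lemma isShellable_single (Δ : Set (Finset V)) (h : Δ = {∅}) : IsShellable Δ := by
  subst h
  refine ⟨1, fun _ => ∅, ?_, fun a b _ => Subsingleton.elim a b, ?_, ?_⟩
  · intro _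
    exact ⟨rfl, fun A hA _ => (hA : A = ∅).symm⟩
  · intro A hA
    exact ⟨0, (hA.1 : A = ∅).symm⟩
  · intro i j hij
    exfalso
    have h1 : (i : ℕ) < (j : ℕ) := hij
    have h2 : (j : ℕ) < 1 := j.2
    omega

/-- Facets of the link, coned, are facets of the complex. -/
lemma insert_facet_of_facet_lnk (Δ : Set (Finset V)) (x : V) {Fj : Finset V}
    (hFj : Fj ∈ Facets {A : Finset V | x ∉ A ∧ insert x A ∈ Δ}) :
    insert x Fj ∈ Facets Δ := by
  obtain ⟨⟨hxFj, hins⟩, hmax⟩ := hFj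
  refine ⟨hins, fun A hA hsub => ?_⟩
  have hxA : x ∈ A := hsub (mem_insert_self x Fj)
  have hA' : A.erase x ∈ {A : Finset V | x ∉ A ∧ insert x A ∈ Δ} :=
    ⟨notMem_erase _ _, by rwa [insert_erase hxA]⟩
  have hFsub : Fj ⊆ A.erase x :=
    subset_erase.2 ⟨(subset_insert x Fj).trans hsub, hxFj⟩
  have := hmax _ hA' hFsub
  rw [this, insert_erase hxA]

lemma facets_erase_of_facet (Δ : Set (Finset V)) (x : V) {A : Finset V}
    (hA : A ∈ Facets Δ) (hxA : x ∈ A) :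
    A.erase x ∈ Facets {A : Finset V | x ∉ A ∧ insert x A ∈ Δ} := by
  refine ⟨⟨notMem_erase _ _, by rw [insert_erase hxA]; exact hA.1⟩, ?_⟩
  intro B hB hsub
  have h1 : A ⊆ insert x B := by
    intro a ha
    by_cases hax : a = x
    · simp [hax]
    · exact mem_insert_of_mem (hsub (mem_erase.2 ⟨hax, ha⟩))
  have h2 := hA.2 _ hB.2 h1
  rw [h2, erase_insert hB.1]

lemma insert_sdiff_insert_eq_singleton {x v : V} {s t : Finset V}
    (hxs : x ∉ s) (hst : s \ t = {v}) : insert x s \ insert x t = {v} := by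
  have hvs : v ∈ s := (mem_sdiff.1 (hst ▸ mem_singleton_self v)).1
  have hxv : x ∉ ({v} : Finset V) := by
    simp only [mem_singleton]
    rintro rfl
    exact hxs hvs
  rw [Finset.insert_sdiff_insert, Finset.sdiff_insert, hst, Finset.erase_eq_of_notMem hxv]

/-- The shedding lemma: if every facet of the deletion is a facet of `Δ`, and both the
deletion and the link are shellable, then `Δ` is shellable. -/
lemma isShellable_shed (Δ : Set (Finset V)) (x : V)
    (hdc : ∀ A ∈ Δ, ∀ B ⊆ A, B ∈ Δ)
    (hfac : ∀ A ∈ Facets {A ∈ Δ | x ∉ A}, A ∈ Facets Δ)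
    (hdel : IsShellable {A ∈ Δ | x ∉ A})
    (hlnk : IsShellable {A : Finset V | x ∉ A ∧ insert x A ∈ Δ}) :
    IsShellable Δ := by
  classical
  obtain ⟨s₁, F₁, hF₁, inj₁, surj₁, sh₁⟩ := hdel
  obtain ⟨s₂, F₂, hF₂, inj₂, surj₂, sh₂⟩ := hlnk
  have hx₁ : ∀ i, x ∉ F₁ i := fun i => (hF₁ i).1.2
  have hx₂ : ∀ j, x ∉ F₂ j := fun j => (hF₂ j).1.1
  have hsplit : ∀ i : Fin (s₁ + s₂),
      (∃ k : Fin s₁, i = Fin.castAdd s₂ k) ∨ (∃ k : Fin s₂, i = Fin.natAdd s₁ k) := by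
    intro i
    by_cases h : (i : ℕ) < s₁
    · exact Or.inl ⟨⟨i.1, h⟩, Fin.ext rfl⟩
    · refine Or.inr ⟨⟨i.1 - s₁, by have := i.isLt; omega⟩, Fin.ext ?_⟩
      show (i : ℕ) = s₁ + (i.1 - s₁)
      omega
  set Fb : Fin (s₁ + s₂) → Finset V := Fin.append F₁ (fun j => insert x (F₂ j)) with hFbdef
  have hFbl : ∀ k : Fin s₁, Fb (Fin.castAdd s₂ k) = F₁ k := fun k =>
    Fin.append_left _ _ _
  have hFbr : ∀ k : Fin s₂, Fb (Fin.natAdd s₁ k) = insert x (F₂ k) := fun k =>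
    Fin.append_right _ _ _
  refine ⟨s₁ + s₂, Fb, ?_, ?_, ?_, ?_⟩
  · intro i
    rcases hsplit i with ⟨k, rfl⟩ | ⟨k, rfl⟩
    · rw [hFbl]; exact hfac _ (hF₁ k)
    · rw [hFbr]; exact insert_facet_of_facet_lnk Δ x (hF₂ k)
  · intro a b hab
    rcases hsplit a with ⟨k, rfl⟩ | ⟨k, rfl⟩ <;> rcases hsplit b with ⟨m, rfl⟩ | ⟨m, rfl⟩
    · rw [hFbl, hFbl] at hab
      rw [inj₁ hab]
    · rw [hFbl, hFbr] at hab
      exact absurd (hab ▸ mem_insert_self x _) (hx₁ _)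
    · rw [hFbr, hFbl] at hab
      exact absurd (hab.symm ▸ mem_insert_self x _) (hx₁ _)
    · rw [hFbr, hFbr] at hab
      have h1 := congrArg (fun s => Finset.erase s x) hab
      simp only [erase_insert (hx₂ _)] at h1
      rw [inj₂ h1]
  · intro A hA
    by_cases hxA : x ∈ A
    · obtain ⟨j, hj⟩ := surj₂ _ (facets_erase_of_facet Δ x hA hxA)
      refine ⟨Fin.natAdd s₁ j, ?_⟩
      rw [hFbr, hj, insert_erase hxA]
    · have hAdel : A ∈ Facets {A ∈ Δ | x ∉ A} :=
        ⟨⟨hA.1, hxA⟩, fun B hB hsub => hA.2 B hB.1 hsub⟩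
      obtain ⟨i, hi⟩ := surj₁ _ hAdel
      exact ⟨Fin.castAdd s₂ i, by rw [hFbl]; exact hi⟩
  · intro i j hij
    rcases hsplit j with ⟨m, rfl⟩ | ⟨m, rfl⟩ <;> rcases hsplit i with ⟨k, rfl⟩ | ⟨k, rfl⟩
    · -- both in first block
      have hkm : k < m := by
        have h1 : ((Fin.castAdd s₂ k : Fin (s₁ + s₂)) : ℕ) < ((Fin.castAdd s₂ m) : ℕ) := hij
        rw [Fin.coe_castAdd, Fin.coe_castAdd] at h1
        exact Fin.lt_def.2 h1
      obtain ⟨v, hv, l, hl, hFl⟩ := sh₁ k m hkm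
      refine ⟨v, by rw [hFbl, hFbl]; exact hv, Fin.castAdd s₂ l, ?_, by
        rw [hFbl, hFbl]; exact hFl⟩
      have h2 : (l : ℕ) < (m : ℕ) := hl
      exact Fin.lt_def.2 (by rw [Fin.coe_castAdd, Fin.coe_castAdd]; exact h2)
    · -- i in second block, j in first: impossible
      exfalso
      have : ((Fin.natAdd s₁ k : Fin (s₁ + s₂)) : ℕ) < ((Fin.castAdd s₂ m) : ℕ) := hij
      simp only [Fin.coe_natAdd, Fin.coe_castAdd] at this
      have := m.isLt
      omega
    · -- i in first block, j in second block; v = x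
      have hFjmem : F₂ m ∈ {A ∈ Δ | x ∉ A} :=
        ⟨hdc _ (hF₂ m).1.2 _ (subset_insert x _), hx₂ m⟩
      obtain ⟨Dl, hDl, hsubDl⟩ := exists_facet_superset {A ∈ Δ | x ∉ A} hFjmem
      obtain ⟨l₁, hl₁⟩ := surj₁ _ hDl
      refine ⟨x, ?_, Fin.castAdd s₂ l₁, ?_, ?_⟩
      · rw [hFbr, hFbl, mem_sdiff]
        exact ⟨mem_insert_self _ _, hx₁ _⟩
      · simp only [Fin.lt_def, Fin.coe_natAdd, Fin.coe_castAdd]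
        have := l₁.isLt
        omega
      · rw [hFbr, hFbl, hl₁]
        ext a
        simp only [mem_sdiff, mem_insert, mem_singleton]
        constructor
        · rintro ⟨ha1, ha2⟩
          rcases ha1 with rfl | ha1
          · rfl
          · exact absurd (hsubDl ha1) ha2
        · rintro rfl
          exact ⟨Or.inl rfl, hDl.1.2⟩
    · -- both in second block
      have hkm : k < m := by
        have : ((Fin.natAdd s₁ k : Fin (s₁ + s₂)) : ℕ) < ((Fin.natAdd s₁ m) : ℕ) := hij
        simp only [Fin.coe_natAdd] at this
        exact Fin.lt_def.2 (by omega)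
      obtain ⟨v, hv, l₂, hl₂, hFl⟩ := sh₂ k m hkm
      rw [mem_sdiff] at hv
      have hvx : v ≠ x := fun h => hx₂ m (h ▸ hv.1)
      refine ⟨v, ?_, Fin.natAdd s₁ l₂, ?_, ?_⟩
      · rw [hFbr, hFbr, mem_sdiff, mem_insert, mem_insert]
        push_neg
        exact ⟨Or.inr hv.1, hvx, hv.2⟩
      · simp only [Fin.lt_def, Fin.coe_natAdd]
        have : (l₂ : ℕ) < (m : ℕ) := hl₂
        omega
      · rw [hFbr, hFbr]
        exact insert_sdiff_insert_eq_singleton (hx₂ m) hFl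

/-- The cone lemma. -/
lemma isShellable_cone (Δ : Set (Finset V)) (x : V)
    (hcone : ∀ A ∈ Δ, insert x A ∈ Δ)
    (hlnk : IsShellable {A : Finset V | x ∉ A ∧ insert x A ∈ Δ}) :
    IsShellable Δ := by
  obtain ⟨s₂, F₂, hF₂, inj₂, surj₂, sh₂⟩ := hlnk
  have hx₂ : ∀ j, x ∉ F₂ j := fun j => (hF₂ j).1.1
  refine ⟨s₂, fun j => insert x (F₂ j), ?_, ?_, ?_, ?_⟩
  · intro j
    exact insert_facet_of_facet_lnk Δ x (hF₂ j)
  · intro a b hab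
    apply inj₂
    have h1 := congrArg (fun s => Finset.erase s x) hab
    simpa only [erase_insert (hx₂ _)] using h1
  · intro A hA
    have hxA : x ∈ A := by
      by_contra hxA
      have h1 : insert x A ∈ Δ := hcone A hA.1
      have := hA.2 _ h1 (subset_insert x A)
      exact hxA (this ▸ mem_insert_self x A)
    obtain ⟨j, hj⟩ := surj₂ _ (facets_erase_of_facet Δ x hA hxA)
    refine ⟨j, ?_⟩
    show insert x (F₂ j) = A
    rw [hj, insert_erase hxA]
  · intro i j hij
    obtain ⟨v, hv, l, hl, hFl⟩ := sh₂ i j hij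
    rw [mem_sdiff] at hv
    have hvx : v ≠ x := fun h => hx₂ j (h ▸ hv.1)
    refine ⟨v, ?_, l, hl, ?_⟩
    · show v ∈ insert x (F₂ j) \ insert x (F₂ i)
      rw [mem_sdiff, mem_insert, mem_insert]
      push_neg
      exact ⟨Or.inr hv.1, hvx, hv.2⟩
    · show insert x (F₂ j) \ insert x (F₂ l) = {v}
      exact insert_sdiff_insert_eq_singleton (hx₂ j) hFl

/-- A finite acyclic graph with an edge has a leaf. -/
lemma exists_leaf {W : Type*} [Fintype W] [DecidableEq W] {F : SimpleGraph W}
    (hF : F.IsAcyclic) {a₀ b₀ : W} (hab : F.Adj a₀ b₀) :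
    ∃ x y, F.Adj x y ∧ ∀ z, F.Adj x z → z = y := by
  by_contra hcon
  push_neg at hcon
  -- hcon : ∀ x y, F.Adj x y → ∃ z, F.Adj x z ∧ z ≠ y
  have claim : ∀ n : ℕ, ∃ (u v : W) (p : F.Walk u v), p.IsPath ∧ p.length = n + 1 := by
    intro n
    induction n with
    | zero =>
      refine ⟨a₀, b₀, SimpleGraph.Walk.cons hab SimpleGraph.Walk.nil, ?_, rfl⟩
      rw [SimpleGraph.Walk.cons_isPath_iff]
      refine ⟨SimpleGraph.Walk.IsPath.nil, ?_⟩
      simp [hab.ne]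
    | succ n ih =>
      obtain ⟨u, v, p, hp, hlen⟩ := ih
      cases p with
      | nil => simp at hlen
      | @cons _ m _ h q =>
        -- u is the start; second vertex is m
        obtain ⟨z, hz, hzm⟩ := hcon u m h
        have hzu : z ≠ u := hz.ne'
        have hznotin : z ∉ (SimpleGraph.Walk.cons h q).support := by
          intro hzmem
          set p := SimpleGraph.Walk.cons h q with hpdef
          have hq := hp.takeUntil hzmem
          have hnotedge : s(z, u) ∉ (p.takeUntil z hzmem).edges := by
            intro hmem
            have hmem' : s(z, u) ∈ p.edges := SimpleGraph.Walk.edges_takeUntil_subset _ _ hmem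
            rw [hpdef] at hmem'
            rw [SimpleGraph.Walk.edges_cons] at hmem'
            rcases List.mem_cons.1 hmem' with heq | hmem''
            · rw [Sym2.eq_iff] at heq
              rcases heq with ⟨h1, h2⟩ | ⟨h1, h2⟩
              · exact hzu h1
              · exact hzm h1
            · have : u ∈ q.support := SimpleGraph.Walk.snd_mem_support_of_mem_edges q hmem''
              rw [SimpleGraph.Walk.cons_isPath_iff] at hp
              exact hp.2 this
          exact hF _ ((SimpleGraph.Walk.cons_isCycle_iff _ hz.symm).2 ⟨hq, hnotedge⟩)
        refine ⟨z, v, SimpleGraph.Walk.cons hz.symm (SimpleGraph.Walk.cons h q), ?_, ?_⟩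
        · rw [SimpleGraph.Walk.cons_isPath_iff]
          exact ⟨hp, hznotin⟩
        · simp [SimpleGraph.Walk.length_cons] at hlen ⊢
          omega
  obtain ⟨u, v, p, hp, hlen⟩ := claim (Fintype.card W)
  have := hp.length_lt
  omega

/-! ### The generalized complex -/

def genC (G : SimpleGraph V) (t : ℕ) (P D : Finset V) : Set (Finset V) :=
  {A | A ⊆ P ∧ ∀ B ⊆ A ∪ D, ¬ G.IsNClique t B}

lemma genC_dc (G : SimpleGraph V) (t : ℕ) (P D : Finset V) :
    ∀ A ∈ genC G t P D, ∀ B ⊆ A, B ∈ genC G t P D :=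
  fun A hA B hBA => ⟨hBA.trans hA.1,
    fun C hC => hA.2 C (hC.trans (union_subset_union hBA Subset.rfl))⟩

lemma genC_del (G : SimpleGraph V) (t : ℕ) (P D : Finset V) (x : V) :
    {A ∈ genC G t P D | x ∉ A} = genC G t (P.erase x) D := by
  ext A
  simp only [genC, Set.mem_setOf_eq, Set.mem_sep_iff]
  constructor
  · rintro ⟨⟨h1, h2⟩, h3⟩
    exact ⟨subset_erase.2 ⟨h1, h3⟩, h2⟩
  · rintro ⟨h1, h2⟩
    obtain ⟨h3, h4⟩ := subset_erase.1 h1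
    exact ⟨⟨h3, h2⟩, h4⟩

lemma genC_lnk (G : SimpleGraph V) (t : ℕ) (P D : Finset V) {x : V} (hx : x ∈ P) :
    {A : Finset V | x ∉ A ∧ insert x A ∈ genC G t P D} =
      genC G t (P.erase x) (insert x D) := by
  ext A
  simp only [genC, Set.mem_setOf_eq]
  constructor
  · rintro ⟨h1, h2, h3⟩
    refine ⟨subset_erase.2 ⟨(subset_insert x A).trans h2, h1⟩, ?_⟩
    intro B hB
    apply h3
    intro b hb
    have h4 := hB hb
    rw [mem_union, mem_insert] at h4
    rw [mem_union, mem_insert]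
    tauto
  · rintro ⟨h1, h2⟩
    obtain ⟨hPsub, hxA⟩ := subset_erase.1 h1
    refine ⟨hxA, insert_subset_iff.2 ⟨hx, hPsub⟩, ?_⟩
    intro B hB
    apply h2
    intro b hb
    have h4 := hB hb
    rw [mem_union, mem_insert] at h4
    rw [mem_union, mem_insert]
    tauto

/-- The key facet lemma for shedding a vertex `x` of an attached clique `K v`
(either `x = v` itself or a new vertex of the clique). -/
lemma keyfacet {G : SimpleGraph V} {t : ℕ} {VH S : Finset V} {K : V → Finset V}
    (hG : IsCliqueAttachment G VH S K t) (ht : 2 ≤ t) {P D : Finset V}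
    (hPD : Disjoint P D) {v x : V} (hvS : v ∈ S) (hxP : x ∈ P) (hxK : x ∈ K v)
    (hcard : t - 1 ≤ (((K v).erase x) ∩ (P ∪ D)).card)
    (hnew : ∀ u ∈ (K v).erase x, u ∈ P → u ∉ VH) :
    ∀ A ∈ Facets (genC G t (P.erase x) D), A ∈ Facets (genC G t P D) := by
  intro A hA
  obtain ⟨⟨hAP, hAcl⟩, hAmax⟩ := hA
  have hxD : x ∉ D := Finset.disjoint_left.1 hPD hxP
  have hxA : x ∉ A := fun h => (notMem_erase x P) (hAP h)
  have hxAD : x ∉ A ∪ D := by rw [mem_union]; tauto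
  -- Step A: the facet of the deletion contains t-1 vertices of the clique
  have hbig : t - 1 ≤ (((K v).erase x) ∩ (A ∪ D)).card := by
    by_contra hlt
    push_neg at hlt
    obtain ⟨w, hw1, hw2⟩ : ∃ w ∈ ((K v).erase x) ∩ (P ∪ D), w ∉ ((K v).erase x) ∩ (A ∪ D) := by
      by_contra hc
      push_neg at hc
      exact absurd (card_le_card hc) (by omega)
    rw [mem_inter] at hw1
    have hwK : w ∈ K v := mem_of_mem_erase hw1.1
    have hwx : w ≠ x := ne_of_mem_erase hw1.1
    have hwAD : w ∉ A ∪ D := fun h => hw2 (mem_inter.2 ⟨hw1.1, h⟩)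
    have hwA : w ∉ A := fun h => hwAD (mem_union_left _ h)
    have hwD : w ∉ D := fun h => hwAD (mem_union_right _ h)
    have hwP : w ∈ P := by
      rcases mem_union.1 hw1.2 with h | h
      · exact h
      · exact absurd h hwD
    have hwVH : w ∉ VH := hnew w hw1.1 hwP
    have hins : insert w A ∈ genC G t (P.erase x) D := by
      refine ⟨insert_subset_iff.2 ⟨mem_erase.2 ⟨hwx, hwP⟩, hAP⟩, ?_⟩
      intro B hB hBcl
      by_cases hwB : w ∈ B
      · have hBsub : B ⊆ insert w (((K v).erase x) ∩ (A ∪ D)) := by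
          intro b hbB
          by_cases hbw : b = w
          · exact hbw ▸ mem_insert_self _ _
          · have hadj : G.Adj w b :=
              hBcl.1 (by exact_mod_cast hwB) (by exact_mod_cast hbB) (Ne.symm hbw)
            have hbK : b ∈ K v := ((hG.adj_new v hvS w hwK hwVH b).1 hadj).1
            have hbAD : b ∈ A ∪ D := by
              have h5 := hB hbB
              rw [mem_union, mem_insert] at h5
              rw [mem_union]
              rcases h5 with (h | h) | h
              · exact absurd h hbw
              · exact Or.inl h
              · exact Or.inr h
            have hbx : b ≠ x := fun h => hxAD (h ▸ hbAD)
            exact mem_insert_of_mem (mem_inter.2 ⟨mem_erase.2 ⟨hbx, hbK⟩, hbAD⟩)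
        have h1 : B.card ≤ (((K v).erase x) ∩ (A ∪ D)).card + 1 :=
          (card_le_card hBsub).trans (card_insert_le _ _)
        have h2 := hBcl.2
        omega
      · refine hAcl B ?_ hBcl
        intro b hbB
        have h5 := hB hbB
        rw [mem_union, mem_insert] at h5
        rw [mem_union]
        rcases h5 with (h | h) | h
        · exact absurd (h ▸ hbB) hwB
        · exact Or.inl h
        · exact Or.inr h
    have h6 := hAmax _ hins (subset_insert w A)
    exact hwA (h6 ▸ mem_insert_self w A)
  -- Step B: it is a facet of the full complex
  refine ⟨⟨hAP.trans (erase_subset _ _), hAcl⟩, ?_⟩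
  intro B hB hABsub
  by_cases hxB : x ∈ B
  · exfalso
    obtain ⟨B₀, hB₀sub, hB₀card⟩ := Finset.exists_subset_card_eq hbig
    have hxB₀ : x ∉ B₀ := fun h => (notMem_erase x (K v)) (mem_inter.1 (hB₀sub h)).1
    have hcl : G.IsNClique t (insert x B₀) := by
      constructor
      · have hsub : insert x B₀ ⊆ K v := insert_subset_iff.2 ⟨hxK,
          (hB₀sub.trans inter_subset_left).trans (erase_subset _ _)⟩
        exact (hG.clique v hvS).subset (by exact_mod_cast hsub)
      · rw [card_insert_of_notMem hxB₀, hB₀card]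
        omega
    refine hB.2 (insert x B₀) ?_ hcl
    refine insert_subset_iff.2 ⟨mem_union_left _ hxB, ?_⟩
    exact (hB₀sub.trans inter_subset_right).trans (union_subset_union hABsub Subset.rfl)
  · exact hAmax B ⟨subset_erase.2 ⟨hB.1, hxB⟩, hB.2⟩ hABsub

/-- No triangles among the forest vertices. -/
lemma no_triangle {G : SimpleGraph V} {VH S : Finset V}
    (hcyc : (G.induce (↑(VH \ S) : Set V)).IsAcyclic)
    {a b c : V} (ha : a ∈ VH \ S) (hb : b ∈ VH \ S) (hc : c ∈ VH \ S)
    (hab : G.Adj a b) (hbc : G.Adj b c) (hac : G.Adj a c) : False := by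
  have ha' : a ∈ (↑(VH \ S) : Set V) := by exact_mod_cast ha
  have hb' : b ∈ (↑(VH \ S) : Set V) := by exact_mod_cast hb
  have hc' : c ∈ (↑(VH \ S) : Set V) := by exact_mod_cast hc
  set Gi := G.induce (↑(VH \ S) : Set V) with hGi
  have hab' : Gi.Adj ⟨a, ha'⟩ ⟨b, hb'⟩ := hab
  have hbc' : Gi.Adj ⟨b, hb'⟩ ⟨c, hc'⟩ := hbc
  have hca' : Gi.Adj ⟨c, hc'⟩ ⟨a, ha'⟩ := hac.symm
  have hne_ab : (⟨a, ha'⟩ : (↑(VH \ S) : Set V)) ≠ ⟨b, hb'⟩ := by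
    simp only [ne_eq, Subtype.mk.injEq]
    exact hab.ne
  have hne_bc : (⟨b, hb'⟩ : (↑(VH \ S) : Set V)) ≠ ⟨c, hc'⟩ := by
    simp only [ne_eq, Subtype.mk.injEq]
    exact hbc.ne
  have hne_ac : (⟨a, ha'⟩ : (↑(VH \ S) : Set V)) ≠ ⟨c, hc'⟩ := by
    simp only [ne_eq, Subtype.mk.injEq]
    exact hac.ne
  refine hcyc (SimpleGraph.Walk.cons hab' (SimpleGraph.Walk.cons hbc'
    (SimpleGraph.Walk.cons hca' SimpleGraph.Walk.nil))) ?_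
  rw [SimpleGraph.Walk.cons_isCycle_iff]
  constructor
  · rw [SimpleGraph.Walk.cons_isPath_iff]
    constructor
    · rw [SimpleGraph.Walk.cons_isPath_iff]
      constructor
      · exact SimpleGraph.Walk.IsPath.nil
      · simp only [SimpleGraph.Walk.support_nil, List.mem_singleton]
        exact fun h => hne_ac h.symm
    · simp only [SimpleGraph.Walk.support_cons, SimpleGraph.Walk.support_nil,
        List.mem_cons, List.mem_singleton]
      rintro (h | h | h)
      · exact hne_bc h
      · exact hne_ab h.symm
      · exact List.not_mem_nil h
  · simp only [SimpleGraph.Walk.edges_cons, SimpleGraph.Walk.edges_nil,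
      List.mem_cons, List.not_mem_nil]
    rintro (h | h | h)
    · rw [Sym2.eq_iff] at h
      rcases h with ⟨h1, h2⟩ | ⟨h1, h2⟩
      · exact hne_ab h1
      · exact hne_ac h1
    · rw [Sym2.eq_iff] at h
      rcases h with ⟨h1, h2⟩ | ⟨h1, h2⟩
      · exact hne_ac h1
      · exact hne_bc h2
    · exact h

/-! ### Bad pairs: the forest structure -/

def BadPair (G : SimpleGraph V) (t : ℕ) (P D : Finset V) (x y : V) : Prop :=
  x ∈ P ∧ y ∈ P ∧ x ≠ y ∧
    ∃ B : Finset V, B ⊆ insert x (insert y D) ∧ x ∈ B ∧ y ∈ B ∧ G.IsNClique t B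

lemma BadPair.symm {G : SimpleGraph V} {t : ℕ} {P D : Finset V} {x y : V}
    (h : BadPair G t P D x y) : BadPair G t P D y x := by
  obtain ⟨h1, h2, h3, B, hB1, hB2, hB3, hB4⟩ := h
  exact ⟨h2, h1, h3.symm, B, by rwa [Finset.insert_comm], hB3, hB2, hB4⟩

lemma BadPair.adj {G : SimpleGraph V} {t : ℕ} {P D : Finset V} {x y : V}
    (h : BadPair G t P D x y) : G.Adj x y :=
  h.2.2.2.choose_spec.2.2.2.1 (by exact_mod_cast h.2.2.2.choose_spec.2.1)
    (by exact_mod_cast h.2.2.2.choose_spec.2.2.1) h.2.2.1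

/-- Key extension property in the forest case: if all bad pairs at `x` are excluded,
then adding `x` to a face keeps the clique condition. -/
lemma forest_extend {G : SimpleGraph V} {t : ℕ} {VH S : Finset V}
    (hcyc : (G.induce (↑(VH \ S) : Set V)).IsAcyclic)
    {P D : Finset V} (hPVH : ∀ p ∈ P, p ∈ VH \ S)
    (hD : ¬ ∃ B : Finset V, B ⊆ D ∧ G.IsNClique t B)
    (hsing : ¬ ∃ z ∈ P, ∃ B : Finset V, B ⊆ insert z D ∧ G.IsNClique t B)
    {x : V} (hxP : x ∈ P) {A : Finset V} (hAP : A ⊆ P)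
    (hAcl : ∀ B ⊆ A ∪ D, ¬ G.IsNClique t B)
    (hno : ∀ z ∈ A, ¬ BadPair G t P D x z) :
    ∀ B ⊆ insert x A ∪ D, ¬ G.IsNClique t B := by
  intro B hB hcl
  classical
  set BP : Finset V := B \ D with hBPdef
  have hBPsub : BP ⊆ insert x A := by
    intro b hb
    rw [hBPdef, mem_sdiff] at hb
    rcases mem_union.1 (hB hb.1) with h | h
    · exact h
    · exact absurd h hb.2
  have hBPP : BP ⊆ P := hBPsub.trans (insert_subset_iff.2 ⟨hxP, hAP⟩)
  have hBPB : BP ⊆ B := sdiff_subset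
  by_cases h0 : BP.card = 0
  · rw [Finset.card_eq_zero, hBPdef, Finset.sdiff_eq_empty_iff_subset] at h0
    exact hD ⟨B, h0, hcl⟩
  by_cases h1 : BP.card = 1
  · obtain ⟨z, hz⟩ := Finset.card_eq_one.1 h1
    have hzP : z ∈ P := hBPP (hz ▸ mem_singleton_self z)
    refine hsing ⟨z, hzP, B, ?_, hcl⟩
    intro b hb
    rw [mem_insert]
    by_cases hbD : b ∈ D
    · right; exact hbD
    · have : b ∈ BP := by rw [hBPdef, mem_sdiff]; exact ⟨hb, hbD⟩
      rw [hz, mem_singleton] at this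
      left; exact this
  by_cases h2 : BP.card = 2
  · obtain ⟨z₁, z₂, hzne, hz⟩ := Finset.card_eq_two.1 h2
    have hz₁BP : z₁ ∈ BP := hz ▸ mem_insert_self _ _
    have hz₂BP : z₂ ∈ BP := hz ▸ mem_insert_of_mem (mem_singleton_self _)
    have hsubB : B ⊆ insert z₁ (insert z₂ D) := by
      intro b hb
      by_cases hbD : b ∈ D
      · exact mem_insert_of_mem (mem_insert_of_mem hbD)
      · have : b ∈ BP := by rw [hBPdef, mem_sdiff]; exact ⟨hb, hbD⟩
        rw [hz] at this
        rcases mem_insert.1 this with h | h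
        · exact h ▸ mem_insert_self _ _
        · rw [mem_singleton] at h
          exact h ▸ mem_insert_of_mem (mem_insert_self _ _)
    by_cases hxBP : x ∈ BP
    · -- x is one of z₁, z₂; the other is in A; bad pair
      have hx12 : x = z₁ ∨ x = z₂ := by
        have := hz ▸ hxBP
        rcases mem_insert.1 this with h | h
        · exact Or.inl h
        · exact Or.inr (mem_singleton.1 h)
      rcases hx12 with rfl | rfl
      · have hz₂A : z₂ ∈ A := by
          rcases mem_insert.1 (hBPsub hz₂BP) with h | h
          · exact absurd h.symm hzne
          · exact h
        exact hno z₂ hz₂A ⟨hxP, hBPP hz₂BP, hzne, B, hsubB, hBPB hz₁BP, hBPB hz₂BP, hcl⟩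
      · have hz₁A : z₁ ∈ A := by
          rcases mem_insert.1 (hBPsub hz₁BP) with h | h
          · exact absurd h hzne
          · exact h
        refine hno z₁ hz₁A ⟨hxP, hBPP hz₁BP, hzne.symm, B, ?_, hBPB hz₂BP, hBPB hz₁BP, hcl⟩
        rwa [Finset.insert_comm]
    · -- both z₁, z₂ in A : contradiction with hAcl
      have hsub' : B ⊆ A ∪ D := by
        intro b hb
        by_cases hbD : b ∈ D
        · exact mem_union_right _ hbD
        · have hbBP : b ∈ BP := by rw [hBPdef, mem_sdiff]; exact ⟨hb, hbD⟩
          have hbA : b ∈ A := by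
            rcases mem_insert.1 (hBPsub hbBP) with h | h
            · exact absurd (h ▸ hbBP) hxBP
            · exact h
          exact mem_union_left _ hbA
      exact hAcl B hsub' hcl
  · -- BP has at least 3 elements: triangle in the forest
    have h3 : 3 ≤ BP.card := by omega
    obtain ⟨T, hTsub, hTcard⟩ := Finset.exists_subset_card_eq h3
    obtain ⟨a, b, c, hab, hac, hbc, hT⟩ := Finset.card_eq_three.1 hTcard
    have haB : a ∈ B := hBPB (hTsub (hT ▸ mem_insert_self _ _))
    have hbB : b ∈ B := hBPB (hTsub (hT ▸ mem_insert_of_mem (mem_insert_self _ _)))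
    have hcB : c ∈ B := hBPB (hTsub (hT ▸ mem_insert_of_mem
      (mem_insert_of_mem (mem_singleton_self _))))
    have haP := hBPP (hTsub (hT ▸ mem_insert_self _ _))
    have hbP := hBPP (hTsub (hT ▸ mem_insert_of_mem (mem_insert_self _ _)))
    have hcP := hBPP (hTsub (hT ▸ mem_insert_of_mem
      (mem_insert_of_mem (mem_singleton_self _))))
    exact no_triangle hcyc (hPVH a haP) (hPVH b hbP) (hPVH c hcP)
      (hcl.1 (by exact_mod_cast haB) (by exact_mod_cast hbB) hab)
      (hcl.1 (by exact_mod_cast hbB) (by exact_mod_cast hcB) hbc)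
      (hcl.1 (by exact_mod_cast haB) (by exact_mod_cast hcB) hac)

/-! ### The main induction -/

theorem main_shellable {G : SimpleGraph V} {t : ℕ} {VH S : Finset V} {K : V → Finset V}
    (hG : IsCliqueAttachment G VH S K t) (ht : 2 ≤ t)
    (hcyc : (G.induce (↑(VH \ S) : Set V)).IsAcyclic) :
    ∀ (n : ℕ) (P D : Finset V), P.card ≤ n → Disjoint P D →
      (∀ v ∈ S, v ∈ P → t - 1 ≤ (((K v).erase v) ∩ (P ∪ D)).card) →
      IsShellable (genC G t P D) := by
  intro n
  induction n with
  | zero =>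
    intro P D hcard hPD hI1
    have hP : P = ∅ := Finset.card_eq_zero.1 (Nat.le_zero.1 hcard)
    subst hP
    by_cases hD : ∃ B : Finset V, B ⊆ D ∧ G.IsNClique t B
    · refine isShellable_empty _ ?_
      ext A
      simp only [genC, Set.mem_setOf_eq, Set.mem_empty_iff_false, iff_false, not_and]
      intro hA hcl
      obtain ⟨B, hB1, hB2⟩ := hD
      exact hcl B (hB1.trans subset_union_right) hB2
    · refine isShellable_single _ ?_
      ext A
      simp only [genC, Set.mem_setOf_eq, Set.mem_singleton_iff]
      constructor
      · rintro ⟨h1, _⟩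
        exact subset_empty.1 h1
      · rintro rfl
        refine ⟨Subset.rfl, ?_⟩
        intro B hB hcl
        exact hD ⟨B, by rwa [empty_union] at hB, hcl⟩
  | succ n IH =>
    intro P D hcard hPD hI1
    by_cases hcle : P.card ≤ n
    · exact IH P D hcle hPD hI1
    have hPcard : P.card = n + 1 := by omega
    by_cases hSP : ∃ v ∈ S, v ∈ P
    · -- Case 1: shed an S-vertex
      obtain ⟨v, hvS, hvP⟩ := hSP
      have hPD' : Disjoint (P.erase v) D := disjoint_of_subset_left (erase_subset _ _) hPD
      have hPDuni : P.erase v ∪ insert v D = P ∪ D := by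
        rw [union_insert, ← insert_union, insert_erase hvP]
      have hKv : ∀ u ∈ S, u ≠ v → v ∉ (K u).erase u := by
        intro u huS huv hvmem
        exact (Finset.disjoint_left.1 (hG.pairwise_disjoint u huS v hvS huv)
          (mem_of_mem_erase hvmem)) (hG.mem_self v hvS)
      have hI1del : ∀ u ∈ S, u ∈ P.erase v →
          t - 1 ≤ (((K u).erase u) ∩ (P.erase v ∪ D)).card := by
        intro u huS huP
        have huv : u ≠ v := ne_of_mem_erase huP
        have heq : ((K u).erase u) ∩ (P.erase v ∪ D) = ((K u).erase u) ∩ (P ∪ D) := by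
          ext a
          simp only [mem_inter, mem_union, mem_erase]
          constructor
          · rintro ⟨h1, h2⟩
            refine ⟨h1, ?_⟩
            rcases h2 with ⟨_, h⟩ | h
            · exact Or.inl h
            · exact Or.inr h
          · rintro ⟨h1, h2⟩
            refine ⟨h1, ?_⟩
            rcases h2 with h | h
            · left
              refine ⟨?_, h⟩
              rintro rfl
              exact hKv u huS huv (mem_erase.2 h1)
            · exact Or.inr h
        rw [heq]
        exact hI1 u huS (mem_of_mem_erase huP)
      have hI1lnk : ∀ u ∈ S, u ∈ P.erase v →
          t - 1 ≤ (((K u).erase u) ∩ (P.erase v ∪ insert v D)).card := by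
        intro u huS huP
        rw [hPDuni]
        exact hI1 u huS (mem_of_mem_erase huP)
      refine isShellable_shed _ v (genC_dc G t P D) ?_ ?_ ?_
      · rw [genC_del]
        exact keyfacet hG ht hPD hvS hvP (hG.mem_self v hvS) (hI1 v hvS hvP)
          (fun u hu _ => hG.new_vertices v hvS u (mem_of_mem_erase hu) (ne_of_mem_erase hu))
      · rw [genC_del]
        exact IH (P.erase v) D (by rw [card_erase_of_mem hvP]; omega) hPD' hI1del
      · rw [genC_lnk G t P D hvP]
        refine IH (P.erase v) (insert v D) (by rw [card_erase_of_mem hvP]; omega) ?_ hI1lnk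
        rw [Finset.disjoint_insert_right]
        exact ⟨notMem_erase _ _, hPD'⟩
    · push_neg at hSP
      by_cases hW : ∃ v ∈ S, ∃ w ∈ (K v).erase v, w ∈ P
      · -- Case 2: a new vertex of an attached clique remains in P
        obtain ⟨v, hvS, w, hwKe, hwP⟩ := hW
        have hwK : w ∈ K v := mem_of_mem_erase hwKe
        have hwv : w ≠ v := ne_of_mem_erase hwKe
        have hwVH : w ∉ VH := hG.new_vertices v hvS w hwK hwv
        have hvP : v ∉ P := hSP v hvS
        have hPD' : Disjoint (P.erase w) D := disjoint_of_subset_left (erase_subset _ _) hPD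
        have hI1' : ∀ u ∈ S, u ∈ P.erase w →
            t - 1 ≤ (((K u).erase u) ∩ (P.erase w ∪ D)).card :=
          fun u huS huP => absurd (mem_of_mem_erase huP) (hSP u huS)
        have hI1'' : ∀ u ∈ S, u ∈ P.erase w →
            t - 1 ≤ (((K u).erase u) ∩ (P.erase w ∪ insert w D)).card :=
          fun u huS huP => absurd (mem_of_mem_erase huP) (hSP u huS)
        have hdisj2 : Disjoint (P.erase w) (insert w D) := by
          rw [Finset.disjoint_insert_right]
          exact ⟨notMem_erase _ _, hPD'⟩
        by_cases hbig2 : t ≤ ((K v) ∩ (P ∪ D)).card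
        · -- shed w
          refine isShellable_shed _ w (genC_dc G t P D) ?_ ?_ ?_
          · rw [genC_del]
            refine keyfacet hG ht hPD hvS hwP hwK ?_ ?_
            · have heq : ((K v).erase w) ∩ (P ∪ D) = ((K v) ∩ (P ∪ D)).erase w :=
                Finset.erase_inter _ _ _
              rw [heq]
              have := Finset.pred_card_le_card_erase
                (s := (K v) ∩ (P ∪ D)) (a := w)
              omega
            · intro u hu huP
              have huv : u ≠ v := fun h => hvP (h ▸ huP)
              exact hG.new_vertices v hvS u (mem_of_mem_erase hu) huv
          · rw [genC_del]
            exact IH (P.erase w) D (by rw [card_erase_of_mem hwP]; omega) hPD' hI1'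
          · rw [genC_lnk G t P D hwP]
            exact IH (P.erase w) (insert w D) (by rw [card_erase_of_mem hwP]; omega)
              hdisj2 hI1''
        · -- cone over w
          push_neg at hbig2
          refine isShellable_cone _ w ?_ ?_
          · rintro A ⟨hAP, hAcl⟩
            refine ⟨insert_subset_iff.2 ⟨hwP, hAP⟩, ?_⟩
            intro B hB hcl
            by_cases hwB : w ∈ B
            · have hBsub : B ⊆ (K v) ∩ (P ∪ D) := by
                intro b hbB
                rw [mem_inter]
                by_cases hbw : b = w
                · subst hbw
                  exact ⟨hwK, mem_union_left _ hwP⟩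
                · have hadj : G.Adj w b :=
                    hcl.1 (by exact_mod_cast hwB) (by exact_mod_cast hbB) (Ne.symm hbw)
                  have hbK : b ∈ K v := ((hG.adj_new v hvS w hwK hwVH b).1 hadj).1
                  have hbP : b ∈ P ∪ D := by
                    rcases mem_union.1 (hB hbB) with h | h
                    · rcases mem_insert.1 h with h' | h'
                      · exact absurd h' hbw
                      · exact mem_union_left _ (hAP h')
                    · exact mem_union_right _ h
                  exact ⟨hbK, hbP⟩
              have h1 := card_le_card hBsub
              have h2 := hcl.2
              omega
            · refine hAcl B ?_ hcl
              intro b hbB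
              rcases mem_union.1 (hB hbB) with h | h
              · rcases mem_insert.1 h with h' | h'
                · exact absurd (h' ▸ hbB) hwB
                · exact mem_union_left _ h'
              · exact mem_union_right _ h
          · rw [genC_lnk G t P D hwP]
            exact IH (P.erase w) (insert w D) (by rw [card_erase_of_mem hwP]; omega)
              hdisj2 hI1''
      · -- Case 3: P is contained in the forest part
        push_neg at hW
        have hPVH : ∀ p ∈ P, p ∈ VH \ S := by
          intro p hp
          rw [mem_sdiff]
          rcases hG.cover p with h | ⟨v, hvS, hpK⟩
          · exact ⟨h, fun hpS => hSP p hpS hp⟩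
          · by_cases hpv : p = v
            · subst hpv
              exact absurd hp (hSP p hvS)
            · exact absurd hp (hW v hvS p (mem_erase.2 ⟨hpv, hpK⟩))
        by_cases hD : ∃ B : Finset V, B ⊆ D ∧ G.IsNClique t B
        · refine isShellable_empty _ ?_
          ext A
          simp only [genC, Set.mem_setOf_eq, Set.mem_empty_iff_false, iff_false, not_and]
          intro hA hcl
          obtain ⟨B, hB1, hB2⟩ := hD
          exact hcl B (hB1.trans subset_union_right) hB2
        by_cases hsing : ∃ z ∈ P, ∃ B : Finset V, B ⊆ insert z D ∧ G.IsNClique t B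
        · -- a bad singleton: the complexes coincide
          obtain ⟨z, hzP, hBs⟩ := hsing
          have heq : genC G t P D = genC G t (P.erase z) D := by
            ext A
            simp only [genC, Set.mem_setOf_eq]
            constructor
            · rintro ⟨h1, h2⟩
              have hzA : z ∉ A := by
                intro hzA
                obtain ⟨B, hB1, hB2⟩ := hBs
                refine h2 B ?_ hB2
                refine hB1.trans ?_
                intro b hb
                rcases mem_insert.1 hb with rfl | h
                · exact mem_union_left _ hzA
                · exact mem_union_right _ h
              exact ⟨subset_erase.2 ⟨h1, hzA⟩, h2⟩
            · rintro ⟨h1, h2⟩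
              exact ⟨(subset_erase.1 h1).1, h2⟩
          rw [heq]
          exact IH (P.erase z) D (by rw [card_erase_of_mem hzP]; omega)
            (disjoint_of_subset_left (erase_subset _ _) hPD)
            (fun u huS huP => absurd (mem_of_mem_erase huP) (hSP u huS))
        by_cases hbp : ∃ x y, BadPair G t P D x y
        · -- the bad-pair graph is an acyclic graph with an edge: take a leaf
          obtain ⟨x₀, y₀, hxy₀⟩ := hbp
          let F₀ : SimpleGraph (↑(VH \ S) : Set V) :=
            { Adj := fun p q => BadPair G t P D p.1 q.1
              symm := ⟨fun p q h => h.symm⟩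
              loopless := ⟨fun p h => h.2.2.1 rfl⟩ }
          have hF₀le : F₀ ≤ G.induce (↑(VH \ S) : Set V) := by
            intro p q h
            exact h.adj
          have hF₀acyc : F₀.IsAcyclic := by
            intro u c hc
            exact hcyc (c.mapLe hF₀le) (hc.mapLe hF₀le)
          have hx₀ : x₀ ∈ (↑(VH \ S) : Set V) := by exact_mod_cast hPVH x₀ hxy₀.1
          have hy₀ : y₀ ∈ (↑(VH \ S) : Set V) := by exact_mod_cast hPVH y₀ hxy₀.2.1
          obtain ⟨xh, yh, hxy, huniq⟩ :=
            exists_leaf hF₀acyc (show F₀.Adj ⟨x₀, hx₀⟩ ⟨y₀, hy₀⟩ from hxy₀)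
          have hbpxy : BadPair G t P D xh.1 yh.1 := hxy
          set x := xh.1
          set y := yh.1
          have hxP : x ∈ P := hbpxy.1
          have hyP : y ∈ P := hbpxy.2.1
          have hxyne : x ≠ y := hbpxy.2.2.1
          have huniq' : ∀ z ∈ P, BadPair G t P D x z → z = y := by
            intro z hzP hbz
            have hz : z ∈ (↑(VH \ S) : Set V) := by exact_mod_cast hPVH z hzP
            exact congrArg Subtype.val (huniq ⟨z, hz⟩ hbz)
          have hPD' : Disjoint (P.erase y) D := disjoint_of_subset_left (erase_subset _ _) hPD
          have hdisj2 : Disjoint (P.erase y) (insert y D) := by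
            rw [Finset.disjoint_insert_right]
            exact ⟨notMem_erase _ _, hPD'⟩
          refine isShellable_shed _ y (genC_dc G t P D) ?_ ?_ ?_
          · rw [genC_del]
            rintro A ⟨⟨hAP, hAcl⟩, hAmax⟩
            have hxA : x ∈ A := by
              by_contra hxA
              have hins : insert x A ∈ genC G t (P.erase y) D := by
                refine ⟨insert_subset_iff.2 ⟨mem_erase.2 ⟨hxyne, hxP⟩, hAP⟩, ?_⟩
                refine forest_extend hcyc hPVH hD hsing hxP
                  (hAP.trans (erase_subset _ _)) hAcl ?_
                intro z hzA hbz
                have hzy := huniq' z (mem_of_mem_erase (hAP hzA)) hbz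
                exact (ne_of_mem_erase (hAP hzA)) hzy
              have h6 := hAmax _ hins (subset_insert x A)
              exact hxA (h6 ▸ mem_insert_self x A)
            refine ⟨⟨hAP.trans (erase_subset _ _), hAcl⟩, ?_⟩
            intro B hB hABsub
            by_cases hyB : y ∈ B
            · exfalso
              obtain ⟨_, _, _, Bc, hBc1, hBc2, hBc3, hBc4⟩ := hbpxy
              refine hB.2 Bc ?_ hBc4
              refine hBc1.trans ?_
              intro b hb
              rcases mem_insert.1 hb with rfl | hb'
              · exact mem_union_left _ (hABsub hxA)
              · rcases mem_insert.1 hb' with rfl | hb''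
                · exact mem_union_left _ hyB
                · exact mem_union_right _ hb''
            · exact hAmax B ⟨subset_erase.2 ⟨hB.1, hyB⟩, hB.2⟩ hABsub
          · rw [genC_del]
            exact IH (P.erase y) D (by rw [card_erase_of_mem hyP]; omega) hPD'
              (fun u huS huP => absurd (mem_of_mem_erase huP) (hSP u huS))
          · rw [genC_lnk G t P D hyP]
            exact IH (P.erase y) (insert y D) (by rw [card_erase_of_mem hyP]; omega) hdisj2
              (fun u huS huP => absurd (mem_of_mem_erase huP) (hSP u huS))
        · -- no bad pairs: cone over any vertex of P
          have hPne : P.Nonempty := Finset.card_pos.1 (by omega)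
          obtain ⟨x, hxP⟩ := hPne
          push_neg at hbp
          refine isShellable_cone _ x ?_ ?_
          · rintro A ⟨hAP, hAcl⟩
            refine ⟨insert_subset_iff.2 ⟨hxP, hAP⟩, ?_⟩
            exact forest_extend hcyc hPVH hD hsing hxP hAP hAcl (fun z _ h => hbp x z h)
          · rw [genC_lnk G t P D hxP]
            refine IH (P.erase x) (insert x D) (by rw [card_erase_of_mem hxP]; omega) ?_
              (fun u huS huP => absurd (mem_of_mem_erase huP) (hSP u huS))
            rw [Finset.disjoint_insert_right]
            exact ⟨notMem_erase _ _, disjoint_of_subset_left (erase_subset _ _) hPD⟩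

end Statement8Aux

/-- for `G = Cl(H, S, t)` where `S` is a cycle cover of `H`
(equivalently, the induced subgraph `H ∖ S` is a forest), the complex `CF_t(G)` is
shellable. -/
theorem statement8 {V : Type*} [Fintype V] [DecidableEq V]
    (t : ℕ) (ht : 2 ≤ t) (G : SimpleGraph V) (VH S : Finset V) (K : V → Finset V)
    (hG : IsCliqueAttachment G VH S K t)
    (hcyclecover : (G.induce (↑(VH \ S) : Set V)).IsAcyclic) :
    IsShellable (cliqueFreeComplex G t) := by
  have heq : Statement8Aux.genC G t Finset.univ ∅ = cliqueFreeComplex G t := by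
    ext A
    simp only [Statement8Aux.genC, cliqueFreeComplex, Set.mem_setOf_eq,
      Finset.union_empty, Finset.subset_univ, true_and]
  rw [← heq]
  refine Statement8Aux.main_shellable hG ht hcyclecover Finset.univ.card Finset.univ ∅
    le_rfl (Finset.disjoint_empty_right _) ?_
  intro v hvS _
  rw [Finset.union_empty, Finset.inter_univ, Finset.card_erase_of_mem (hG.mem_self v hvS)]
  have := hG.card_ge v hvS
  omega
end

section
/- Let t ≥ 2 be an integer, let H be a finite simple graph, let S ⊆ V(H) with |S| ≥ |V(H)| − 3, and let G = Cl(H, S, t) be a clique attachment of H along S. Then the t-clique-free complex CF_t(G) is shellable. -/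
set_option linter.unusedSectionVars false
set_option linter.unusedVariables false

namespace S10Aux

open Finset

variable {V : Type*} [Fintype V] [DecidableEq V]

/-- index of a vertex -/
noncomputable def idx (x : V) : ℕ := (Fintype.equivFin V x : ℕ)

lemma idx_inj : Function.Injective (idx (V := V)) :=
  fun a b h => (Fintype.equivFin V).injective (Fin.ext h)

/-- binary-encoding value of a finite set -/
noncomputable def Nval (X : Finset V) : ℕ := ∑ x ∈ X, 2 ^ idx x

lemma sum_range_pow (n : ℕ) : (∑ i ∈ Finset.range n, 2 ^ i) + 1 = 2 ^ n := by
  induction n with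
  | zero => simp
  | succ n ih => rw [Finset.sum_range_succ, pow_succ]; omega

lemma Nval_lt (X : Finset V) : Nval X < 2 ^ Fintype.card V := by
  have h1 : Nval X ≤ ∑ x ∈ Finset.univ, 2 ^ idx x :=
    Finset.sum_le_sum_of_subset (Finset.subset_univ X)
  have h2 : ∑ x : V, 2 ^ idx x = ∑ i ∈ Finset.range (Fintype.card V), 2 ^ i := by
    rw [← Fin.sum_univ_eq_sum_range (fun i => 2 ^ i) (Fintype.card V)]
    exact Fintype.sum_equiv (Fintype.equivFin V) _ _ (fun x => rfl)
  have h3 := sum_range_pow (Fintype.card V)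
  rw [h2] at h1; omega

lemma Nval_lt_pow {X : Finset V} {c : ℕ} (h : ∀ x ∈ X, idx x < c) : Nval X < 2 ^ c := by
  have h1 : Nval X = ∑ k ∈ X.image idx, 2 ^ k :=
    (Finset.sum_image (fun a _ b _ hab => idx_inj hab)).symm
  have h2 : X.image idx ⊆ Finset.range c := by
    intro k hk
    obtain ⟨x, hx, rfl⟩ := Finset.mem_image.mp hk
    exact Finset.mem_range.mpr (h x hx)
  have h3 : ∑ k ∈ X.image idx, 2 ^ k ≤ ∑ k ∈ Finset.range c, 2 ^ k :=
    Finset.sum_le_sum_of_subset h2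
  have h4 := sum_range_pow c
  omega

lemma Nval_lt_Nval {A B : Finset V} {m : V} (hmB : m ∈ B) (hmA : m ∉ A)
    (h : ∀ y : V, idx m < idx y → (y ∈ A ↔ y ∈ B)) : Nval A < Nval B := by
  classical
  have hsplit : ∀ X : Finset V,
      Nval X = Nval (X.filter (fun y => idx m < idx y)) +
        Nval (X.filter (fun y => ¬ idx m < idx y)) :=
    fun X => (Finset.sum_filter_add_sum_filter_not X _ _).symm
  have hhi : A.filter (fun y => idx m < idx y) = B.filter (fun y => idx m < idx y) := by
    ext y
    simp only [Finset.mem_filter]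
    constructor
    · rintro ⟨h1, h2⟩; exact ⟨(h y h2).mp h1, h2⟩
    · rintro ⟨h1, h2⟩; exact ⟨(h y h2).mpr h1, h2⟩
  have hAlo : Nval (A.filter fun y => ¬ idx m < idx y) < 2 ^ idx m := by
    apply Nval_lt_pow
    intro x hx
    rw [Finset.mem_filter] at hx
    have hxm : x ≠ m := fun e => hmA (e ▸ hx.1)
    have h1 : idx x ≠ idx m := fun e => hxm (idx_inj e)
    have h2 := hx.2
    omega
  have hBlo : 2 ^ idx m ≤ Nval (B.filter fun y => ¬ idx m < idx y) := by
    apply Finset.single_le_sum (f := fun x => 2 ^ idx x) (fun _ _ => Nat.zero_le _)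
    simp [Finset.mem_filter, hmB]
  rw [hsplit A, hsplit B, hhi]
  omega

lemma Nval_injective : Function.Injective (Nval (V := V)) := by
  intro A B h
  by_contra hne
  have hne' : ((A \ B) ∪ (B \ A)).Nonempty := by
    rw [Finset.nonempty_iff_ne_empty]
    intro he
    apply hne
    have h1 : A \ B = ∅ := Finset.union_eq_empty.mp he |>.1
    have h2 : B \ A = ∅ := Finset.union_eq_empty.mp he |>.2
    exact Finset.Subset.antisymm (Finset.sdiff_eq_empty_iff_subset.mp h1)
      (Finset.sdiff_eq_empty_iff_subset.mp h2)
  obtain ⟨m, hm, hmax⟩ := Finset.exists_max_image _ idx hne'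
  have hagree : ∀ y, idx m < idx y → (y ∈ A ↔ y ∈ B) := by
    intro y hy
    by_contra hc
    have hyD : y ∈ (A \ B) ∪ (B \ A) := by
      simp only [Finset.mem_union, Finset.mem_sdiff]
      tauto
    exact absurd (hmax y hyD) (by omega)
  rcases Finset.mem_union.mp hm with h1 | h1 <;> rw [Finset.mem_sdiff] at h1
  · exact absurd h (Nval_lt_Nval h1.1 h1.2 (fun y hy => (hagree y hy).symm)).ne'
  · exact absurd h (Nval_lt_Nval h1.1 h1.2 hagree).ne

/-! digit arithmetic -/

lemma dlt {M a b c d : ℕ} (hb : b < M) (h : a < c) : a * M + b < c * M + d := by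
  have h2 : (a + 1) * M ≤ c * M := Nat.mul_le_mul_right M h
  rw [add_mul, one_mul] at h2
  have : 0 ≤ d := Nat.zero_le d
  omega

lemma dle {M a b c d : ℕ} (hb : b < M) (hd : d < M) (h : a * M + b ≤ c * M + d) : a ≤ c := by
  by_contra hc
  push_neg at hc
  exact absurd h (Nat.not_le.mpr (dlt hd hc))

lemma deq {M a b c d : ℕ} (hb : b < M) (hd : d < M) (h : a * M + b = c * M + d) :
    a = c ∧ b = d := by
  have h1 : a ≤ c := dle hb hd h.le
  have h2 : c ≤ a := dle hd hb h.ge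
  have hac : a = c := le_antisymm h1 h2
  subst hac
  exact ⟨rfl, by omega⟩

/-- the key weight function: lexicographic digits
 (|F∩S| asc, N(F∩S), |T|-desc via n - |F∩T|, N(F∩T), N(F\VH)) -/
noncomputable def kap (VH S F : Finset V) : ℕ :=
  ((((F ∩ S).card * 2 ^ Fintype.card V + Nval (F ∩ S)) * 2 ^ Fintype.card V
      + (Fintype.card V - (F ∩ (VH \ S)).card)) * 2 ^ Fintype.card V
      + Nval (F ∩ (VH \ S))) * 2 ^ Fintype.card V + Nval (F \ VH)

lemma card_lt_pow (X : Finset V) : X.card < 2 ^ Fintype.card V :=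
  lt_of_le_of_lt (le_trans (Finset.card_le_card (Finset.subset_univ X))
    (le_of_eq Finset.card_univ)) Nat.lt_two_pow_self

lemma sub_lt_pow (c : ℕ) : Fintype.card V - c < 2 ^ Fintype.card V :=
  lt_of_le_of_lt (Nat.sub_le _ _) Nat.lt_two_pow_self

lemma decomp (VH S : Finset V) (F : Finset V) :
    F = (F ∩ S) ∪ (F ∩ (VH \ S)) ∪ (F \ VH) := by
  ext y
  simp only [Finset.mem_union, Finset.mem_inter, Finset.mem_sdiff]
  by_cases hv : y ∈ VH <;> by_cases hs : y ∈ S <;> tauto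

lemma kap_injective (VH S : Finset V) : Function.Injective (kap VH S) := by
  intro F F' h
  unfold kap at h
  have e1 := deq (Nval_lt _) (Nval_lt _) h
  have e2 := deq (Nval_lt _) (Nval_lt _) e1.1
  have e3 := deq (sub_lt_pow _) (sub_lt_pow _) e2.1
  have e4 := deq (Nval_lt _) (Nval_lt _) e3.1
  have hA : F ∩ S = F' ∩ S := Nval_injective e4.2
  have hC : F ∩ (VH \ S) = F' ∩ (VH \ S) := Nval_injective e2.2
  have hP : F \ VH = F' \ VH := Nval_injective e1.2
  rw [decomp VH S F, decomp VH S F', hA, hC, hP]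

lemma kap_lt_card {VH S F F' : Finset V} (h : (F ∩ S).card < (F' ∩ S).card) :
    kap VH S F < kap VH S F' := by
  unfold kap
  exact dlt (Nval_lt _) (dlt (Nval_lt _) (dlt (sub_lt_pow _) (dlt (Nval_lt _) h)))

lemma kap_lt_T {VH S F F' : Finset V} (hA : F ∩ S = F' ∩ S)
    (h : (Fintype.card V - (F ∩ (VH \ S)).card < Fintype.card V - (F' ∩ (VH \ S)).card) ∨
      (Fintype.card V - (F ∩ (VH \ S)).card = Fintype.card V - (F' ∩ (VH \ S)).card ∧
        Nval (F ∩ (VH \ S)) < Nval (F' ∩ (VH \ S)))) :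
    kap VH S F < kap VH S F' := by
  unfold kap
  rw [hA]
  rcases h with h | ⟨h1, h2⟩
  · exact dlt (Nval_lt _) (dlt (Nval_lt _) (Nat.add_lt_add_left h _))
  · rw [h1]
    exact dlt (Nval_lt _) (Nat.add_lt_add_left h2 _)

lemma kap_lt_P {VH S F F' : Finset V} (hA : F ∩ S = F' ∩ S)
    (hC : F ∩ (VH \ S) = F' ∩ (VH \ S)) (h : Nval (F \ VH) < Nval (F' \ VH)) :
    kap VH S F < kap VH S F' := by
  unfold kap
  rw [hA, hC]
  exact Nat.add_lt_add_left h _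

lemma kap_card_le {VH S F F' : Finset V} (h : kap VH S F < kap VH S F') :
    (F ∩ S).card ≤ (F' ∩ S).card := by
  unfold kap at h
  have e1 := dle (Nval_lt _) (Nval_lt _) h.le
  have e2 := dle (Nval_lt _) (Nval_lt _) e1
  have e3 := dle (sub_lt_pow _) (sub_lt_pow _) e2
  exact dle (Nval_lt _) (Nval_lt _) e3

lemma kap_extract {VH S F F' : Finset V} (hA : F ∩ S = F' ∩ S)
    (h : kap VH S F < kap VH S F') :
    (Fintype.card V - (F ∩ (VH \ S)).card ≤ Fintype.card V - (F' ∩ (VH \ S)).card) ∧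
    (Fintype.card V - (F ∩ (VH \ S)).card = Fintype.card V - (F' ∩ (VH \ S)).card →
      Nval (F ∩ (VH \ S)) ≤ Nval (F' ∩ (VH \ S))) ∧
    (F ∩ (VH \ S) = F' ∩ (VH \ S) → Nval (F \ VH) < Nval (F' \ VH)) := by
  unfold kap at h
  rw [hA] at h
  set E := ((F' ∩ S).card * 2 ^ Fintype.card V + Nval (F' ∩ S)) with hE
  have e1 := dle (Nval_lt _) (Nval_lt _) h.le
  have e2 := dle (Nval_lt _) (Nval_lt _) e1
  have e3 : Fintype.card V - (F ∩ (VH \ S)).card ≤ Fintype.card V - (F' ∩ (VH \ S)).card := by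
    set X := E * 2 ^ Fintype.card V with hX
    omega
  refine ⟨e3, ?_, ?_⟩
  · intro heq
    rw [heq] at e1
    set X := (E * 2 ^ Fintype.card V + (Fintype.card V - (F' ∩ (VH \ S)).card)) *
      2 ^ Fintype.card V with hX
    omega
  · intro heq
    rw [heq] at h
    set X := ((E * 2 ^ Fintype.card V + (Fintype.card V - (F' ∩ (VH \ S)).card)) *
      2 ^ Fintype.card V + Nval (F' ∩ (VH \ S))) * 2 ^ Fintype.card V with hX
    omega

end S10Aux
namespace S10Aux

open Finset

variable {V : Type*} [Fintype V] [DecidableEq V]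
variable {t : ℕ} {G : SimpleGraph V} {VH S : Finset V} {K : V → Finset V}

lemma not_mem_cfc {A B : Finset V} (hBA : B ⊆ A) (h : G.IsNClique t B) :
    A ∉ cliqueFreeComplex G t := fun hA => hA B hBA h

lemma cfc_down {A B : Finset V} (hA : A ∈ cliqueFreeComplex G t) (hBA : B ⊆ A) :
    B ∈ cliqueFreeComplex G t := fun C hC hcl => hA C (hC.trans hBA) hcl

lemma clique_block (hG : IsCliqueAttachment G VH S K t) {B : Finset V}
    (hcl : G.IsNClique t B) {w : V} (hw : w ∈ B) (hwVH : w ∉ VH) :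
    ∃ v ∈ S, B ⊆ K v := by
  rcases hG.cover w with h | ⟨v, hv, hwK⟩
  · exact absurd h hwVH
  refine ⟨v, hv, fun u hu => ?_⟩
  rcases eq_or_ne u w with rfl | hne
  · exact hwK
  · have hadj : G.Adj w u := hcl.1 (Finset.mem_coe.mpr hw) (Finset.mem_coe.mpr hu) hne.symm
    exact ((hG.adj_new v hv w hwK hwVH u).mp hadj).1

lemma face_iff (hG : IsCliqueAttachment G VH S K t) {A : Finset V} :
    A ∈ cliqueFreeComplex G t ↔
      (∀ B ⊆ A ∩ VH, ¬ G.IsNClique t B) ∧ ∀ v ∈ S, (A ∩ K v).card < t := by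
  constructor
  · intro hA
    refine ⟨fun B hB => hA B (hB.trans Finset.inter_subset_left), ?_⟩
    intro v hv
    by_contra hc
    push_neg at hc
    obtain ⟨B, hBsub, hBcard⟩ := Finset.exists_subset_card_eq hc
    refine hA B (hBsub.trans Finset.inter_subset_left) ⟨?_, hBcard⟩
    exact (hG.clique v hv).subset
      (Finset.coe_subset.mpr (hBsub.trans Finset.inter_subset_right))
  · rintro ⟨h1, h2⟩ B hBA hcl
    by_cases hBVH : ∀ x ∈ B, x ∈ VH
    · exact h1 B (fun x hx => Finset.mem_inter.mpr ⟨hBA hx, hBVH x hx⟩) hcl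
    · push_neg at hBVH
      obtain ⟨w, hwB, hwVH⟩ := hBVH
      obtain ⟨v, hv, hBK⟩ := clique_block hG hcl hwB hwVH
      have hle : t ≤ (A ∩ K v).card := by
        rw [← hcl.2]
        exact Finset.card_le_card (fun x hx => Finset.mem_inter.mpr ⟨hBA hx, hBK hx⟩)
      exact absurd (h2 v hv) (not_lt.mpr hle)

lemma clique_in_VH (hG : IsCliqueAttachment G VH S K t) {F B : Finset V}
    (hbl : ∀ v ∈ S, (F ∩ K v).card + 1 = t)
    {x : V} (hx : x ∈ VH) (hxS : x ∉ S) (hB : B ⊆ insert x F) (hcl : G.IsNClique t B) :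
    B ⊆ insert x (F ∩ VH) := by
  have hBVH : ∀ y ∈ B, y ∈ VH := by
    by_contra hc
    push_neg at hc
    obtain ⟨w, hwB, hwVH⟩ := hc
    obtain ⟨v, hv, hBK⟩ := clique_block hG hcl hwB hwVH
    have hsub : B ⊆ F ∩ K v := by
      intro y hy
      have hyK := hBK hy
      rcases Finset.mem_insert.mp (hB hy) with rfl | hyF
      · rcases eq_or_ne y v with rfl | hne
        · exact absurd hv hxS
        · exact absurd hx (hG.new_vertices v hv y hyK hne)
      · exact Finset.mem_inter.mpr ⟨hyF, hyK⟩
    have h1 := Finset.card_le_card hsub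
    have h2 := hbl v hv
    have h3 := hcl.2
    omega
  intro y hy
  rcases Finset.mem_insert.mp (hB hy) with rfl | hyF
  · exact Finset.mem_insert_self _ _
  · exact Finset.mem_insert_of_mem (Finset.mem_inter.mpr ⟨hyF, hBVH y hy⟩)

lemma facet_insert_not_mem {Δ : Set (Finset V)} {F : Finset V} (hF : F ∈ Facets Δ) {x : V}
    (hx : x ∉ F) : insert x F ∉ Δ := by
  intro h
  have := hF.2 _ h (Finset.subset_insert _ _)
  exact hx (this ▸ Finset.mem_insert_self x F)

lemma facet_blocks (hG : IsCliqueAttachment G VH S K t) (ht : 2 ≤ t) {F : Finset V}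
    (hF : F ∈ Facets (cliqueFreeComplex G t)) :
    ∀ v ∈ S, (F ∩ K v).card + 1 = t := by
  intro v hv
  have hlt := ((face_iff hG).mp hF.1).2 v hv
  by_contra hne
  have hle : (F ∩ K v).card + 2 ≤ t := by omega
  have hcard : ((K v).erase v).card + 1 = (K v).card :=
    Finset.card_erase_add_one (hG.mem_self v hv)
  have hKt := hG.card_ge v hv
  have hnsub : ¬ (K v).erase v ⊆ F := by
    intro hsub
    have hsub2 : (K v).erase v ⊆ F ∩ K v :=
      fun x hx => Finset.mem_inter.mpr ⟨hsub hx, Finset.mem_of_mem_erase hx⟩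
    have := Finset.card_le_card hsub2
    omega
  obtain ⟨w, hwK, hwF⟩ := Finset.not_subset.mp hnsub
  have hwVH : w ∉ VH :=
    hG.new_vertices v hv w (Finset.mem_of_mem_erase hwK) (Finset.ne_of_mem_erase hwK)
  have hins : insert w F ∈ cliqueFreeComplex G t := by
    rw [face_iff hG]
    constructor
    · intro B hB
      have he : insert w F ∩ VH = F ∩ VH := Finset.insert_inter_of_notMem hwVH
      exact ((face_iff hG).mp hF.1).1 B (he ▸ hB)
    · intro u hu
      by_cases huv : u = v
      · subst huv
        rw [Finset.insert_inter_of_mem (Finset.mem_of_mem_erase hwK),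
          Finset.card_insert_of_notMem (fun hc => hwF (Finset.mem_inter.mp hc).1)]
        omega
      · have hwKu : w ∉ K u := fun hc =>
          Finset.disjoint_left.mp (hG.pairwise_disjoint u hu v hv huv) hc
            (Finset.mem_of_mem_erase hwK)
        rw [Finset.insert_inter_of_notMem hwKu]
        exact ((face_iff hG).mp hF.1).2 u hu
  exact facet_insert_not_mem hF hwF hins

lemma facet_of (hG : IsCliqueAttachment G VH S K t) {F : Finset V}
    (hF : F ∈ cliqueFreeComplex G t)
    (hbl : ∀ v ∈ S, (F ∩ K v).card + 1 = t)
    (hT : ∀ x ∈ VH, x ∉ S → x ∉ F → insert x F ∉ cliqueFreeComplex G t) :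
    F ∈ Facets (cliqueFreeComplex G t) := by
  refine ⟨hF, fun A hA hFA => ?_⟩
  by_contra hne
  obtain ⟨y, hyA, hyF⟩ := Finset.exists_of_ssubset (hFA.ssubset_of_ne hne)
  have hyΔ : insert y F ∈ cliqueFreeComplex G t :=
    cfc_down hA (Finset.insert_subset hyA hFA)
  by_cases hyVH : y ∈ VH
  · by_cases hyS : y ∈ S
    · have h2 := ((face_iff hG).mp hyΔ).2 y hyS
      rw [Finset.insert_inter_of_mem (hG.mem_self y hyS),
        Finset.card_insert_of_notMem (fun hc => hyF (Finset.mem_inter.mp hc).1)] at h2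
      have := hbl y hyS
      omega
    · exact hT y hyVH hyS hyF hyΔ
  · rcases hG.cover y with h | ⟨v, hv, hyK⟩
    · exact hyVH h
    · have h2 := ((face_iff hG).mp hyΔ).2 v hv
      rw [Finset.insert_inter_of_mem hyK,
        Finset.card_insert_of_notMem (fun hc => hyF (Finset.mem_inter.mp hc).1)] at h2
      have := hbl v hv
      omega

lemma Tmax_transfer (hG : IsCliqueAttachment G VH S K t) (ht : 2 ≤ t) {F Fl : Finset V}
    (hF : F ∈ Facets (cliqueFreeComplex G t)) (hFl : Fl ∈ cliqueFreeComplex G t)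
    (hVH : Fl ∩ VH = F ∩ VH) :
    ∀ x ∈ VH, x ∉ S → x ∉ Fl → insert x Fl ∉ cliqueFreeComplex G t := by
  intro x hxVH hxS hxFl hins
  have hxF : x ∉ F := by
    intro hc
    exact hxFl (Finset.mem_of_mem_inter_left (hVH ▸ Finset.mem_inter.mpr ⟨hc, hxVH⟩))
  have hnot := facet_insert_not_mem hF hxF
  obtain ⟨B, hBsub, hcl⟩ : ∃ B, B ⊆ insert x F ∧ G.IsNClique t B := by
    by_contra hc
    push_neg at hc
    exact hnot (fun B hB hcl => hc B hB hcl)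
  have hBVH := clique_in_VH hG (facet_blocks hG ht hF) hxVH hxS hBsub hcl
  refine hins B (hBVH.trans ?_) hcl
  rw [← hVH]
  exact Finset.insert_subset_insert _ Finset.inter_subset_left

end S10Aux
namespace S10Aux

open Finset

variable {V : Type*} [Fintype V] [DecidableEq V]
variable {t : ℕ} {G : SimpleGraph V} {VH S : Finset V} {K : V → Finset V}

lemma case1 (hG : IsCliqueAttachment G VH S K t) (ht : 2 ≤ t)
    {Fi Fj : Finset V} (hFj : Fj ∈ Facets (cliqueFreeComplex G t))
    {u : V} (huFj : u ∈ Fj) (huS : u ∈ S) (hui : u ∉ Fi) :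
    ∃ v, v ∈ Fj ∧ v ∉ Fi ∧ ∃ Fl ∈ Facets (cliqueFreeComplex G t),
      Fj \ Fl = {v} ∧ kap VH S Fl < kap VH S Fj := by
  classical
  have blocksJ := facet_blocks hG ht hFj
  have hbl_u := blocksJ u huS
  have huK : u ∈ K u := hG.mem_self u huS
  have hFjKu : Fj ∩ K u = insert u (Fj ∩ (K u).erase u) := by
    ext z
    simp only [Finset.mem_inter, Finset.mem_insert, Finset.mem_erase]
    constructor
    · rintro ⟨hz1, hz2⟩
      by_cases hzu : z = u
      · exact Or.inl hzu
      · exact Or.inr ⟨hz1, hzu, hz2⟩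
    · rintro (rfl | ⟨hz1, hz2, hz3⟩)
      · exact ⟨huFj, huK⟩
      · exact ⟨hz1, hz3⟩
  have huX : u ∉ Fj ∩ (K u).erase u := by simp
  have hFjX : (Fj ∩ (K u).erase u).card + 2 = t := by
    rw [hFjKu, Finset.card_insert_of_notMem huX] at hbl_u
    omega
  obtain ⟨y, hyX, hyFj⟩ : ∃ y, y ∈ (K u).erase u ∧ y ∉ Fj := by
    have hKt := hG.card_ge u huS
    have hcard : ((K u).erase u).card + 1 = (K u).card := Finset.card_erase_add_one huK
    by_contra hc
    push_neg at hc
    have hsub : (K u).erase u ⊆ Fj ∩ (K u).erase u :=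
      fun z hz => Finset.mem_inter.mpr ⟨hc z hz, hz⟩
    have := Finset.card_le_card hsub
    omega
  have hyK : y ∈ K u := Finset.mem_of_mem_erase hyX
  have hyu : y ≠ u := Finset.ne_of_mem_erase hyX
  have hyVH : y ∉ VH := hG.new_vertices u huS y hyK hyu
  set F' := insert y (Fj.erase u) with hF'
  have huF' : u ∉ F' := by
    simp only [hF', Finset.mem_insert, Finset.mem_erase]
    rintro (rfl | ⟨h1, h2⟩)
    · exact hyu rfl
    · exact h1 rfl
  have hF'VH : F' ∩ VH = (Fj ∩ VH).erase u := by
    ext z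
    simp only [hF', Finset.mem_inter, Finset.mem_insert, Finset.mem_erase]
    constructor
    · rintro ⟨(rfl | ⟨hz1, hz2⟩), hzVH⟩
      · exact absurd hzVH hyVH
      · exact ⟨hz1, hz2, hzVH⟩
    · rintro ⟨hz1, hz2, hzVH⟩
      exact ⟨Or.inr ⟨hz1, hz2⟩, hzVH⟩
  have hF'blocks : ∀ v ∈ S, (F' ∩ K v).card + 1 = t := by
    intro v hv
    by_cases hvu : v = u
    · subst hvu
      have he : F' ∩ K v = insert y ((Fj ∩ K v).erase v) := by
        ext z
        simp only [hF', Finset.mem_inter, Finset.mem_insert, Finset.mem_erase]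
        constructor
        · rintro ⟨(rfl | ⟨hz1, hz2⟩), hzK⟩
          · exact Or.inl rfl
          · exact Or.inr ⟨hz1, hz2, hzK⟩
        · rintro (rfl | ⟨hz1, hz2, hz3⟩)
          · exact ⟨Or.inl rfl, hyK⟩
          · exact ⟨Or.inr ⟨hz1, hz2⟩, hz3⟩
      rw [he]
      have e1 : y ∉ (Fj ∩ K v).erase v :=
        fun hc => hyFj (Finset.mem_inter.mp (Finset.mem_of_mem_erase hc)).1
      rw [Finset.card_insert_of_notMem e1]
      have e2 : v ∈ Fj ∩ K v := Finset.mem_inter.mpr ⟨huFj, huK⟩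
      have e3 := Finset.card_erase_add_one e2
      omega
    · have hyKv : y ∉ K v := fun hc =>
        Finset.disjoint_left.mp (hG.pairwise_disjoint u huS v hv (fun e => hvu e.symm)) hyK hc
      have huKv : u ∉ K v := by
        intro hc
        rcases eq_or_ne u v with rfl | hne
        · exact hvu rfl
        · exact (hG.new_vertices v hv u hc hne) (hG.subset huS)
      have he : F' ∩ K v = Fj ∩ K v := by
        ext z
        simp only [hF', Finset.mem_inter, Finset.mem_insert, Finset.mem_erase]
        constructor
        · rintro ⟨(rfl | ⟨hz1, hz2⟩), hzK⟩
          · exact absurd hzK hyKv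
          · exact ⟨hz2, hzK⟩
        · rintro ⟨hz1, hz2⟩
          exact ⟨Or.inr ⟨fun e => huKv (e ▸ hz2), hz1⟩, hz2⟩
      rw [he]
      exact blocksJ v hv
  have hF'Δ : F' ∈ cliqueFreeComplex G t := by
    rw [face_iff hG]
    refine ⟨?_, fun v hv => by have := hF'blocks v hv; omega⟩
    intro B hB
    refine ((face_iff hG).mp hFj.1).1 B (hB.trans ?_)
    rw [hF'VH]
    exact Finset.erase_subset _ _
  set P := ((VH \ S) \ Fj).powerset.filter (fun E => F' ∪ E ∈ cliqueFreeComplex G t) with hP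
  have hPne : P.Nonempty := ⟨∅, by
    rw [hP, Finset.mem_filter, Finset.mem_powerset]
    exact ⟨Finset.empty_subset _, by rwa [Finset.union_empty]⟩⟩
  obtain ⟨C', hC'P, hC'max⟩ := Finset.exists_max_image P Finset.card hPne
  have hC'sub : C' ⊆ (VH \ S) \ Fj := Finset.mem_powerset.mp (Finset.mem_filter.mp hC'P).1
  set Fl := F' ∪ C' with hFl
  have hFlΔ : Fl ∈ cliqueFreeComplex G t := (Finset.mem_filter.mp hC'P).2
  have hC'T : ∀ z ∈ C', z ∈ VH ∧ z ∉ S ∧ z ∉ Fj := by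
    intro z hz
    have h1 := Finset.mem_sdiff.mp (hC'sub hz)
    have h2 := Finset.mem_sdiff.mp h1.1
    exact ⟨h2.1, h2.2, h1.2⟩
  have hC'K : ∀ v ∈ S, ∀ z ∈ C', z ∉ K v := by
    intro v hv z hz hzK
    obtain ⟨h1, h2, _⟩ := hC'T z hz
    rcases eq_or_ne z v with rfl | hne
    · exact h2 hv
    · exact (hG.new_vertices v hv z hzK hne) h1
  have hFlblocks : ∀ v ∈ S, (Fl ∩ K v).card + 1 = t := by
    intro v hv
    have he : Fl ∩ K v = F' ∩ K v := by
      ext z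
      simp only [hFl, Finset.mem_inter, Finset.mem_union]
      constructor
      · rintro ⟨h1 | h1, h2⟩
        · exact ⟨h1, h2⟩
        · exact absurd h2 (hC'K v hv z h1)
      · rintro ⟨h1, h2⟩
        exact ⟨Or.inl h1, h2⟩
    rw [he]
    exact hF'blocks v hv
  have hFlfacet : Fl ∈ Facets (cliqueFreeComplex G t) := by
    refine facet_of hG hFlΔ hFlblocks ?_
    intro x hxVH hxS hxFl hins
    by_cases hxFj : x ∈ Fj
    · refine hxFl ?_
      have hxu : x ≠ u := fun e => hxS (e ▸ huS)
      exact Finset.mem_union_left _ (Finset.mem_insert_of_mem (Finset.mem_erase.mpr ⟨hxu, hxFj⟩))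
    · have hmem : insert x C' ∈ P := by
        rw [hP, Finset.mem_filter, Finset.mem_powerset]
        constructor
        · refine Finset.insert_subset ?_ hC'sub
          rw [Finset.mem_sdiff, Finset.mem_sdiff]
          exact ⟨⟨hxVH, hxS⟩, hxFj⟩
        · rw [Finset.union_insert]
          exact hins
      have hle := hC'max _ hmem
      rw [Finset.card_insert_of_notMem (fun hc => hxFl (Finset.mem_union_right _ hc))] at hle
      omega
  have huFl : u ∉ Fl := by
    rw [hFl, Finset.mem_union]
    rintro (h | h)
    · exact huF' h
    · exact (hC'T u h).2.1 huS
  have hdiff : Fj \ Fl = {u} := by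
    ext z
    simp only [Finset.mem_sdiff, Finset.mem_singleton]
    constructor
    · rintro ⟨hzFj, hzFl⟩
      by_contra hzu
      exact hzFl (Finset.mem_union_left _
        (Finset.mem_insert_of_mem (Finset.mem_erase.mpr ⟨hzu, hzFj⟩)))
    · rintro rfl
      exact ⟨huFj, huFl⟩
  have hFlS : Fl ∩ S = (Fj ∩ S).erase u := by
    ext z
    simp only [hFl, hF', Finset.mem_inter, Finset.mem_union, Finset.mem_insert, Finset.mem_erase]
    constructor
    · rintro ⟨(rfl | ⟨hz1, hz2⟩) | h1, h2⟩
      · exact absurd (hG.subset h2) hyVH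
      · exact ⟨hz1, hz2, h2⟩
      · exact absurd h2 (hC'T z h1).2.1
    · rintro ⟨hz1, hz2, hz3⟩
      exact ⟨Or.inl (Or.inr ⟨hz1, hz2⟩), hz3⟩
  have hkap : kap VH S Fl < kap VH S Fj := by
    apply kap_lt_card
    rw [hFlS]
    have e1 : u ∈ Fj ∩ S := Finset.mem_inter.mpr ⟨huFj, huS⟩
    have e2 := Finset.card_erase_add_one e1
    omega
  exact ⟨u, huFj, hui, Fl, hFlfacet, hdiff, hkap⟩

end S10Aux
namespace S10Aux

open Finset

variable {V : Type*} [Fintype V] [DecidableEq V]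
variable {t : ℕ} {G : SimpleGraph V} {VH S : Finset V} {K : V → Finset V}

lemma case2bi (hG : IsCliqueAttachment G VH S K t) (ht : 2 ≤ t) (hS : VH.card - 3 ≤ S.card)
    {Fi Fj : Finset V} (hFi : Fi ∈ Facets (cliqueFreeComplex G t))
    (hFj : Fj ∈ Facets (cliqueFreeComplex G t))
    (hAeq : Fi ∩ S = Fj ∩ S)
    (hCeq : Fi ∩ (VH \ S) ≠ Fj ∩ (VH \ S))
    (hd3le : Fintype.card V - (Fi ∩ (VH \ S)).card ≤ Fintype.card V - (Fj ∩ (VH \ S)).card)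
    (hd4cond : Fintype.card V - (Fi ∩ (VH \ S)).card = Fintype.card V - (Fj ∩ (VH \ S)).card →
      Nval (Fi ∩ (VH \ S)) ≤ Nval (Fj ∩ (VH \ S))) :
    ∃ v, v ∈ Fj ∧ v ∉ Fi ∧ ∃ Fl ∈ Facets (cliqueFreeComplex G t),
      Fj \ Fl = {v} ∧ kap VH S Fl < kap VH S Fj := by
  classical
  have blocksJ := facet_blocks hG ht hFj
  have hCle : (Fj ∩ (VH \ S)).card ≤ (Fi ∩ (VH \ S)).card := by
    have h1 : (Fi ∩ (VH \ S)).card ≤ Fintype.card V :=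
      le_trans (Finset.card_le_card (Finset.subset_univ _)) (le_of_eq Finset.card_univ)
    have h2 : (Fj ∩ (VH \ S)).card ≤ Fintype.card V :=
      le_trans (Finset.card_le_card (Finset.subset_univ _)) (le_of_eq Finset.card_univ)
    omega
  have hTcard : (VH \ S).card ≤ 3 := by
    have h1 := Finset.card_sdiff_of_subset hG.subset
    have h2 := Finset.card_le_card hG.subset
    omega
  have hsub_ne : ¬ Fj ∩ (VH \ S) ⊆ Fi ∩ (VH \ S) := by
    intro hsub
    obtain ⟨x', hx'i, hx'j⟩ :=
      Finset.exists_of_ssubset (hsub.ssubset_of_ne (fun e => hCeq e.symm))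
    have hx'T := Finset.mem_sdiff.mp (Finset.mem_inter.mp hx'i).2
    have hx'Fj : x' ∉ Fj :=
      fun h => hx'j (Finset.mem_inter.mpr ⟨h, (Finset.mem_inter.mp hx'i).2⟩)
    have hins : insert x' Fj ∈ cliqueFreeComplex G t := by
      rw [face_iff hG]
      constructor
      · intro B hB
        refine ((face_iff hG).mp hFi.1).1 B (hB.trans ?_)
        rw [Finset.insert_inter_of_mem hx'T.1]
        intro z hz
        rcases Finset.mem_insert.mp hz with rfl | hz
        · exact Finset.mem_inter.mpr ⟨(Finset.mem_inter.mp hx'i).1, hx'T.1⟩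
        · rw [Finset.mem_inter] at hz ⊢
          refine ⟨?_, hz.2⟩
          by_cases hzS : z ∈ S
          · have h3 : z ∈ Fj ∩ S := Finset.mem_inter.mpr ⟨hz.1, hzS⟩
            rw [← hAeq] at h3
            exact (Finset.mem_inter.mp h3).1
          · have hzT : z ∈ Fj ∩ (VH \ S) :=
              Finset.mem_inter.mpr ⟨hz.1, Finset.mem_sdiff.mpr ⟨hz.2, hzS⟩⟩
            exact (Finset.mem_inter.mp (hsub hzT)).1
      · intro v hv
        have hx'K : x' ∉ K v := by
          intro hc
          rcases eq_or_ne x' v with rfl | hne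
          · exact hx'T.2 hv
          · exact (hG.new_vertices v hv x' hc hne) hx'T.1
        rw [Finset.insert_inter_of_notMem hx'K]
        exact ((face_iff hG).mp hFj.1).2 v hv
    exact facet_insert_not_mem hFj hx'Fj hins
  obtain ⟨x, hxCj, hxCi⟩ := Finset.not_subset.mp hsub_ne
  have hxsingle : (Fj ∩ (VH \ S)) \ (Fi ∩ (VH \ S)) = {x} := by
    have h1 : x ∈ (Fj ∩ (VH \ S)) \ (Fi ∩ (VH \ S)) := Finset.mem_sdiff.mpr ⟨hxCj, hxCi⟩
    have hcard1 : ((Fj ∩ (VH \ S)) \ (Fi ∩ (VH \ S))).card ≤ 1 := by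
      by_contra hc
      push_neg at hc
      have e1 := Finset.card_union_add_card_inter (Fj ∩ (VH \ S)) (Fi ∩ (VH \ S))
      have e2 := Finset.card_inter_add_card_sdiff (Fj ∩ (VH \ S)) (Fi ∩ (VH \ S))
      have e3 : ((Fj ∩ (VH \ S)) ∪ (Fi ∩ (VH \ S))).card ≤ 3 :=
        le_trans (Finset.card_le_card
          (Finset.union_subset Finset.inter_subset_right Finset.inter_subset_right)) hTcard
      omega
    obtain ⟨z, hz⟩ := Finset.card_eq_one.mp
      (le_antisymm hcard1 (Finset.card_pos.mpr ⟨x, h1⟩))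
    rw [hz] at h1 ⊢
    rw [Finset.mem_singleton] at h1
    rw [h1]
  set Fl := (Fi ∩ VH) ∪ (Fj \ VH) with hFl
  have hFlS : Fl ∩ S = Fj ∩ S := by
    ext z
    simp only [hFl, Finset.mem_inter, Finset.mem_union, Finset.mem_sdiff]
    constructor
    · rintro ⟨h1 | h1, h2⟩
      · have h3 : z ∈ Fi ∩ S := Finset.mem_inter.mpr ⟨h1.1, h2⟩
        rw [hAeq] at h3
        exact ⟨(Finset.mem_inter.mp h3).1, h2⟩
      · exact absurd (hG.subset h2) h1.2
    · rintro ⟨h1, h2⟩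
      have h3 : z ∈ Fi ∩ S := by rw [hAeq]; exact Finset.mem_inter.mpr ⟨h1, h2⟩
      exact ⟨Or.inl ⟨(Finset.mem_inter.mp h3).1, hG.subset h2⟩, h2⟩
  have hFlT : Fl ∩ (VH \ S) = Fi ∩ (VH \ S) := by
    ext z
    simp only [hFl, Finset.mem_inter, Finset.mem_union, Finset.mem_sdiff]
    constructor
    · rintro ⟨h1 | h1, h2⟩
      · exact ⟨h1.1, h2⟩
      · exact absurd h2.1 h1.2
    · rintro ⟨h1, h2⟩
      exact ⟨Or.inl ⟨h1, h2.1⟩, h2⟩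
  have hFlP : Fl \ VH = Fj \ VH := by
    ext z
    simp only [hFl, Finset.mem_sdiff, Finset.mem_union, Finset.mem_inter]
    constructor
    · rintro ⟨h1 | h1, h2⟩
      · exact absurd h1.2 h2
      · exact h1
    · rintro ⟨h1, h2⟩
      exact ⟨Or.inr ⟨h1, h2⟩, h2⟩
  have hFlVH : Fl ∩ VH = Fi ∩ VH := by
    ext z
    simp only [hFl, Finset.mem_inter, Finset.mem_union, Finset.mem_sdiff]
    constructor
    · rintro ⟨h1 | h1, h2⟩
      · exact ⟨h1.1, h2⟩
      · exact absurd h2 h1.2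
    · rintro ⟨h1, h2⟩
      exact ⟨Or.inl ⟨h1, h2⟩, h2⟩
  have hFlblocks : ∀ v ∈ S, (Fl ∩ K v).card + 1 = t := by
    intro v hv
    have hVHK : ∀ z, z ∈ VH → z ∈ K v → z = v := by
      intro z hzVH hzK
      by_contra hne
      exact (hG.new_vertices v hv z hzK hne) hzVH
    have he : Fl ∩ K v = Fj ∩ K v := by
      ext z
      simp only [hFl, Finset.mem_inter, Finset.mem_union, Finset.mem_sdiff]
      constructor
      · rintro ⟨h1 | h1, h2⟩
        · have hzv : z = v := hVHK z h1.2 h2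
          subst hzv
          have h3 : z ∈ Fi ∩ S := Finset.mem_inter.mpr ⟨h1.1, hv⟩
          rw [hAeq] at h3
          exact ⟨(Finset.mem_inter.mp h3).1, h2⟩
        · exact ⟨h1.1, h2⟩
      · rintro ⟨h1, h2⟩
        by_cases hzVH : z ∈ VH
        · have hzv : z = v := hVHK z hzVH h2
          subst hzv
          have h3 : z ∈ Fj ∩ S := Finset.mem_inter.mpr ⟨h1, hv⟩
          rw [← hAeq] at h3
          exact ⟨Or.inl ⟨(Finset.mem_inter.mp h3).1, hzVH⟩, h2⟩
        · exact ⟨Or.inr ⟨h1, hzVH⟩, h2⟩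
    rw [he]
    exact blocksJ v hv
  have hFlΔ : Fl ∈ cliqueFreeComplex G t := by
    rw [face_iff hG]
    refine ⟨?_, fun v hv => by have := hFlblocks v hv; omega⟩
    intro B hB
    exact ((face_iff hG).mp hFi.1).1 B (by rwa [hFlVH] at hB)
  have hFlfacet : Fl ∈ Facets (cliqueFreeComplex G t) :=
    facet_of hG hFlΔ hFlblocks (Tmax_transfer hG ht hFi hFlΔ hFlVH)
  have hxFj : x ∈ Fj := (Finset.mem_inter.mp hxCj).1
  have hxT := Finset.mem_sdiff.mp (Finset.mem_inter.mp hxCj).2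
  have hxFi : x ∉ Fi :=
    fun h => hxCi (Finset.mem_inter.mpr ⟨h, (Finset.mem_inter.mp hxCj).2⟩)
  have hxFl : x ∉ Fl := by
    intro h
    have h2 : x ∈ Fl ∩ (VH \ S) :=
      Finset.mem_inter.mpr ⟨h, (Finset.mem_inter.mp hxCj).2⟩
    rw [hFlT] at h2
    exact hxCi h2
  have hdiff : Fj \ Fl = {x} := by
    ext z
    simp only [Finset.mem_sdiff, Finset.mem_singleton]
    constructor
    · rintro ⟨hzFj, hzFl⟩
      by_cases hzVH : z ∈ VH
      · by_cases hzS : z ∈ S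
        · exfalso
          have h3 : z ∈ Fj ∩ S := Finset.mem_inter.mpr ⟨hzFj, hzS⟩
          rw [← hFlS] at h3
          exact hzFl (Finset.mem_inter.mp h3).1
        · by_contra hzx
          have hz3 : z ∈ Fj ∩ (VH \ S) :=
            Finset.mem_inter.mpr ⟨hzFj, Finset.mem_sdiff.mpr ⟨hzVH, hzS⟩⟩
          have hz4 : z ∈ Fi ∩ (VH \ S) := by
            by_contra hz5
            have hz6 : z ∈ (Fj ∩ (VH \ S)) \ (Fi ∩ (VH \ S)) :=
              Finset.mem_sdiff.mpr ⟨hz3, hz5⟩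
            rw [hxsingle, Finset.mem_singleton] at hz6
            exact hzx hz6
          exact hzFl (Finset.mem_union_left _
            (Finset.mem_inter.mpr ⟨(Finset.mem_inter.mp hz4).1, hzVH⟩))
      · exact absurd (Finset.mem_union_right _ (Finset.mem_sdiff.mpr ⟨hzFj, hzVH⟩)) hzFl
    · rintro rfl
      exact ⟨hxFj, hxFl⟩
  have hkap : kap VH S Fl < kap VH S Fj := by
    apply kap_lt_T hFlS
    rw [hFlT]
    rcases lt_or_eq_of_le hd3le with h | h
    · exact Or.inl h
    · exact Or.inr ⟨h, lt_of_le_of_ne (hd4cond h) (fun e => hCeq (Nval_injective e))⟩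
  exact ⟨x, hxFj, hxFi, Fl, hFlfacet, hdiff, hkap⟩

end S10Aux
namespace S10Aux

open Finset

variable {V : Type*} [Fintype V] [DecidableEq V]
variable {t : ℕ} {G : SimpleGraph V} {VH S : Finset V} {K : V → Finset V}

lemma case2bii (hG : IsCliqueAttachment G VH S K t) (ht : 2 ≤ t)
    {Fi Fj : Finset V} (hFi : Fi ∈ Facets (cliqueFreeComplex G t))
    (hFj : Fj ∈ Facets (cliqueFreeComplex G t))
    (hAeq : Fi ∩ S = Fj ∩ S)
    (hCeq : Fi ∩ (VH \ S) = Fj ∩ (VH \ S))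
    (hd5 : Nval (Fi \ VH) < Nval (Fj \ VH)) :
    ∃ v, v ∈ Fj ∧ v ∉ Fi ∧ ∃ Fl ∈ Facets (cliqueFreeComplex G t),
      Fj \ Fl = {v} ∧ kap VH S Fl < kap VH S Fj := by
  classical
  have blocksI := facet_blocks hG ht hFi
  have blocksJ := facet_blocks hG ht hFj
  have hPne : Fi \ VH ≠ Fj \ VH := fun e => absurd hd5 (by rw [e]; exact lt_irrefl _)
  have hDne : (((Fi \ VH) \ (Fj \ VH)) ∪ ((Fj \ VH) \ (Fi \ VH))).Nonempty := by
    rw [Finset.nonempty_iff_ne_empty]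
    intro he
    exact hPne (Finset.Subset.antisymm
      (Finset.sdiff_eq_empty_iff_subset.mp (Finset.union_eq_empty.mp he).1)
      (Finset.sdiff_eq_empty_iff_subset.mp (Finset.union_eq_empty.mp he).2))
  obtain ⟨m, hmD, hmax⟩ := Finset.exists_max_image _ idx hDne
  have hagree : ∀ y, idx m < idx y → (y ∈ Fi \ VH ↔ y ∈ Fj \ VH) := by
    intro y hy
    by_contra hc
    have hyD : y ∈ ((Fi \ VH) \ (Fj \ VH)) ∪ ((Fj \ VH) \ (Fi \ VH)) := by
      simp only [Finset.mem_union, Finset.mem_sdiff] at *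
      tauto
    exact absurd (hmax y hyD) (by omega)
  have hmPj : m ∈ Fj \ VH ∧ m ∉ Fi \ VH := by
    rcases Finset.mem_union.mp hmD with h | h <;> rw [Finset.mem_sdiff] at h
    · exact absurd hd5 (not_lt.mpr (le_of_lt
        (Nval_lt_Nval h.1 h.2 (fun y hy => (hagree y hy).symm))))
    · exact ⟨h.1, h.2⟩
  have hmFj : m ∈ Fj := (Finset.mem_sdiff.mp hmPj.1).1
  have hmVH : m ∉ VH := (Finset.mem_sdiff.mp hmPj.1).2
  have hmFi : m ∉ Fi := fun h => hmPj.2 (Finset.mem_sdiff.mpr ⟨h, hmVH⟩)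
  obtain ⟨v₀, hv₀, hmK⟩ : ∃ v ∈ S, m ∈ K v := by
    rcases hG.cover m with h | h
    · exact absurd h hmVH
    · exact h
  have hmv₀ : m ≠ v₀ := fun e => hmVH (e ▸ hG.subset hv₀)
  have hv₀iff : v₀ ∈ Fi ↔ v₀ ∈ Fj := by
    constructor
    · intro h
      have h2 : v₀ ∈ Fi ∩ S := Finset.mem_inter.mpr ⟨h, hv₀⟩
      rw [hAeq] at h2
      exact (Finset.mem_inter.mp h2).1
    · intro h
      have h2 : v₀ ∈ Fj ∩ S := Finset.mem_inter.mpr ⟨h, hv₀⟩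
      rw [← hAeq] at h2
      exact (Finset.mem_inter.mp h2).1
  have hsplit : ∀ (F : Finset V), v₀ ∈ F → F ∩ K v₀ = insert v₀ (F ∩ (K v₀).erase v₀) := by
    intro F hvF
    ext z
    simp only [Finset.mem_inter, Finset.mem_insert, Finset.mem_erase]
    constructor
    · rintro ⟨hz1, hz2⟩
      by_cases hzv : z = v₀
      · exact Or.inl hzv
      · exact Or.inr ⟨hz1, hzv, hz2⟩
    · rintro (hz | ⟨hz1, hz2, hz3⟩)
      · rw [hz]; exact ⟨hvF, hG.mem_self v₀ hv₀⟩
      · exact ⟨hz1, hz3⟩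
  have hsplit2 : ∀ (F : Finset V), v₀ ∉ F → F ∩ K v₀ = F ∩ (K v₀).erase v₀ := by
    intro F hvF
    ext z
    simp only [Finset.mem_inter, Finset.mem_erase]
    constructor
    · rintro ⟨hz1, hz2⟩
      exact ⟨hz1, fun e => hvF (e ▸ hz1), hz2⟩
    · rintro ⟨hz1, hz2, hz3⟩
      exact ⟨hz1, hz3⟩
  have hv₀X : v₀ ∉ (K v₀).erase v₀ := by simp
  have hcardB : (Fi ∩ (K v₀).erase v₀).card = (Fj ∩ (K v₀).erase v₀).card := by
    have e1 := blocksI v₀ hv₀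
    have e2 := blocksJ v₀ hv₀
    by_cases h : v₀ ∈ Fi
    · have h2 : v₀ ∈ Fj := hv₀iff.mp h
      rw [hsplit Fi h, Finset.card_insert_of_notMem
        (fun hc => hv₀X (Finset.mem_inter.mp hc).2)] at e1
      rw [hsplit Fj h2, Finset.card_insert_of_notMem
        (fun hc => hv₀X (Finset.mem_inter.mp hc).2)] at e2
      omega
    · have h2 : v₀ ∉ Fj := fun hc => h (hv₀iff.mpr hc)
      rw [hsplit2 Fi h] at e1
      rw [hsplit2 Fj h2] at e2
      omega
  have hBisub : ∀ z ∈ Fi ∩ (K v₀).erase v₀, z ∈ Fi \ VH := by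
    intro z hz
    rw [Finset.mem_inter] at hz
    exact Finset.mem_sdiff.mpr ⟨hz.1, hG.new_vertices v₀ hv₀ z
      (Finset.mem_of_mem_erase hz.2) (Finset.ne_of_mem_erase hz.2)⟩
  have hBjsub : ∀ z ∈ Fj ∩ (K v₀).erase v₀, z ∈ Fj \ VH := by
    intro z hz
    rw [Finset.mem_inter] at hz
    exact Finset.mem_sdiff.mpr ⟨hz.1, hG.new_vertices v₀ hv₀ z
      (Finset.mem_of_mem_erase hz.2) (Finset.ne_of_mem_erase hz.2)⟩
  have hmBj : m ∈ Fj ∩ (K v₀).erase v₀ :=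
    Finset.mem_inter.mpr ⟨hmFj, Finset.mem_erase.mpr ⟨hmv₀, hmK⟩⟩
  have hmBi : m ∉ Fi ∩ (K v₀).erase v₀ := fun h => hmFi (Finset.mem_inter.mp h).1
  have hHI : (Fi ∩ (K v₀).erase v₀).filter (fun z => idx m < idx z) =
      (Fj ∩ (K v₀).erase v₀).filter (fun z => idx m < idx z) := by
    ext z
    simp only [Finset.mem_filter]
    constructor
    · rintro ⟨hz, hlt⟩
      refine ⟨?_, hlt⟩
      have hzPj := (hagree z hlt).mp (hBisub z hz)
      exact Finset.mem_inter.mpr ⟨(Finset.mem_sdiff.mp hzPj).1, (Finset.mem_inter.mp hz).2⟩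
    · rintro ⟨hz, hlt⟩
      refine ⟨?_, hlt⟩
      have hzPi := (hagree z hlt).mpr (hBjsub z hz)
      exact Finset.mem_inter.mpr ⟨(Finset.mem_sdiff.mp hzPi).1, (Finset.mem_inter.mp hz).2⟩
  have hlocard : ((Fi ∩ (K v₀).erase v₀).filter (fun z => ¬ idx m < idx z)).card =
      ((Fj ∩ (K v₀).erase v₀).filter (fun z => ¬ idx m < idx z)).card := by
    have e1 := Finset.card_filter_add_card_filter_not
      (s := Fi ∩ (K v₀).erase v₀) (p := fun z => idx m < idx z)
    have e2 := Finset.card_filter_add_card_filter_not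
      (s := Fj ∩ (K v₀).erase v₀) (p := fun z => idx m < idx z)
    rw [hHI] at e1
    omega
  have hmlo : m ∈ (Fj ∩ (K v₀).erase v₀).filter (fun z => ¬ idx m < idx z) :=
    Finset.mem_filter.mpr ⟨hmBj, by omega⟩
  obtain ⟨a, haBi, halt, haBj⟩ :
      ∃ a, a ∈ Fi ∩ (K v₀).erase v₀ ∧ ¬ idx m < idx a ∧ a ∉ Fj ∩ (K v₀).erase v₀ := by
    by_contra hc
    push_neg at hc
    have hsub : (Fi ∩ (K v₀).erase v₀).filter (fun z => ¬ idx m < idx z) ⊆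
        ((Fj ∩ (K v₀).erase v₀).filter (fun z => ¬ idx m < idx z)).erase m := by
      intro z hz
      rw [Finset.mem_filter] at hz
      exact Finset.mem_erase.mpr ⟨fun e => hmBi (e ▸ hz.1),
        Finset.mem_filter.mpr ⟨hc z hz.1 (le_of_not_gt hz.2), hz.2⟩⟩
    have h1 := Finset.card_le_card hsub
    have h2 := Finset.card_erase_add_one hmlo
    omega
  have ham : a ≠ m := fun e => hmBi (e ▸ haBi)
  have haidx : idx a < idx m := by
    have h1 : idx a ≠ idx m := fun e => ham (idx_inj e)
    omega
  have haFi : a ∈ Fi := (Finset.mem_inter.mp haBi).1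
  have haX : a ∈ (K v₀).erase v₀ := (Finset.mem_inter.mp haBi).2
  have haFj : a ∉ Fj := fun h => haBj (Finset.mem_inter.mpr ⟨h, haX⟩)
  have haVH : a ∉ VH :=
    hG.new_vertices v₀ hv₀ a (Finset.mem_of_mem_erase haX) (Finset.ne_of_mem_erase haX)
  have haK : a ∈ K v₀ := Finset.mem_of_mem_erase haX
  set Fl := insert a (Fj.erase m) with hFl
  have hFlVH : Fl ∩ VH = Fj ∩ VH := by
    ext z
    simp only [hFl, Finset.mem_inter, Finset.mem_insert, Finset.mem_erase]
    constructor
    · rintro ⟨(rfl | ⟨hz1, hz2⟩), hzVH⟩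
      · exact absurd hzVH haVH
      · exact ⟨hz2, hzVH⟩
    · rintro ⟨hz1, hz2⟩
      exact ⟨Or.inr ⟨fun e => hmVH (e ▸ hz2), hz1⟩, hz2⟩
  have hFlblocks : ∀ v ∈ S, (Fl ∩ K v).card + 1 = t := by
    intro v hv
    by_cases hvv : v = v₀
    · subst hvv
      have he : Fl ∩ K v = insert a ((Fj ∩ K v).erase m) := by
        ext z
        simp only [hFl, Finset.mem_inter, Finset.mem_insert, Finset.mem_erase]
        constructor
        · rintro ⟨(rfl | ⟨hz1, hz2⟩), hzK⟩
          · exact Or.inl rfl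
          · exact Or.inr ⟨hz1, hz2, hzK⟩
        · rintro (rfl | ⟨hz1, hz2, hz3⟩)
          · exact ⟨Or.inl rfl, haK⟩
          · exact ⟨Or.inr ⟨hz1, hz2⟩, hz3⟩
      rw [he]
      have e2 : m ∈ Fj ∩ K v := Finset.mem_inter.mpr ⟨hmFj, hmK⟩
      have e3 := Finset.card_erase_add_one e2
      rw [Finset.card_insert_of_notMem
        (fun hc => haFj (Finset.mem_inter.mp (Finset.mem_of_mem_erase hc)).1)]
      have := blocksJ v hv
      omega
    · have hdisj := hG.pairwise_disjoint v₀ hv₀ v hv (fun e => hvv e.symm)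
      have haKv : a ∉ K v := fun hc => Finset.disjoint_left.mp hdisj haK hc
      have hmKv : m ∉ K v := fun hc => Finset.disjoint_left.mp hdisj hmK hc
      have he : Fl ∩ K v = Fj ∩ K v := by
        ext z
        simp only [hFl, Finset.mem_inter, Finset.mem_insert, Finset.mem_erase]
        constructor
        · rintro ⟨(rfl | ⟨hz1, hz2⟩), hzK⟩
          · exact absurd hzK haKv
          · exact ⟨hz2, hzK⟩
        · rintro ⟨hz1, hz2⟩
          exact ⟨Or.inr ⟨fun e => hmKv (e ▸ hz2), hz1⟩, hz2⟩
      rw [he]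
      exact blocksJ v hv
  have hFlΔ : Fl ∈ cliqueFreeComplex G t := by
    rw [face_iff hG]
    refine ⟨?_, fun v hv => by have := hFlblocks v hv; omega⟩
    intro B hB
    exact ((face_iff hG).mp hFj.1).1 B (by rwa [hFlVH] at hB)
  have hFlfacet : Fl ∈ Facets (cliqueFreeComplex G t) :=
    facet_of hG hFlΔ hFlblocks (Tmax_transfer hG ht hFj hFlΔ hFlVH)
  have hmFl : m ∉ Fl := by
    simp only [hFl, Finset.mem_insert, Finset.mem_erase]
    rintro (rfl | ⟨h1, h2⟩)
    · exact ham rfl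
    · exact h1 rfl
  have hdiff : Fj \ Fl = {m} := by
    ext z
    simp only [Finset.mem_sdiff, Finset.mem_singleton]
    constructor
    · rintro ⟨hzFj, hzFl⟩
      by_contra hzm
      exact hzFl (by
        simp only [hFl, Finset.mem_insert, Finset.mem_erase]
        exact Or.inr ⟨hzm, hzFj⟩)
    · rintro rfl
      exact ⟨hmFj, hmFl⟩
  have hFlS : Fl ∩ S = Fj ∩ S := by
    ext z
    simp only [hFl, Finset.mem_inter, Finset.mem_insert, Finset.mem_erase]
    constructor
    · rintro ⟨(rfl | ⟨hz1, hz2⟩), hzS⟩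
      · exact absurd (hG.subset hzS) haVH
      · exact ⟨hz2, hzS⟩
    · rintro ⟨hz1, hz2⟩
      exact ⟨Or.inr ⟨fun e => hmVH (e ▸ hG.subset hz2), hz1⟩, hz2⟩
  have hFlT : Fl ∩ (VH \ S) = Fj ∩ (VH \ S) := by
    ext z
    simp only [hFl, Finset.mem_inter, Finset.mem_insert, Finset.mem_erase, Finset.mem_sdiff]
    constructor
    · rintro ⟨(rfl | ⟨hz1, hz2⟩), hzT⟩
      · exact absurd hzT.1 haVH
      · exact ⟨hz2, hzT⟩
    · rintro ⟨hz1, hz2⟩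
      exact ⟨Or.inr ⟨fun e => hmVH (e ▸ hz2.1), hz1⟩, hz2⟩
  have hFlP : Fl \ VH = insert a ((Fj \ VH).erase m) := by
    ext z
    simp only [hFl, Finset.mem_sdiff, Finset.mem_insert, Finset.mem_erase]
    constructor
    · rintro ⟨(rfl | ⟨hz1, hz2⟩), hzVH⟩
      · exact Or.inl rfl
      · exact Or.inr ⟨hz1, hz2, hzVH⟩
    · rintro (rfl | ⟨hz1, hz2, hz3⟩)
      · exact ⟨Or.inl rfl, haVH⟩
      · exact ⟨Or.inr ⟨hz1, hz2⟩, hz3⟩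
  have hkap : kap VH S Fl < kap VH S Fj := by
    apply kap_lt_P hFlS hFlT
    rw [hFlP]
    apply Nval_lt_Nval hmPj.1
    · simp only [Finset.mem_insert, Finset.mem_erase]
      rintro (rfl | ⟨h1, h2⟩)
      · exact ham rfl
      · exact h1 rfl
    · intro y hy
      have hya : y ≠ a := fun e => by rw [e] at hy; omega
      have hym : y ≠ m := fun e => by rw [e] at hy; omega
      simp only [Finset.mem_insert, Finset.mem_erase]
      constructor
      · rintro (rfl | ⟨h1, h2⟩)
        · exact absurd rfl hya
        · exact h2
      · intro h
        exact Or.inr ⟨hym, h⟩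
  exact ⟨m, hmFj, hmFi, Fl, hFlfacet, hdiff, hkap⟩

end S10Aux

namespace S10Aux

open Finset

variable {V : Type*} [Fintype V] [DecidableEq V]
variable {t : ℕ} {G : SimpleGraph V} {VH S : Finset V} {K : V → Finset V}

lemma key_lemma (hG : IsCliqueAttachment G VH S K t) (ht : 2 ≤ t)
    (hS : VH.card - 3 ≤ S.card)
    {Fi Fj : Finset V} (hFi : Fi ∈ Facets (cliqueFreeComplex G t))
    (hFj : Fj ∈ Facets (cliqueFreeComplex G t))
    (hκ : kap VH S Fi < kap VH S Fj) :
    ∃ v, v ∈ Fj ∧ v ∉ Fi ∧ ∃ Fl ∈ Facets (cliqueFreeComplex G t),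
      Fj \ Fl = {v} ∧ kap VH S Fl < kap VH S Fj := by
  classical
  by_cases hcase1 : ∃ u, u ∈ Fj ∧ u ∈ S ∧ u ∉ Fi
  · obtain ⟨u, huFj, huS, hui⟩ := hcase1
    exact case1 hG ht hFj huFj huS hui
  · push_neg at hcase1
    have hAsub : Fj ∩ S ⊆ Fi ∩ S := by
      intro z hz
      rw [Finset.mem_inter] at hz ⊢
      exact ⟨hcase1 z hz.1 hz.2, hz.2⟩
    have hAeq : Fi ∩ S = Fj ∩ S :=
      (Finset.eq_of_subset_of_card_le hAsub (kap_card_le hκ)).symm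
    obtain ⟨hd3le, hd4cond, hd5cond⟩ := kap_extract hAeq hκ
    by_cases hCeq : Fi ∩ (VH \ S) = Fj ∩ (VH \ S)
    · exact case2bii hG ht hFi hFj hAeq hCeq (hd5cond hCeq)
    · exact case2bi hG ht hS hFi hFj hAeq hCeq hd3le hd4cond

end S10Aux

/-- for `G = Cl(H, S, t)` with `|S| ≥ |V(H)| - 3`, the complex
`CF_t(G)` is shellable. -/
theorem statement10 {V : Type*} [Fintype V] [DecidableEq V]
    (t : ℕ) (ht : 2 ≤ t) (G : SimpleGraph V) (VH S : Finset V) (K : V → Finset V)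
    (hG : IsCliqueAttachment G VH S K t)
    (hS : VH.card - 3 ≤ S.card) :
    IsShellable (cliqueFreeComplex G t) := by
  classical
  open S10Aux in
  have hfin : (Facets (cliqueFreeComplex G t)).Finite := Set.toFinite _
  let r : Finset V → Finset V → Prop := fun a b => S10Aux.kap VH S a ≤ S10Aux.kap VH S b
  haveI hrdec : DecidableRel r := fun a b => Nat.decLe _ _
  haveI : IsTrans (Finset V) r := ⟨fun a b c hab hbc => le_trans hab hbc⟩
  haveI : IsAntisymm (Finset V) r :=
    ⟨fun a b h1 h2 => S10Aux.kap_injective VH S (le_antisymm h1 h2)⟩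
  haveI : IsTotal (Finset V) r := ⟨fun a b => le_total _ _⟩
  set L := hfin.toFinset.sort r with hL
  have hsorted : L.Pairwise r := Finset.pairwise_sort _ r
  have hnodup : L.Nodup := Finset.sort_nodup _ r
  have hmemL : ∀ A, A ∈ L ↔ A ∈ Facets (cliqueFreeComplex G t) :=
    fun A => (Finset.mem_sort r).trans (Set.Finite.mem_toFinset hfin)
  have hgetmem : ∀ i : Fin L.length, L.get i ∈ Facets (cliqueFreeComplex G t) :=
    fun i => (hmemL _).mp (L.get_mem i)
  have hinj : Function.Injective L.get := List.nodup_iff_injective_get.mp hnodup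
  refine ⟨L.length, L.get, hgetmem, hinj,
    fun A hA => List.mem_iff_get.mp ((hmemL A).mpr hA), ?_⟩
  intro i j hij
  have hFi := hgetmem i
  have hFj := hgetmem j
  have hle : r (L.get i) (L.get j) := List.pairwise_iff_get.mp hsorted i j hij
  have hne : L.get i ≠ L.get j := fun h => absurd (hinj h) hij.ne
  have hκ : S10Aux.kap VH S (L.get i) < S10Aux.kap VH S (L.get j) :=
    lt_of_le_of_ne hle (fun h => hne (S10Aux.kap_injective VH S h))
  obtain ⟨v, hvj, hvi, Fl, hFl, hdiff, hkl⟩ := S10Aux.key_lemma hG ht hS hFi hFj hκ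
  obtain ⟨l, hlget⟩ := List.mem_iff_get.mp ((hmemL Fl).mpr hFl)
  refine ⟨v, Finset.mem_sdiff.mpr ⟨hvj, hvi⟩, l, ?_, by rw [hlget]; exact hdiff⟩
  rcases lt_trichotomy l j with h | h | h
  · exact h
  · exfalso
    rw [← h, hlget] at hkl
    exact lt_irrefl _ hkl
  · exfalso
    have := List.pairwise_iff_get.mp hsorted j l h
    rw [hlget] at this
    exact absurd hkl (not_lt.mpr this)
end

section
/- Let n ≥ 3 and t ≥ 3 be integers with t > ⌈n/2⌉, and let G_{n,t} be the graph obtained from the complete graph K_n by attaching a (t−2)-set of new vertices to each consecutive pair y_i, y_{i+1}. Let σ = {x_{i,j} : 1 ≤ i ≤ n, 1 ≤ j ≤ t−2} be the set of all newly added vertices. Then σ is a face of the t-clique-free complex CF_t(G_{n,t}), and the link of σ in CF_t(G_{n,t}) equals the independence complex of the n-cycle on y_1, …, y_n: link_{CF_t(G_{n,t})}(σ) = ind(C_n). -/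
/-- The defining relation of the graph `G_{n,t}`: the `y` vertices (`Sum.inl`) form
the complete graph `K_n`, and for each `i` the set `{y_i, y_{i+1}, x_{i,1}, …,
x_{i,t-2}}` is a clique (indices of `y` taken modulo `n`). -/
def gntRel (n t : ℕ) :
    (Fin n ⊕ Fin n × Fin (t - 2)) → (Fin n ⊕ Fin n × Fin (t - 2)) → Prop
  | Sum.inl a, Sum.inl b => a ≠ b
  | Sum.inl a, Sum.inr p => a = p.1 ∨ (a : ℕ) = ((p.1 : ℕ) + 1) % n
  | Sum.inr p, Sum.inl a => a = p.1 ∨ (a : ℕ) = ((p.1 : ℕ) + 1) % n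
  | Sum.inr p, Sum.inr q => p.1 = q.1 ∧ p.2 ≠ q.2

/-- The graph `G_{n,t}` obtained from `K_n` by attaching, for each `i`, a set of
`t - 2` new vertices forming a clique together with `y_i` and `y_{i+1}`. -/
def gntGraph (n t : ℕ) : SimpleGraph (Fin n ⊕ Fin n × Fin (t - 2)) :=
  SimpleGraph.fromRel (gntRel n t)

/-- The independence complex of a graph. -/
def indComplex {V : Type*} (G : SimpleGraph V) : Set (Finset V) :=
  {A : Finset V | ∀ a ∈ A, ∀ b ∈ A, ¬ G.Adj a b}

lemma gnt_adj_ll {n t : ℕ} {a b : Fin n} :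
    (gntGraph n t).Adj (Sum.inl a) (Sum.inl b) ↔ a ≠ b := by
  simp [gntGraph, SimpleGraph.fromRel_adj, gntRel]; tauto

lemma gnt_adj_lr {n t : ℕ} {a : Fin n} {p : Fin n × Fin (t-2)} :
    (gntGraph n t).Adj (Sum.inl a) (Sum.inr p) ↔
      (a = p.1 ∨ (a : ℕ) = ((p.1 : ℕ) + 1) % n) := by
  simp [gntGraph, SimpleGraph.fromRel_adj, gntRel]

lemma gnt_adj_rr {n t : ℕ} {p q : Fin n × Fin (t-2)} :
    (gntGraph n t).Adj (Sum.inr p) (Sum.inr q) ↔ p.1 = q.1 ∧ p.2 ≠ q.2 := by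
  constructor
  · rintro ⟨hne, h | h⟩
    · exact h
    · exact ⟨h.1.symm, h.2.symm⟩
  · rintro ⟨h1, h2⟩
    exact ⟨by simp [Prod.ext_iff]; tauto, Or.inl ⟨h1, h2⟩⟩

lemma cycle_adj_succ {m : ℕ} (b : Fin (m+3)) :
    (SimpleGraph.cycleGraph (m+3)).Adj b (b+1) := by
  have : (SimpleGraph.cycleGraph (m+1+2)).Adj b (b+1) := by
    rw [SimpleGraph.cycleGraph_adj]; right; exact add_sub_cancel_left b 1
  exact this

lemma fin_succ_val {m : ℕ} (b : Fin (m+3)) :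
    ((b + 1 : Fin (m+3)) : ℕ) = ((b : ℕ) + 1) % (m+3) := by
  simp [Fin.add_def]

lemma cycle_adj_of_val {m : ℕ} {a b : Fin (m+3)} (h : (a : ℕ) = ((b : ℕ) + 1) % (m+3)) :
    (SimpleGraph.cycleGraph (m+3)).Adj b a := by
  have : a = b + 1 := by apply Fin.ext; rw [h, fin_succ_val]
  subst this; exact cycle_adj_succ b

lemma cycle_adj_cases {m : ℕ} {a b : Fin (m+3)}
    (h : (SimpleGraph.cycleGraph (m+3)).Adj a b) : a = b + 1 ∨ b = a + 1 := by
  rw [SimpleGraph.cycleGraph_adj'] at h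
  have h1 : ((1 : Fin (m+3)) : ℕ) = 1 := rfl
  rcases h with h | h
  · left
    have h2 : a - b = 1 := Fin.ext (by rw [h, h1])
    rw [sub_eq_iff_eq_add] at h2
    rw [h2]; exact add_comm _ _
  · right
    have h2 : b - a = 1 := Fin.ext (by rw [h, h1])
    rw [sub_eq_iff_eq_add] at h2
    rw [h2]; exact add_comm _ _

lemma indep_two_mul_card_le {m : ℕ} {A : Finset (Fin (m+3))}
    (hA : A ∈ indComplex (SimpleGraph.cycleGraph (m+3))) : 2 * A.card ≤ m + 3 := by
  have hdisj : Disjoint A (A.image (· + 1)) := by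
    rw [Finset.disjoint_left]
    intro a ha hmem
    obtain ⟨b, hb, rfl⟩ := Finset.mem_image.mp hmem
    exact hA b hb (b+1) ha (cycle_adj_succ b)
  have hinj : Function.Injective (fun x : Fin (m+3) => x + 1) := add_left_injective 1
  calc 2 * A.card = A.card + (A.image (· + 1)).card := by
        rw [Finset.card_image_of_injective _ hinj]; ring
    _ = (A ∪ A.image (· + 1)).card := (Finset.card_union_of_disjoint hdisj).symm
    _ ≤ Fintype.card (Fin (m+3)) := Finset.card_le_univ _
    _ = m + 3 := Fintype.card_fin _

/-- for `n ≥ 3`, `t ≥ 3` with `t > ⌈n/2⌉`, the set `σ` of all newly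
added vertices of `G_{n,t}` is a face of `CF_t(G_{n,t})`, and the link of `σ` in
`CF_t(G_{n,t})` is the independence complex of the `n`-cycle on `y_1, …, y_n`
(identified with the `Sum.inl` vertices). -/
theorem statement12 (n t : ℕ) (hn : 3 ≤ n) (ht : 3 ≤ t) (htn : (n + 1) / 2 < t) :
    (Finset.univ.image Sum.inr : Finset (Fin n ⊕ Fin n × Fin (t - 2))) ∈
        cliqueFreeComplex (gntGraph n t) t ∧
    linkC (cliqueFreeComplex (gntGraph n t) t) (Finset.univ.image Sum.inr) =
      (fun A : Finset (Fin n) => A.image Sum.inl) ''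
        indComplex (SimpleGraph.cycleGraph n) := by
  obtain ⟨m, rfl⟩ : ∃ m, n = m + 3 := ⟨n - 3, by omega⟩
  have ht2 : 0 < t - 2 := by omega
  classical
  have hσface : (Finset.univ.image Sum.inr : Finset (Fin (m+3) ⊕ Fin (m+3) × Fin (t-2))) ∈
      cliqueFreeComplex (gntGraph (m+3) t) t := by
    intro B hB hcl
    have hbound : B.card ≤ (Finset.univ : Finset (Fin (t-2))).card := by
      apply Finset.card_le_card_of_injOn
        (Sum.elim (fun _ => (⟨0, ht2⟩ : Fin (t-2))) Prod.snd)
        (fun _ _ => Finset.mem_univ _)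
      intro x hx y hy hxy
      obtain ⟨p, -, rfl⟩ := Finset.mem_image.mp (hB (Finset.mem_coe.mp hx))
      obtain ⟨q, -, rfl⟩ := Finset.mem_image.mp (hB (Finset.mem_coe.mp hy))
      by_contra hne
      have hadj := hcl.1 hx hy hne
      rw [gnt_adj_rr] at hadj
      exact hadj.2 hxy
    rw [Finset.card_univ, Fintype.card_fin] at hbound
    have := hcl.2
    omega
  refine ⟨hσface, ?_⟩
  ext F
  constructor
  · rintro ⟨hF, hdisj, hFσ⟩
    refine ⟨Finset.univ.filter (fun a => Sum.inl a ∈ F), ?_, ?_⟩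
    · -- independence
      intro a ha b hb hadj
      simp only [Finset.mem_filter, Finset.mem_univ, true_and] at ha hb
      obtain ⟨i, hi, hi1⟩ : ∃ i : Fin (m+3), Sum.inl i ∈ F ∧ Sum.inl (i+1) ∈ F := by
        rcases cycle_adj_cases hadj with h | h
        · exact ⟨b, hb, by rw [← h]; exact ha⟩
        · exact ⟨a, ha, by rw [← h]; exact hb⟩
      have hne01 : i ≠ i + 1 := by
        intro h
        have h0 := congrArg Fin.val h
        rw [fin_succ_val] at h0
        have h1 := i.isLt
        rcases Nat.lt_or_ge ((i:ℕ)+1) (m+3) with hlt | hge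
        · rw [Nat.mod_eq_of_lt hlt] at h0; omega
        · have h3 : (i:ℕ) + 1 = m + 3 := by omega
          rw [h3, Nat.mod_self] at h0; omega
      set C : Finset (Fin (m+3) ⊕ Fin (m+3) × Fin (t-2)) :=
        insert (Sum.inl i) (insert (Sum.inl (i+1))
          ((Finset.univ : Finset (Fin (t-2))).image (fun j => Sum.inr (i, j)))) with hC
      have hnotmem1 : (Sum.inl (i+1) : Fin (m+3) ⊕ Fin (m+3) × Fin (t-2)) ∉
          (Finset.univ : Finset (Fin (t-2))).image (fun j => Sum.inr (i, j)) := by simp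
      have hnotmem0 : (Sum.inl i : Fin (m+3) ⊕ Fin (m+3) × Fin (t-2)) ∉
          insert (Sum.inl (i+1))
            ((Finset.univ : Finset (Fin (t-2))).image (fun j => Sum.inr (i, j))) := by
        simp [hne01]
      have hcard : C.card = t := by
        rw [hC, Finset.card_insert_of_notMem hnotmem0,
          Finset.card_insert_of_notMem hnotmem1,
          Finset.card_image_of_injective _ (fun x y hxy => by simpa using hxy),
          Finset.card_univ, Fintype.card_fin]
        omega
      have hclique : (gntGraph (m+3) t).IsClique ↑C := by
        intro x hx y hy hxy
        have hx' : x = Sum.inl i ∨ x = Sum.inl (i+1) ∨ ∃ j, x = Sum.inr (i, j) := by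
          simp only [hC, Finset.coe_insert, Set.mem_insert_iff, Finset.coe_image,
            Set.mem_image, Finset.mem_coe, Finset.mem_univ] at hx
          rcases hx with h | h | ⟨j, -, h⟩
          · exact Or.inl h
          · exact Or.inr (Or.inl h)
          · exact Or.inr (Or.inr ⟨j, h.symm⟩)
        have hy' : y = Sum.inl i ∨ y = Sum.inl (i+1) ∨ ∃ j, y = Sum.inr (i, j) := by
          simp only [hC, Finset.coe_insert, Set.mem_insert_iff, Finset.coe_image,
            Set.mem_image, Finset.mem_coe, Finset.mem_univ] at hy
          rcases hy with h | h | ⟨j, -, h⟩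
          · exact Or.inl h
          · exact Or.inr (Or.inl h)
          · exact Or.inr (Or.inr ⟨j, h.symm⟩)
        rcases hx' with rfl | rfl | ⟨j, rfl⟩ <;> rcases hy' with rfl | rfl | ⟨k, rfl⟩
        · exact absurd rfl hxy
        · exact gnt_adj_ll.mpr hne01
        · exact gnt_adj_lr.mpr (Or.inl rfl)
        · exact gnt_adj_ll.mpr (Ne.symm hne01)
        · exact absurd rfl hxy
        · exact gnt_adj_lr.mpr (Or.inr (fin_succ_val i))
        · exact (gnt_adj_lr.mpr (Or.inl rfl)).symm
        · exact (gnt_adj_lr.mpr (Or.inr (fin_succ_val i))).symm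
        · exact gnt_adj_rr.mpr ⟨rfl, fun h => hxy (congrArg (fun z => Sum.inr (i, z)) h)⟩
      have hsub : C ⊆ F ∪ Finset.univ.image Sum.inr := by
        intro x hx
        rw [hC, Finset.mem_insert, Finset.mem_insert] at hx
        rcases hx with rfl | rfl | hx
        · exact Finset.mem_union_left _ hi
        · exact Finset.mem_union_left _ hi1
        · obtain ⟨j, -, rfl⟩ := Finset.mem_image.mp hx
          exact Finset.mem_union_right _ (Finset.mem_image.mpr ⟨(i, j), Finset.mem_univ _, rfl⟩)
      exact hFσ C hsub ⟨hclique, hcard⟩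
    · -- the image equals F
      ext v
      simp only [Finset.mem_image, Finset.mem_filter, Finset.mem_univ, true_and]
      constructor
      · rintro ⟨a, ha, rfl⟩; exact ha
      · intro hv
        rcases v with a | p
        · exact ⟨a, hv, rfl⟩
        · exact absurd (Finset.mem_image.mpr ⟨p, Finset.mem_univ p, rfl⟩)
            (Finset.disjoint_left.mp hdisj hv)
  · rintro ⟨A, hA, rfl⟩
    have h2c := indep_two_mul_card_le hA
    have hAcard : A.card < t := by omega
    have hFc : (A.image Sum.inl : Finset (Fin (m+3) ⊕ Fin (m+3) × Fin (t-2))).card < t := by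
      rw [Finset.card_image_of_injective _
        (Sum.inl_injective : Function.Injective
          (Sum.inl : Fin (m+3) → Fin (m+3) ⊕ Fin (m+3) × Fin (t-2)))]
      exact hAcard
    refine ⟨?_, ?_, ?_⟩
    · intro B hB hcl
      have h : B.card ≤ (A.image Sum.inl : Finset (Fin (m+3) ⊕ Fin (m+3) × Fin (t-2))).card :=
        Finset.card_le_card hB
      rw [hcl.2] at h
      omega
    · rw [Finset.disjoint_left]
      rintro x hx hx'
      obtain ⟨a, -, rfl⟩ := Finset.mem_image.mp hx
      obtain ⟨p, -, h⟩ := Finset.mem_image.mp hx'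
      simp at h
    · intro B hB hcl
      by_cases hex : ∃ p : Fin (m+3) × Fin (t-2), Sum.inr p ∈ B
      · obtain ⟨p0, hp0⟩ := hex
        have hR : ∀ q, Sum.inr q ∈ B → q.1 = p0.1 := by
          intro q hq
          by_cases h : (Sum.inr q : Fin (m+3) ⊕ Fin (m+3) × Fin (t-2)) = Sum.inr p0
          · rw [Sum.inr.injEq] at h; rw [h]
          · exact (gnt_adj_rr.mp (hcl.1 (Finset.mem_coe.mpr hq) (Finset.mem_coe.mpr hp0) h)).1
        have hL : ∀ a : Fin (m+3), Sum.inl a ∈ B → a = p0.1 ∨ a = p0.1 + 1 := by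
          intro a ha
          have hadj := hcl.1 (Finset.mem_coe.mpr ha) (Finset.mem_coe.mpr hp0) (by simp)
          rcases gnt_adj_lr.mp hadj with h | h
          · exact Or.inl h
          · exact Or.inr (Fin.ext (by rw [fin_succ_val]; exact h))
        have hLA : ∀ a : Fin (m+3), Sum.inl a ∈ B → a ∈ A := by
          intro a ha
          rcases Finset.mem_union.mp (hB ha) with h | h
          · simpa using h
          · exfalso; obtain ⟨p, -, h⟩ := Finset.mem_image.mp h; simp at h
        have hsplit := Finset.card_filter_add_card_filter_not
          (s := B) (p := fun v => v.isLeft = true)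
        have hBl : (B.filter (fun v => v.isLeft = true)).card ≤ 1 := by
          rw [Finset.card_le_one]
          intro x hx y hy
          rw [Finset.mem_filter] at hx hy
          obtain ⟨a, rfl⟩ := Sum.isLeft_iff.mp hx.2
          obtain ⟨b, rfl⟩ := Sum.isLeft_iff.mp hy.2
          rw [Sum.inl.injEq]
          by_contra hab
          rcases hL a hx.1 with ha1 | ha1 <;> rcases hL b hy.1 with hb1 | hb1
          · exact hab (ha1.trans hb1.symm)
          · exact hA a (hLA a hx.1) b (hLA b hy.1)
              (by rw [ha1, hb1]; exact cycle_adj_succ p0.1)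
          · exact hA a (hLA a hx.1) b (hLA b hy.1)
              (by rw [ha1, hb1]; exact (cycle_adj_succ p0.1).symm)
          · exact hab (ha1.trans hb1.symm)
        have hBr : (B.filter (fun v => ¬ v.isLeft = true)).card ≤
            (Finset.univ : Finset (Fin (t-2))).card := by
          apply Finset.card_le_card_of_injOn
            (Sum.elim (fun _ => (⟨0, ht2⟩ : Fin (t-2))) Prod.snd)
            (fun _ _ => Finset.mem_univ _)
          intro x hx y hy hxy
          have hx' := Finset.mem_filter.mp (Finset.mem_coe.mp hx)
          have hy' := Finset.mem_filter.mp (Finset.mem_coe.mp hy)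
          rcases x with a | q
          · simp at hx'
          rcases y with b | r
          · simp at hy'
          have h1 : q.1 = r.1 := (hR q hx'.1).trans (hR r hy'.1).symm
          have h2 : q.2 = r.2 := by simpa using hxy
          rw [Sum.inr.injEq]
          exact Prod.ext h1 h2
        rw [Finset.card_univ, Fintype.card_fin] at hBr
        have hBc := hcl.2
        omega
      · push_neg at hex
        have hsub : B ⊆ A.image Sum.inl := by
          intro x hx
          rcases Finset.mem_union.mp (hB hx) with h | h
          · exact h
          · exfalso
            obtain ⟨p, -, hp⟩ := Finset.mem_image.mp h
            exact hex p (hp ▸ hx)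
        have h : B.card ≤ (A.image Sum.inl : Finset (Fin (m+3) ⊕ Fin (m+3) × Fin (t-2))).card :=
          Finset.card_le_card hsub
        rw [hcl.2] at h
        omega
end

section
/- Let G be a finite simple graph with a clique vertex-partition Π = {W_1, …, W_p}, and let t ≥ 2 be an integer. Then the t-clique-free complex of the t-clique whiskering G(Π, t) has dimension dim(CF_t(G(Π, t))) = p(t−1) − 1. -/
/-- A clique vertex-partition of `G`: a family `W 1, …, W p` of pairwise disjoint
(possibly empty) cliques of `G` whose union is `V(G)`. -/
structure IsCliqueVertexPartition {V : Type*} (G : SimpleGraph V) {p : ℕ}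
    (W : Fin p → Finset V) : Prop where
  disjoint : ∀ i j, i ≠ j → Disjoint (W i) (W j)
  cover : ∀ v : V, ∃ i, v ∈ W i
  clique : ∀ i, G.IsClique ↑(W i)

/-- The defining relation of the `t`-clique whiskering `G(Π, t)`: keep the edges of
`G` and, for each part `W i`, make `W i` together with the `t - 1` new vertices
`x_{i,1}, …, x_{i,t-1}` (`Sum.inr (i, k)`) into a clique. -/
def whiskerRel {V : Type*} (G : SimpleGraph V) {p : ℕ} (W : Fin p → Finset V)
    (t : ℕ) : (V ⊕ Fin p × Fin (t - 1)) → (V ⊕ Fin p × Fin (t - 1)) → Prop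
  | Sum.inl a, Sum.inl b => G.Adj a b
  | Sum.inl a, Sum.inr q => a ∈ W q.1
  | Sum.inr q, Sum.inl a => a ∈ W q.1
  | Sum.inr q, Sum.inr r => q.1 = r.1

/-- The `t`-clique whiskering `G(Π, t)` of `G` with respect to the clique
vertex-partition `Π = {W 1, …, W p}`. -/
def whiskerGraph {V : Type*} (G : SimpleGraph V) {p : ℕ} (W : Fin p → Finset V)
    (t : ℕ) : SimpleGraph (V ⊕ Fin p × Fin (t - 1)) :=
  SimpleGraph.fromRel (whiskerRel G W t)

/-- `dim CF_t(G(Π, t)) = p (t - 1) - 1`, i.e. the largest cardinality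
of a face of `CF_t(G(Π, t))` is exactly `p * (t - 1)`. -/
theorem statement13 {V : Type*} [Fintype V] [DecidableEq V]
    (G : SimpleGraph V) (p : ℕ) (W : Fin p → Finset V)
    (hPi : IsCliqueVertexPartition G W) (t : ℕ) (ht : 2 ≤ t) :
    (∃ F ∈ cliqueFreeComplex (whiskerGraph G W t) t, F.card = p * (t - 1)) ∧
    ∀ F ∈ cliqueFreeComplex (whiskerGraph G W t) t, F.card ≤ p * (t - 1) := by
  classical
  obtain ⟨i0, hi0⟩ : ∃ i0 : V → Fin p, ∀ v, v ∈ W (i0 v) :=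
    ⟨fun v => (hPi.cover v).choose, fun v => (hPi.cover v).choose_spec⟩
  set f : (V ⊕ Fin p × Fin (t-1)) → Fin p := Sum.elim i0 Prod.fst with hf
  have hadj : ∀ x y, x ≠ y → f x = f y → (whiskerGraph G W t).Adj x y := by
    rintro (a | q) (b | r) hne hfe
    · have hab : a ≠ b := fun h => hne (by rw [h])
      refine (SimpleGraph.fromRel_adj _ _ _).2 ⟨hne, Or.inl ?_⟩
      have hb : b ∈ W (i0 a) := by
        have : i0 a = i0 b := hfe
        rw [this]; exact hi0 b
      exact hPi.clique (i0 a) (hi0 a) hb hab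
    · refine (SimpleGraph.fromRel_adj _ _ _).2 ⟨hne, Or.inl ?_⟩
      show a ∈ W r.1
      have : i0 a = r.1 := hfe
      rw [← this]; exact hi0 a
    · refine (SimpleGraph.fromRel_adj _ _ _).2 ⟨hne, Or.inl ?_⟩
      show b ∈ W q.1
      have : q.1 = i0 b := hfe
      rw [this]; exact hi0 b
    · exact (SimpleGraph.fromRel_adj _ _ _).2 ⟨hne, Or.inl hfe⟩
  constructor
  · refine ⟨Finset.univ.map (Function.Embedding.inr), ?_, ?_⟩
    · intro B hB hclq
      have hcard := hclq.2
      have hpos : 0 < B.card := by omega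
      obtain ⟨b0, hb0⟩ := Finset.card_pos.1 hpos
      obtain ⟨q0, _, hq0⟩ := Finset.mem_map.1 (hB hb0)
      have hsub : B ⊆ Finset.univ.image (fun k : Fin (t-1) => (Sum.inr (q0.1, k) : V ⊕ Fin p × Fin (t-1))) := by
        intro b hb
        obtain ⟨q, _, hq⟩ := Finset.mem_map.1 (hB hb)
        rcases eq_or_ne b b0 with h | h
        · subst h
          refine Finset.mem_image.2 ⟨q0.2, Finset.mem_univ _, ?_⟩
          rw [← hq0]
          rfl
        · have hA := hclq.1 hb hb0 h
          rw [← hq, ← hq0] at hA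
          obtain ⟨-, hrel | hrel⟩ := (SimpleGraph.fromRel_adj _ _ _).1 hA
          · have : q.1 = q0.1 := hrel
            refine Finset.mem_image.2 ⟨q.2, Finset.mem_univ _, ?_⟩
            rw [← hq, ← this]
            rfl
          · have : q0.1 = q.1 := hrel
            refine Finset.mem_image.2 ⟨q.2, Finset.mem_univ _, ?_⟩
            rw [← hq, this]
            rfl
      have hle : B.card ≤ t - 1 := by
        calc B.card ≤ _ := Finset.card_le_card hsub
        _ ≤ (Finset.univ : Finset (Fin (t-1))).card := Finset.card_image_le
        _ = t - 1 := by simp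
      omega
    · simp
  · intro F hF
    by_contra hlt
    push_neg at hlt
    have hsum : F.card = ∑ i : Fin p, (F.filter fun x => f x = i).card :=
      Finset.card_eq_sum_card_fiberwise (fun x _ => Finset.mem_univ _)
    have hbig : ∃ i, t ≤ (F.filter fun x => f x = i).card := by
      by_contra h
      push_neg at h
      have h1 : F.card ≤ ∑ _i : Fin p, (t-1) := by
        rw [hsum]
        exact Finset.sum_le_sum fun i _ => by have := h i; omega
      have h2 : ∑ _i : Fin p, (t-1) = p * (t-1) := by simp [Finset.sum_const, mul_comm]
      omega
    obtain ⟨i, hi⟩ := hbig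
    obtain ⟨B, hBsub, hBcard⟩ := Finset.exists_subset_card_eq hi
    refine hF B (hBsub.trans (Finset.filter_subset _ _)) ⟨?_, hBcard⟩
    intro x hx y hy hxy
    refine hadj x y hxy ?_
    have hx' := hBsub hx
    have hy' := hBsub hy
    simp only [Finset.mem_filter] at hx' hy'
    rw [hx'.2, hy'.2]
end
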